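/- arXiv:2105.14939 — 14 statements merged into one kernel-verified Lean document; each statement's English description precedes it below -/
import Mathlib

section
/- Let q be a prime power, F a finite field with q elements, K an extension field of F with [K:F] = k, and L an extension field of K with [L:K] = 2 (so |K| = q^k and |L| = q^{2k}). Suppose a ∈ K and b ∈ L satisfy b^{q^k} = -b and a^2 - b^2 = 1 (where a is identified with its image in L). Then the norm of a+b from L to F equals 1, and the norm of a-b from L to F equals 1. -/
/-- Lemma 1: if `b^{q^k} = -b` and `a^2 - b^2 = 1` then
`N_{L/F}(a+b) = N_{L/F}(a-b) = 1`. -/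
theorem norm_add_eq_one_and_norm_sub_eq_one
    (q k : ℕ) (F K L : Type*) [Field F] [Field K] [Field L]
    [Fintype F] [Fintype K] [Fintype L]
    [Algebra F K] [Algebra K L] [Algebra F L] [IsScalarTower F K L]
    (hF : Fintype.card F = q) (hK : Module.finrank F K = k)
    (hL : Module.finrank K L = 2)
    (a : K) (b : L) (hb : b ^ q ^ k = -b)
    (hab : (algebraMap K L a) ^ 2 - b ^ 2 = 1) :
    Algebra.norm F (algebraMap K L a + b) = 1 ∧
    Algebra.norm F (algebraMap K L a - b) = 1 := by
  classical
  haveI : FiniteDimensional K L := FiniteDimensional.of_finrank_eq_succ hL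
  set a' : L := algebraMap K L a with ha'
  have hcardK : Fintype.card K = q ^ k := by
    rw [← hF, ← hK]
    exact Module.card_eq_pow_finrank
  have hcardL : Fintype.card L = Fintype.card K ^ 2 := by
    rw [← hL]; exact Module.card_eq_pow_finrank
  -- characteristic
  obtain ⟨p, hp⟩ := CharP.exists L
  haveI : CharP L p := hp
  haveI : CharP K p := (algebraMap K L).charP (algebraMap K L).injective p
  obtain ⟨n, hpp, hn⟩ := FiniteField.card K p
  haveI : Fact p.Prime := ⟨hpp⟩
  -- the Frobenius as a K-algebra automorphism of L
  have hfix : ∀ c : K, (algebraMap K L c) ^ Fintype.card K = algebraMap K L c := fun c => by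
    rw [← map_pow, FiniteField.pow_card]
  let σ₀ : L →ₐ[K] L :=
    { toFun := fun x => x ^ Fintype.card K
      map_one' := one_pow _
      map_mul' := fun x y => mul_pow x y _
      map_zero' := zero_pow Fintype.card_ne_zero
      map_add' := fun x y => by simp only [hn]; exact add_pow_char_pow x y p n
      commutes' := hfix }
  have hσ₀ : ∀ x : L, σ₀ x = x ^ Fintype.card K := fun _ => rfl
  let σ : L ≃ₐ[K] L :=
    AlgEquiv.ofBijective σ₀ (Finite.injective_iff_bijective.mp σ₀.toRingHom.injective)
  have hσ : ∀ x : L, σ x = x ^ Fintype.card K := fun _ => rfl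
  -- σ is not the identity
  have hσne : σ ≠ 1 := by
    intro h
    have hz : ∀ z : L, z ^ Fintype.card K = z := fun z => by
      rw [← hσ, h, AlgEquiv.one_apply]
    have hu : ∀ x : Lˣ, x ^ (Fintype.card K - 1) = 1 := by
      intro x
      have hx : x ^ Fintype.card K = x := by
        ext
        rw [Units.val_pow_eq_pow_val]
        exact hz x
      have h1K : 1 < Fintype.card K := Fintype.one_lt_card
      have hx2 : x ^ (Fintype.card K - 1) * x = 1 * x := by
        rw [one_mul, ← pow_succ, Nat.sub_add_cancel h1K.le, hx]
      exact mul_right_cancel hx2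
    have hdvd := (FiniteField.forall_pow_eq_one_iff (K := L) _).mp hu
    have h1K : 1 < Fintype.card K := Fintype.one_lt_card
    have h1L : 1 < Fintype.card L := Fintype.one_lt_card
    have hle := Nat.le_of_dvd (by omega) hdvd
    have : Fintype.card L ≤ Fintype.card K := by omega
    nlinarith [hcardL]
  have hcardG : Fintype.card (L ≃ₐ[K] L) = 2 := by
    rw [← Nat.card_eq_fintype_card, IsGalois.card_aut_eq_finrank, hL]
  have huniv : (Finset.univ : Finset (L ≃ₐ[K] L)) = {1, σ} := by
    symm
    apply Finset.eq_univ_of_card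
    rw [Finset.card_insert_of_notMem (by simpa using hσne.symm), Finset.card_singleton, hcardG]
  -- norm computation
  have key : ∀ x : L, x * x ^ Fintype.card K = 1 → Algebra.norm F x = 1 := by
    intro x hx
    have h1 : Algebra.norm K x = 1 := by
      apply (algebraMap K L).injective
      rw [Algebra.norm_eq_prod_automorphisms, huniv,
        Finset.prod_pair (fun h => hσne h.symm), AlgEquiv.one_apply, hσ, map_one, hx]
    rw [← Algebra.norm_norm (R := F) (S := K) (a := x), h1, map_one]
  have hb' : b ^ Fintype.card K = -b := by rw [hcardK, hb]
  constructor
  · refine key _ ?_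
    have : (a' + b) ^ Fintype.card K = a' - b := by
      rw [← hσ, map_add, hσ, hσ, hfix, hb', sub_eq_add_neg]
    rw [this]
    have h2 : (a' + b) * (a' - b) = a' ^ 2 - b ^ 2 := by ring
    rw [h2, hab]
  · refine key _ ?_
    have : (a' - b) ^ Fintype.card K = a' + b := by
      rw [← hσ, map_sub, hσ, hσ, hfix, hb', sub_neg_eq_add]
    rw [this]
    have h2 : (a' - b) * (a' + b) = a' ^ 2 - b ^ 2 := by ring
    rw [h2, hab]
end

section
/- Let q be a prime power, F a finite field with q elements, K an extension field of F with [K:F] = k where k ≥ 3, and let a_0, a_1, a_2 ∈ K. For ε ∈ {1, -1}, let D_ε be the k×k matrix over K whose (i,j)-entry (indices taken in {0,...,k-1}) equals a_m^{q^i} if (j - i) mod k = m for some m ∈ {0,1,2} and j ≥ i, equals ε·a_m^{q^i} if (j - i) mod k = m for some m ∈ {1,2} and j < i (the wrap-around entries), and equals 0 otherwise. Then det D_1 + det D_{-1} = 2·(N_{K/F}(a_0) + N_{K/F}(a_2)), where N_{K/F}(a) = a^{1+q+...+q^{k-1}} is the norm from K to F. -/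
/-- Lemma (sum of determinants): for the `k × k` circulant-like matrices `D_ε`
built from `a₀, a₁, a₂ ∈ K`, one has
`det D₁ + det D₋₁ = 2 (N_{K/F}(a₀) + N_{K/F}(a₂))`. -/
theorem det_add_det_eq_two_mul_norm_add_norm
    (q k : ℕ) (hk : 3 ≤ k) (F K : Type*) [Field F] [Field K]
    [Fintype F] [Fintype K] [Algebra F K]
    (hF : Fintype.card F = q) (hK : Module.finrank F K = k)
    (a : Fin 3 → K)
    (D : K → Matrix (Fin k) (Fin k) K)
    (hD : ∀ (ε : K) (i j : Fin k),
      D ε i j =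
        if h : (j.val + k - i.val) % k < 3 then
          (if j.val < i.val then ε else 1) *
            (a ⟨(j.val + k - i.val) % k, h⟩) ^ q ^ i.val
        else 0) :
    (D 1).det + (D (-1)).det =
      2 * ((a 0) ^ (∑ i ∈ Finset.range k, q ^ i) +
           (a 2) ^ (∑ i ∈ Finset.range k, q ^ i)) := by
  classical
  haveI : NeZero k := ⟨by omega⟩
  have h2' : (2 : Fin k).val = 2 := by
    have h2 : (2 : Fin k).val = 2 % k := rfl
    rw [h2]
    exact Nat.mod_eq_of_lt (by omega)
  set τ : Equiv.Perm (Fin k) := Equiv.subRight (2 : Fin k) with hτdef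
  have hτapp : ∀ i : Fin k, τ i = i - 2 := fun i => rfl
  have hτval : ∀ i : Fin k, (τ i).val = ((k - 2) + i.val) % k := by
    intro i
    rw [hτapp, Fin.sub_def, h2']
  -- value of the band index
  have hmod : ∀ i s : ℕ, i < k → s < k →
      (i + k - s) % k = if s ≤ i then i - s else i + k - s := by
    intro i s hi hs
    split_ifs with h
    · have e : i + k - s = (i - s) + k := by omega
      rw [e, Nat.add_mod_right, Nat.mod_eq_of_lt (by omega)]
    · exact Nat.mod_eq_of_lt (by omega)
  -- sum of band indices equals k * (number of wrap-arounds)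
  have hsum : ∀ σ : Equiv.Perm (Fin k),
      ∑ i : Fin k, (i.val + k - (σ i).val) % k
        = k * (Finset.univ.filter fun i : Fin k => i.val < (σ i).val).card := by
    intro σ
    have key : ∀ i : Fin k, (((i.val + k - (σ i).val) % k : ℕ) : ℤ)
        = (i.val : ℤ) - ((σ i).val : ℤ)
          + (k : ℤ) * (if i.val < (σ i).val then 1 else 0) := by
      intro i
      have hi := i.isLt; have hs := (σ i).isLt
      rw [hmod i.val (σ i).val i.isLt (σ i).isLt]
      split_ifs <;> omega
    have hZ : (∑ i : Fin k, (((i.val + k - (σ i).val) % k : ℕ) : ℤ))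
        = (k : ℤ) * (Finset.univ.filter fun i : Fin k => i.val < (σ i).val).card := by
      rw [Finset.sum_congr rfl fun i _ => key i, Finset.sum_add_distrib,
        Finset.sum_sub_distrib, Equiv.sum_comp σ (fun j : Fin k => (j.val : ℤ)),
        sub_self, zero_add, ← Finset.mul_sum, Finset.sum_boole]
    exact_mod_cast hZ
  -- product formula on the band
  have hP : ∀ (ε : K) (σ : Equiv.Perm (Fin k))
      (hb : ∀ i : Fin k, (i.val + k - (σ i).val) % k < 3),
      ∏ i : Fin k, D ε (σ i) i
        = ε ^ (Finset.univ.filter fun i : Fin k => i.val < (σ i).val).card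
          * ∏ i : Fin k, a ⟨(i.val + k - (σ i).val) % k, hb i⟩ ^ q ^ (σ i).val := by
    intro ε σ hb
    have e1 : ∀ i : Fin k, D ε (σ i) i
        = (if i.val < (σ i).val then ε else 1)
          * a ⟨(i.val + k - (σ i).val) % k, hb i⟩ ^ q ^ (σ i).val := by
      intro i; rw [hD ε (σ i) i, dif_pos (hb i)]
    rw [Finset.prod_congr rfl fun i _ => e1 i, Finset.prod_mul_distrib]
    congr 1
    rw [Finset.prod_ite, Finset.prod_const, Finset.prod_const_one, mul_one]
  -- off-band permutations give zero products
  have hband0 : ∀ (ε : K) (σ : Equiv.Perm (Fin k)) (i : Fin k),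
      ¬ (i.val + k - (σ i).val) % k < 3 → ∏ j : Fin k, D ε (σ j) j = 0 := by
    intro ε σ i hi
    refine Finset.prod_eq_zero (Finset.mem_univ i) ?_
    rw [hD, dif_neg hi]
  -- identification of permutations with band index 0 resp. 2 everywhere
  have hm0 : ∀ (σ : Equiv.Perm (Fin k)) (i : Fin k),
      (i.val + k - (σ i).val) % k = 0 → σ i = i := by
    intro σ i h
    have hi := i.isLt; have hs := (σ i).isLt
    rw [hmod _ _ i.isLt (σ i).isLt] at h
    apply Fin.ext
    split_ifs at h <;> omega
  have hm2 : ∀ (σ : Equiv.Perm (Fin k)) (i : Fin k),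
      (i.val + k - (σ i).val) % k = 2 → σ i = τ i := by
    intro σ i h
    have hi := i.isLt; have hs := (σ i).isLt
    rw [hmod _ _ i.isLt (σ i).isLt] at h
    apply Fin.ext
    rw [hτval]
    split_ifs at h with hle
    · have e : (k - 2) + i.val = (i.val - 2) + k := by omega
      rw [e, Nat.add_mod_right, Nat.mod_eq_of_lt (by omega)]
      omega
    · rw [Nat.mod_eq_of_lt (by omega)]; omega
  -- vanishing off {1, τ}
  have hvan : ∀ σ : Equiv.Perm (Fin k), σ ≠ 1 → σ ≠ τ →
      (∏ i : Fin k, D 1 (σ i) i) + (∏ i : Fin k, D (-1) (σ i) i) = 0 := by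
    intro σ hσ1 hστ
    by_cases hb : ∀ i : Fin k, (i.val + k - (σ i).val) % k < 3
    · rw [hP 1 σ hb, hP (-1) σ hb, one_pow, one_mul]
      set w := (Finset.univ.filter fun i : Fin k => i.val < (σ i).val).card with hw
      have hwodd : ¬ Even w := by
        intro hwe
        have hsle : ∑ i : Fin k, (i.val + k - (σ i).val) % k ≤ k * 2 := by
          calc ∑ i : Fin k, (i.val + k - (σ i).val) % k
              ≤ ∑ _i : Fin k, 2 :=
                Finset.sum_le_sum fun i _ => by have := hb i; omega
            _ = k * 2 := by
                simp [Finset.sum_const, Finset.card_univ, mul_comm]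
        have hkw := hsum σ
        rw [← hw] at hkw
        have hwle : w ≤ 2 := by
          rw [hkw] at hsle
          exact Nat.le_of_mul_le_mul_left hsle (by omega)
        rcases (by rcases hwe with ⟨m, hm⟩; omega : w = 0 ∨ w = 2) with h0 | h2w
        · -- all band indices are zero, so σ = 1
          rw [h0, Nat.mul_zero] at hkw
          have hall : ∀ i : Fin k, (i.val + k - (σ i).val) % k = 0 := by
            intro i
            have := Finset.sum_eq_zero_iff.mp hkw i (Finset.mem_univ i)
            exact this
          exact hσ1 (Equiv.ext fun i => hm0 σ i (hall i))
        · -- all band indices are two, so σ = τ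
          rw [h2w] at hkw
          have hall : ∀ i : Fin k, (i.val + k - (σ i).val) % k = 2 := by
            by_contra hc
            push_neg at hc
            obtain ⟨j, hj⟩ := hc
            have hlt : ∑ i : Fin k, (i.val + k - (σ i).val) % k
                < ∑ _i : Fin k, 2 := by
              refine Finset.sum_lt_sum (fun i _ => by have := hb i; omega)
                ⟨j, Finset.mem_univ j, by have := hb j; omega⟩
            rw [hkw] at hlt
            simp [Finset.sum_const, Finset.card_univ, mul_comm] at hlt
          exact hστ (Equiv.ext fun i => hm2 σ i (hall i))
      have : ((-1 : K)) ^ w = -1 := Odd.neg_one_pow (Nat.not_even_iff_odd.mp hwodd)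
      rw [this]
      ring
    · push_neg at hb
      obtain ⟨i, hi⟩ := hb
      rw [hband0 1 σ i (by omega), hband0 (-1) σ i (by omega), add_zero]
  -- 1 ≠ τ
  have hNe : (1 : Equiv.Perm (Fin k)) ≠ τ := by
    intro h
    have h0 : ((1 : Equiv.Perm (Fin k)) (0 : Fin k)).val = (τ (0 : Fin k)).val := by
      rw [h]
    rw [hτval] at h0
    simp only [Equiv.Perm.one_apply, Fin.val_zero, Nat.add_zero] at h0
    rw [Nat.mod_eq_of_lt (by omega)] at h0
    omega
  -- sign τ = 1
  have hsignτ : Equiv.Perm.sign τ = 1 := by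
    have hsq : τ = Equiv.subRight (1 : Fin k) * Equiv.subRight (1 : Fin k) := by
      refine Equiv.ext fun x => ?_
      show x - 2 = x - 1 - 1
      rw [sub_sub]
      congr 1
      apply Fin.ext
      have h1 : (1 : Fin k).val = 1 := by
        have h1' : (1 : Fin k).val = 1 % k := rfl
        rw [h1']
        exact Nat.mod_eq_of_lt (by omega)
      rw [h2', Fin.val_add, h1]
      exact (Nat.mod_eq_of_lt (by omega)).symm
    rw [hsq, map_mul]
    exact Int.units_mul_self _
  -- identity permutation contribution
  have hid : ∀ ε : K, ∏ i : Fin k, D ε ((1 : Equiv.Perm (Fin k)) i) i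
      = a 0 ^ ∑ i ∈ Finset.range k, q ^ i := by
    intro ε
    have e : ∀ i : Fin k, D ε ((1 : Equiv.Perm (Fin k)) i) i = a 0 ^ q ^ i.val := by
      intro i
      rw [Equiv.Perm.one_apply, hD]
      have hm : (i.val + k - i.val) % k = 0 := by
        have e' : i.val + k - i.val = k := by omega
        rw [e', Nat.mod_self]
      simp only [hm, lt_irrefl, if_false, Fin.mk_zero]
      rw [dif_pos (by omega), one_mul]
    rw [Finset.prod_congr rfl fun i _ => e i, Finset.prod_pow_eq_pow_sum,
      Fin.sum_univ_eq_sum_range (fun j => q ^ j) k]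
  -- τ contribution
  have hτv2 : ∀ i : Fin k, (τ i).val = if i.val < 2 then i.val + k - 2 else i.val - 2 := by
    intro i
    have hi := i.isLt
    rw [hτval]
    split_ifs with h
    · rw [Nat.mod_eq_of_lt (by omega)]; omega
    · have e : (k - 2) + i.val = (i.val - 2) + k := by omega
      rw [e, Nat.add_mod_right, Nat.mod_eq_of_lt (by omega)]
  have hmτ : ∀ i : Fin k, (i.val + k - (τ i).val) % k = 2 := by
    intro i
    have hi := i.isLt
    rw [hmod _ _ i.isLt (τ i).isLt, hτv2]
    split_ifs <;> omega
  have hbτ : ∀ i : Fin k, (i.val + k - (τ i).val) % k < 3 := fun i => by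
    rw [hmτ i]; omega
  have hwτ : (Finset.univ.filter fun i : Fin k => i.val < (τ i).val).card = 2 := by
    have h1 := hsum τ
    rw [Finset.sum_congr rfl fun i _ => hmτ i] at h1
    simp only [Finset.sum_const, Finset.card_univ, Fintype.card_fin, smul_eq_mul] at h1
    exact (Nat.eq_of_mul_eq_mul_left (by omega) h1.symm)
  have hτterm : ∀ ε : K, ∏ i : Fin k, D ε (τ i) i
      = ε ^ 2 * a 2 ^ ∑ i ∈ Finset.range k, q ^ i := by
    intro ε
    rw [hP ε τ hbτ, hwτ]
    congr 1
    have e : ∀ i : Fin k,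
        (⟨(i.val + k - (τ i).val) % k, hbτ i⟩ : Fin 3) = 2 :=
      fun i => Fin.ext (by simpa using hmτ i)
    rw [Finset.prod_congr rfl fun i _ => by rw [e i], Finset.prod_pow_eq_pow_sum]
    congr 1
    rw [Equiv.sum_comp τ (fun j : Fin k => q ^ j.val),
      Fin.sum_univ_eq_sum_range (fun j => q ^ j) k]
  -- assemble
  rw [Matrix.det_apply, Matrix.det_apply, ← Finset.sum_add_distrib]
  have hstep : ∀ σ : Equiv.Perm (Fin k),
      (Equiv.Perm.sign σ • ∏ i : Fin k, D 1 (σ i) i)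
        + (Equiv.Perm.sign σ • ∏ i : Fin k, D (-1) (σ i) i)
      = Equiv.Perm.sign σ •
          ((∏ i : Fin k, D 1 (σ i) i) + ∏ i : Fin k, D (-1) (σ i) i) :=
    fun σ => (smul_add _ _ _).symm
  rw [Finset.sum_congr rfl fun σ _ => hstep σ]
  rw [← Finset.sum_subset
    (Finset.subset_univ ({1, τ} : Finset (Equiv.Perm (Fin k))))
    (fun σ _ hσ => by
      simp only [Finset.mem_insert, Finset.mem_singleton, not_or] at hσ
      rw [hvan σ hσ.1 hσ.2, smul_zero])]
  rw [Finset.sum_pair hNe, Equiv.Perm.sign_one, hsignτ, one_smul, one_smul,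
    hid 1, hid (-1), hτterm 1, hτterm (-1)]
  ring
end

section
/- Let q be a prime power, F a finite field with q elements, K an extension field of F with [K:F] = k where k ≥ 3, and L an extension field of K with [L:K] = 2. Let a_0, a_1, a_2 ∈ K and suppose N_{K/F}(a_0) + N_{K/F}(a_2) = 0, where N_{K/F}(a) = a^{(q^k-1)/(q-1)} is the norm from K to F. Then the map x ↦ a_0·x + a_1·x^q + a_2·x^{q^2} is a bijection of K if and only if the map x ↦ a_0·x + a_1·x^q + a_2·x^{q^2} (coefficients viewed in L via the inclusion K ⊆ L) is a bijection of L. -/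
open Matrix Finset


lemma geom_nat {q : ℕ} (hq : 2 ≤ q) (k : ℕ) :
    (q - 1) * (∑ i ∈ Finset.range k, q ^ i) = q ^ k - 1 := by
  induction k with
  | zero => simp
  | succ k ih =>
    rw [Finset.sum_range_succ, Nat.mul_add, ih]
    have h1 : 1 ≤ q ^ k := Nat.one_le_pow _ _ (by omega)
    have h2 : q ^ (k+1) = q * q ^ k := by rw [pow_succ, mul_comm]
    have h3 : (q-1) * q^k = q * q^k - q^k := by rw [Nat.sub_mul, one_mul]
    have h4 : q^k ≤ q * q^k := Nat.le_mul_of_pos_left _ (by omega)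
    omega

lemma geom_div {q : ℕ} (hq : 2 ≤ q) (k : ℕ) :
    (q ^ k - 1) / (q - 1) = ∑ i ∈ Finset.range k, q ^ i := by
  rw [← geom_nat hq k, Nat.mul_div_cancel_left _ (by omega)]

lemma mem_range_algebraMap_of_pow_card {K L : Type*} [Field K] [Field L] [Fintype K] [Fintype L]
    [Algebra K L] {x : L} (hx : x ^ Fintype.card K = x) :
    ∃ z : K, algebraMap K L z = x := by
  classical
  set n := Fintype.card K with hn
  have hn2 : 1 < n := Fintype.one_lt_card
  have hne : (Polynomial.X ^ n - Polynomial.X : Polynomial L) ≠ 0 :=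
    FiniteField.X_pow_card_sub_X_ne_zero L hn2
  set S : Finset L := (Polynomial.X ^ n - Polynomial.X : Polynomial L).roots.toFinset with hS
  have hcard : S.card ≤ n := by
    calc S.card ≤ Multiset.card (Polynomial.X ^ n - Polynomial.X : Polynomial L).roots :=
          Multiset.toFinset_card_le _
      _ ≤ (Polynomial.X ^ n - Polynomial.X : Polynomial L).natDegree := Polynomial.card_roots' _
      _ = n := FiniteField.X_pow_card_sub_X_natDegree_eq L hn2
  have hroot : ∀ t : L, t ^ n = t → t ∈ S := by
    intro t ht
    rw [hS, Multiset.mem_toFinset, Polynomial.mem_roots hne]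
    simp [Polynomial.IsRoot, ht]
  have himg : (Finset.univ.image (algebraMap K L)) ⊆ S := by
    intro t ht
    simp only [Finset.mem_image] at ht
    obtain ⟨z, _, rfl⟩ := ht
    apply hroot
    rw [← map_pow, FiniteField.pow_card]
  have hcardimg : (Finset.univ.image (algebraMap K L)).card = n := by
    rw [Finset.card_image_of_injective _ (algebraMap K L).injective, Finset.card_univ]
  have : S = Finset.univ.image (algebraMap K L) :=
    (Finset.eq_of_subset_of_card_le himg (by omega)).symm
  have hxS : x ∈ S := hroot x hx
  rw [this] at hxS
  simp only [Finset.mem_image] at hxS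
  obtain ⟨z, _, hz⟩ := hxS
  exact ⟨z, hz⟩

lemma exists_pow_eq_of_pow_eq_one {K : Type*} [Field K] [Fintype K] {c : K} {d e : ℕ}
    (he : e ≠ 0) (hde : d * e = Fintype.card K - 1) (hc : c ^ e = 1) :
    ∃ t : K, t ≠ 0 ∧ t ^ d = c := by
  classical
  have hc0 : c ≠ 0 := by
    intro h; rw [h, zero_pow he] at hc; exact zero_ne_one hc
  obtain ⟨g, hg⟩ := IsCyclic.exists_generator (α := Kˣ)
  obtain ⟨m, hm'⟩ := mem_powers_iff_mem_zpowers.mpr (hg (Units.mk0 c hc0))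
  have hm : g ^ m = Units.mk0 c hc0 := hm'
  clear hm'
  have hord : orderOf g = Fintype.card K - 1 := by
    rw [orderOf_eq_card_of_forall_mem_zpowers hg, Nat.card_eq_fintype_card, Fintype.card_units]
  have h1 : g ^ (m * e) = 1 := by
    rw [pow_mul, hm]
    ext
    push_cast
    exact hc
  have hdvd : (d * e) ∣ m * e := by
    rw [hde, ← hord]; exact orderOf_dvd_of_pow_eq_one h1
  have hd : d ∣ m := (Nat.mul_dvd_mul_iff_right (Nat.pos_of_ne_zero he)).mp hdvd
  obtain ⟨m', rfl⟩ := hd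
  refine ⟨((g ^ m' : Kˣ) : K), Units.ne_zero _, ?_⟩
  have h2 : ((g ^ m') ^ d : Kˣ) = Units.mk0 c hc0 := by
    rw [← pow_mul, mul_comm m' d, hm]
  calc ((g ^ m' : Kˣ) : K) ^ d = (((g ^ m') ^ d : Kˣ) : K) := by push_cast; ring
    _ = c := by rw [h2]; rfl


lemma two_dim_dep {K : Type*} [Field K] (M : Matrix (Fin 2) (Fin 2) K) (v w1 w2 : Fin 2 → K)
    (h2 : (2:K) ≠ 0) (hv : M.mulVec v = -v) (hv0 : v ≠ 0)
    (h1 : M.mulVec w1 = w1) (h10 : w1 ≠ 0) (hw2 : M.mulVec w2 = w2) :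
    ∃ c : K, w2 = c • w1 := by
  by_cases hd : w1 0 * w2 1 - w1 1 * w2 0 = 0
  · have hw1 : w1 0 ≠ 0 ∨ w1 1 ≠ 0 := by
      by_contra h
      push_neg at h
      apply h10
      funext j
      fin_cases j <;> simp [h.1, h.2]
    rcases hw1 with h | h
    · refine ⟨w2 0 / w1 0, ?_⟩
      funext j
      fin_cases j
      · simp only [Pi.smul_apply, smul_eq_mul, Fin.zero_eta, Fin.mk_one]
        field_simp
      · simp only [Pi.smul_apply, smul_eq_mul, Fin.zero_eta, Fin.mk_one]
        field_simp
        linear_combination hd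
    · refine ⟨w2 1 / w1 1, ?_⟩
      funext j
      fin_cases j
      · simp only [Pi.smul_apply, smul_eq_mul, Fin.zero_eta, Fin.mk_one]
        field_simp
        linear_combination -hd
      · simp only [Pi.smul_apply, smul_eq_mul, Fin.zero_eta, Fin.mk_one]
        field_simp
  · exfalso
    set d := w1 0 * w2 1 - w1 1 * w2 0 with hdd
    set a := (v 0 * w2 1 - v 1 * w2 0) / d with ha
    set b := (w1 0 * v 1 - w1 1 * v 0) / d with hb
    have hv' : v = a • w1 + b • w2 := by
      funext j
      fin_cases j
      · show v 0 = a * w1 0 + b * w2 0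
        rw [ha, hb]
        field_simp
        ring
      · show v 1 = a * w1 1 + b * w2 1
        rw [ha, hb]
        field_simp
        ring
    have hMv : M.mulVec v = v := by
      rw [hv', Matrix.mulVec_add, Matrix.mulVec_smul, Matrix.mulVec_smul, h1, hw2]
    rw [hv] at hMv
    have : (2:K) • v = 0 := by
      funext j
      have := congrFun hMv j
      simp only [Pi.neg_apply] at this
      simp only [Pi.smul_apply, smul_eq_mul, Pi.zero_apply]
      linear_combination -this
    exact hv0 (by simpa [smul_eq_zero, h2] using this)

lemma core {K : Type*} [Field K] [Fintype K] (p n k : ℕ) [Fact p.Prime] [CharP K p]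
    (q : ℕ) (hq : q = p ^ n) (hq2 : 2 ≤ q) (hqodd : Odd q) (hk : 1 ≤ k)
    (hcard : Fintype.card K = q ^ k) (h2 : (2:K) ≠ 0)
    (a0 a1 a2 : K) (ha2 : a2 ≠ 0)
    (e : ℕ) (he : e = ∑ i ∈ Finset.range k, q ^ i)
    (hnorm : a0 ^ e = - a2 ^ e)
    (y : K) (hy : a2 * y ^ (q+1) + a1 * y + a0 = 0) (hye : y ^ e = -1) :
    ∃ u : K, u ≠ 0 ∧ a0 * u + a1 * u ^ q + a2 * u ^ q ^ 2 = 0 := by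
  classical
  have he0 : e ≠ 0 := by
    rw [he]
    have : 0 < ∑ i ∈ Finset.range k, q ^ i :=
      Finset.sum_pos (fun i _ => pow_pos (by omega) i) (by simp; omega)
    omega
  have ha0 : a0 ≠ 0 := by
    intro h
    rw [h, zero_pow he0] at hnorm
    exact pow_ne_zero e ha2 (neg_eq_zero.mp hnorm.symm)
  -- the q-power maps as ring homs
  have hqpow : ∀ i, q ^ i = p ^ (n * i) := fun i => by rw [hq, ← pow_mul]
  let σ : ℕ → K →+* K := fun i => iterateFrobenius K p (n * i)
  have σ_def : ∀ i x, σ i x = x ^ q ^ i := fun i x => by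
    show iterateFrobenius K p (n * i) x = _
    rw [iterateFrobenius_def, ← hqpow]
  -- coefficients
  set b0 : K := -a0 / a2 with hb0
  set b1 : K := -a1 / a2 with hb1
  have hb0ne : b0 ≠ 0 := by
    rw [hb0]
    exact div_ne_zero (neg_ne_zero.mpr ha0) ha2
  have hkey : b0 + b1 * y = y ^ (q + 1) := by
    rw [hb0, hb1]
    field_simp
    linear_combination -hy
  -- matrices
  set A : ℕ → Matrix (Fin 2) (Fin 2) K := fun i => !![0, 1; b0 ^ q ^ i, b1 ^ q ^ i] with hA
  set B : ℕ → Matrix (Fin 2) (Fin 2) K :=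
    fun i => Nat.rec 1 (fun j Bj => A j * Bj) i with hB
  have hBsucc : ∀ i, B (i + 1) = A i * B i := fun i => rfl
  have hB0 : B 0 = 1 := rfl
  have Amul : ∀ i (w : Fin 2 → K),
      (A i).mulVec w = ![w 1, b0 ^ q ^ i * w 0 + b1 ^ q ^ i * w 1] := by
    intro i w
    funext j
    fin_cases j <;>
      simp [hA, Matrix.mulVec, dotProduct, Fin.sum_univ_two]
  -- powers of y
  have ypow : ∀ i : ℕ, y ^ q ^ i = σ i y := fun i => (σ_def i y).symm
  have hBy : ∀ i, (B i).mulVec ![1, y] =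
      y ^ (∑ j ∈ Finset.range i, q ^ j) • ![1, y ^ q ^ i] := by
    intro i
    induction i with
    | zero => simp [hB0, Matrix.one_mulVec]
    | succ i ih =>
      rw [hBsucc, ← Matrix.mulVec_mulVec, ih, Matrix.mulVec_smul, Amul]
      have hcomp : b0 ^ q ^ i + b1 ^ q ^ i * y ^ q ^ i = y ^ (q ^ i + q ^ (i+1)) := by
        have h' : b0 ^ q ^ i + b1 ^ q ^ i * y ^ q ^ i = σ i (b0 + b1 * y) := by
          rw [map_add, _root_.map_mul, σ_def, σ_def, σ_def]
        rw [h', hkey, σ_def, ← pow_mul]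
        congr 1
        rw [add_mul, one_mul, pow_succ]
        ring
      have h1 : (![(1:K), y ^ q ^ i] : Fin 2 → K) 1 = y ^ q ^ i := rfl
      have h0 : (![(1:K), y ^ q ^ i] : Fin 2 → K) 0 = 1 := rfl
      rw [Finset.sum_range_succ, pow_add]
      funext j
      fin_cases j
      · show y ^ (∑ j ∈ Finset.range i, q ^ j) * (![(1:K), y ^ q ^ i] 1) =
          y ^ (∑ j ∈ Finset.range i, q ^ j) * y ^ q ^ i * (![(1:K), y ^ q ^ (i+1)] 0)
        rw [h1]
        show _ = _ * (1:K)
        ring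
      · show y ^ (∑ j ∈ Finset.range i, q ^ j) *
            (b0 ^ q ^ i * (![(1:K), y ^ q ^ i] 0) + b1 ^ q ^ i * (![(1:K), y ^ q ^ i] 1)) =
          y ^ (∑ j ∈ Finset.range i, q ^ j) * y ^ q ^ i * (![(1:K), y ^ q ^ (i+1)] 1)
        rw [h0, h1, mul_one]
        show _ = _ * y ^ q ^ (i+1)
        rw [hcomp, pow_add]
        ring
  -- value at k
  have hyqk : y ^ q ^ k = y := by rw [← hcard]; exact FiniteField.pow_card y
  have hPv : (B k).mulVec ![1, y] = -![1, y] := by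
    rw [hBy k, ← he, hye, hyqk]
    funext j
    fin_cases j <;> simp
  -- determinant
  have hdetA : ∀ i, (A i).det = -(b0 ^ q ^ i) := by
    intro i
    rw [hA]
    simp [Matrix.det_fin_two_of]
  have hdetB : ∀ i, (B i).det = (-1) ^ i * b0 ^ (∑ j ∈ Finset.range i, q ^ j) := by
    intro i
    induction i with
    | zero => simp [hB0]
    | succ i ih =>
      rw [hBsucc, Matrix.det_mul, hdetA, ih, Finset.sum_range_succ, pow_add, pow_succ]
      ring
  have hqodd' : ∀ i : ℕ, Odd (q ^ i) := fun i => hqodd.pow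
  have hneg1e : (-1 : K) ^ e = (-1) ^ k := by
    rw [he, ← Finset.prod_pow_eq_pow_sum]
    have : ∀ i ∈ Finset.range k, (-1 : K) ^ q ^ i = -1 := fun i _ => (hqodd' i).neg_one_pow
    rw [Finset.prod_congr rfl this, Finset.prod_const, Finset.card_range]
  have hb0e : b0 ^ e = (-1 : K) ^ k * (-1) := by
    have h1 : b0 ^ e = (-1) ^ e * (a0 / a2) ^ e := by
      rw [hb0, neg_div, neg_pow]
    have h2 : (a0 / a2) ^ e = -1 := by
      rw [div_pow, hnorm, neg_div, div_self (pow_ne_zero e ha2)]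
    rw [h1, h2, hneg1e]
  have hdetP : (B k).det = -1 := by
    rw [hdetB k, ← he, hb0e]
    have : ((-1 : K) ^ k) * ((-1) ^ k) = 1 := by
      rw [← mul_pow]
      simp
    calc (-1 : K) ^ k * ((-1) ^ k * -1) = ((-1 : K) ^ k * (-1) ^ k) * -1 := by ring
      _ = -1 := by rw [this]; ring
  -- trace is zero, get fixed vector
  set P := B k with hPdef
  have hv0 : (![1, y] : Fin 2 → K) ≠ 0 := by
    intro h
    have := congrFun h 0
    simp at this
  have htr : P 0 0 + P 1 1 = 0 := by
    have hsing : (P + 1).det = 0 := by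
      rw [← Matrix.exists_mulVec_eq_zero_iff]
      refine ⟨![1, y], hv0, ?_⟩
      rw [Matrix.add_mulVec, Matrix.one_mulVec, hPv]
      funext j
      fin_cases j <;> simp
    have hdet2 : (P + 1).det = P.det + (P 0 0 + P 1 1) + 1 := by
      rw [Matrix.det_fin_two, Matrix.det_fin_two]
      simp [Matrix.add_apply, Matrix.one_apply]
      ring
    rw [hdet2, hdetP] at hsing
    linear_combination hsing
  have hdetPm : (P - 1).det = 0 := by
    have hd2 : (P - 1).det = P.det - (P 0 0 + P 1 1) + 1 := by
      rw [Matrix.det_fin_two, Matrix.det_fin_two]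
      simp [Matrix.sub_apply, Matrix.one_apply]
      ring
    rw [hd2, hdetP, htr]
    ring
  obtain ⟨w, hw0, hww⟩ := Matrix.exists_mulVec_eq_zero_iff.mpr hdetPm
  have hPw : P.mulVec w = w := by
    have := hww
    rw [Matrix.sub_mulVec, Matrix.one_mulVec, sub_eq_zero] at this
    exact this
  -- the Frobenius-twisted matrix identities
  have mvmap : ∀ (M : Matrix (Fin 2) (Fin 2) K) (v : Fin 2 → K),
      (M.map (σ 1)).mulVec (fun j => σ 1 (v j)) = fun j => σ 1 (M.mulVec v j) := by
    intro M v
    funext j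
    simp [Matrix.mulVec, dotProduct, Fin.sum_univ_two, Matrix.map_apply,
      map_add, _root_.map_mul]
  have hAmap : ∀ i, (A i).map (σ 1) = A (i + 1) := by
    intro i
    funext j l
    fin_cases j <;> fin_cases l <;>
      simp [hA, Matrix.map_apply, σ_def, ← pow_mul, pow_succ, pow_one] <;> omega
  have hcomm : ∀ i, (B i).map (σ 1) * A 0 = A i * B i := by
    intro i
    induction i with
    | zero =>
      rw [hB0, Matrix.map_one _ (map_zero _) (map_one _), one_mul, mul_one]
    | succ i ih =>
      rw [hBsucc i, Matrix.map_mul, mul_assoc, ih, ← mul_assoc, hAmap i, mul_assoc]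
  have hyqk' : ∀ b : K, b ^ q ^ k = b := by
    intro b; rw [← hcard]; exact FiniteField.pow_card b
  have hAk : A k = A 0 := by
    funext j l
    fin_cases j <;> fin_cases l <;> simp [hA, hyqk']
  set τ := σ 1 with hτ
  have τ_def : ∀ x : K, τ x = x ^ q := fun x => by rw [hτ, σ_def, pow_one]
  set Q := P.map τ with hQdef
  have hQcommP : Q * A 0 = A 0 * P := by
    have h' := hcomm k
    rw [hAk] at h'
    exact h'
  have hQfix1 : Q.mulVec (fun j => τ (w j)) = fun j => τ (w j) := by
    rw [hQdef, hτ, mvmap]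
    funext j
    rw [← hτ]
    show τ (P.mulVec w j) = τ (w j)
    rw [hPw]
  have hQfix2 : Q.mulVec ((A 0).mulVec w) = (A 0).mulVec w := by
    rw [Matrix.mulVec_mulVec, hQcommP, ← Matrix.mulVec_mulVec, hPw]
  have hQv : Q.mulVec ![1, y ^ q] = -![1, y ^ q] := by
    have h1 : (fun j => σ 1 ((![1, y] : Fin 2 → K) j)) = ![1, y ^ q] := by
      funext j
      fin_cases j <;> simp [← hτ, τ_def]
    have h2 := mvmap P ![1, y]
    rw [h1, hPv] at h2
    rw [hQdef, hτ, h2]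
    funext j
    fin_cases j <;>
      simp [← hτ, τ_def, hqodd.neg_one_pow, hqodd.neg_pow]
  have hv0' : (![1, y ^ q] : Fin 2 → K) ≠ 0 := by
    intro h
    have := congrFun h 0
    simp at this
  have hτw0 : (fun j => τ (w j)) ≠ 0 := by
    intro h
    apply hw0
    funext j
    have := congrFun h j
    simp only [τ_def, Pi.zero_apply] at this
    exact pow_eq_zero_iff (by omega : q ≠ 0) |>.mp this
  obtain ⟨c, hc⟩ := two_dim_dep Q ![1, y ^ q] (fun j => τ (w j)) ((A 0).mulVec w)
    h2 hQv hv0' hQfix1 hτw0 hQfix2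
  have hcne : c ≠ 0 := by
    intro h
    rw [h] at hc
    simp only [zero_smul] at hc
    have hdz := Matrix.exists_mulVec_eq_zero_iff.mp ⟨w, hw0, hc⟩
    rw [hdetA 0] at hdz
    simp at hdz
    exact hb0ne hdz
  rw [Amul 0] at hc
  have r1 : w 1 = c * w 0 ^ q := by
    have := congrFun hc 0
    simpa [τ_def] using this
  have r2 : b0 * w 0 + b1 * w 1 = c * w 1 ^ q := by
    have := congrFun hc 1
    simpa [τ_def] using this
  -- iterate the twisted eigen relation
  have r1i : ∀ i : ℕ, w 1 ^ q ^ i = c ^ q ^ i * w 0 ^ q ^ (i+1) := by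
    intro i
    rw [r1, mul_pow, ← pow_mul, ← pow_succ']
  have r2i : ∀ i : ℕ, b0 ^ q ^ i * w 0 ^ q ^ i + b1 ^ q ^ i * w 1 ^ q ^ i
      = c ^ q ^ i * w 1 ^ q ^ (i+1) := by
    intro i
    have h' := congrArg (σ i) r2
    rw [map_add, _root_.map_mul, _root_.map_mul, _root_.map_mul, map_pow] at h'
    simp only [σ_def] at h'
    rw [h', ← pow_mul, ← pow_succ]
  have hBw : ∀ i, (B i).mulVec w = (c ^ (∑ j ∈ Finset.range i, q ^ j)) •
      (fun j => w j ^ q ^ i) := by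
    intro i
    induction i with
    | zero =>
      rw [hB0, Matrix.one_mulVec]
      funext j
      simp
    | succ i ih =>
      rw [hBsucc i, ← Matrix.mulVec_mulVec, ih, Matrix.mulVec_smul, Amul i,
        Finset.sum_range_succ, pow_add]
      funext j
      fin_cases j
      · show c ^ (∑ j ∈ Finset.range i, q ^ j) * ((fun j => w j ^ q ^ i) 1) =
          c ^ (∑ j ∈ Finset.range i, q ^ j) * c ^ q ^ i * ((fun j => w j ^ q ^ (i+1)) 0)
        show c ^ (∑ j ∈ Finset.range i, q ^ j) * (w 1 ^ q ^ i) =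
          c ^ (∑ j ∈ Finset.range i, q ^ j) * c ^ q ^ i * (w 0 ^ q ^ (i+1))
        rw [r1i i]
        ring
      · show c ^ (∑ j ∈ Finset.range i, q ^ j) *
            (b0 ^ q ^ i * ((fun j => w j ^ q ^ i) 0) + b1 ^ q ^ i * ((fun j => w j ^ q ^ i) 1)) =
          c ^ (∑ j ∈ Finset.range i, q ^ j) * c ^ q ^ i * ((fun j => w j ^ q ^ (i+1)) 1)
        show c ^ (∑ j ∈ Finset.range i, q ^ j) *
            (b0 ^ q ^ i * w 0 ^ q ^ i + b1 ^ q ^ i * w 1 ^ q ^ i) =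
          c ^ (∑ j ∈ Finset.range i, q ^ j) * c ^ q ^ i * (w 1 ^ q ^ (i+1))
        rw [r2i i]
        ring
  -- conclude c ^ e = 1
  have hce : c ^ e = 1 := by
    have h' := hBw k
    rw [← hPdef, hPw, ← he] at h'
    obtain ⟨j, hj⟩ := Function.ne_iff.mp hw0
    have h2' := congrFun h' j
    have h3' : w j = c ^ e * w j ^ q ^ k := h2'
    rw [hyqk' (w j)] at h3'
    have h4' : (c ^ e - 1) * w j = 0 := by linear_combination -h3'
    rcases mul_eq_zero.mp h4' with h | h
    · linear_combination h
    · exact absurd h hj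
  -- extract (q-1)-th root
  have hde : (q - 1) * e = Fintype.card K - 1 := by
    rw [hcard, he]
    exact geom_nat hq2 k
  obtain ⟨t, ht0, htd⟩ := exists_pow_eq_of_pow_eq_one he0 hde hce
  -- final computation
  have hq0 : q ≠ 0 := by omega
  have hw00 : w 0 ≠ 0 := by
    intro h
    apply hw0
    funext j
    fin_cases j
    · exact h
    · show w 1 = 0
      rw [r1, h, zero_pow hq0, mul_zero]
  have htq : t ^ q = t * c := by
    calc t ^ q = t ^ (q - 1 + 1) := by congr 1; omega
      _ = t ^ (q - 1) * t := pow_succ t _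
      _ = t * c := by rw [htd]; ring
  have hexp : (q - 1) * (q + 1) + 1 = q ^ 2 := by
    obtain ⟨q', rfl⟩ : ∃ q', q = q' + 1 := ⟨q - 1, by omega⟩
    simp only [Nat.add_sub_cancel]
    ring
  have ht2 : t ^ q ^ 2 = t * c ^ (q + 1) := by
    rw [← hexp, pow_add, pow_mul, htd, pow_one]
    ring
  have hqq : q * q = q ^ 2 := (sq q).symm
  have S : c * (c ^ q * w 0 ^ q ^ 2) = b0 * w 0 + b1 * (c * w 0 ^ q) := by
    have h' := r2
    rw [r1, mul_pow, ← pow_mul, hqq] at h'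
    exact h'.symm
  have G : (t * w 0) ^ q ^ 2 = b1 * (t * w 0) ^ q + b0 * (t * w 0) := by
    rw [mul_pow, mul_pow, ht2, htq]
    calc t * c ^ (q + 1) * w 0 ^ q ^ 2 = t * (c * (c ^ q * w 0 ^ q ^ 2)) := by
          rw [pow_succ]
          ring
      _ = t * (b0 * w 0 + b1 * (c * w 0 ^ q)) := by rw [S]
      _ = b1 * (t * c * w 0 ^ q) + b0 * (t * w 0) := by ring
  refine ⟨t * w 0, mul_ne_zero ht0 hw00, ?_⟩
  have hab0 : a2 * b0 = -a0 := by
    rw [hb0]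
    field_simp
  have hab1 : a2 * b1 = -a1 := by
    rw [hb1]
    field_simp
  linear_combination a2 * G + (t * w 0) ^ q * hab1 + (t * w 0) * hab0


lemma bij_iff_ker {M : Type*} [Field M] [Finite M] (p n q : ℕ) [Fact p.Prime] [CharP M p]
    (hq : q = p ^ n) (c0 c1 c2 : M) :
    Function.Bijective (fun x : M => c0 * x + c1 * x ^ q + c2 * x ^ q ^ 2) ↔
      ∀ x : M, c0 * x + c1 * x ^ q + c2 * x ^ q ^ 2 = 0 → x = 0 := by
  have hqne : q ≠ 0 := by rw [hq]; exact pow_ne_zero n (Nat.Prime.ne_zero Fact.out)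
  have hsub : ∀ u v : M, (u - v) ^ q = u ^ q - v ^ q := by
    intro u v; rw [hq]; exact sub_pow_char_pow ..
  have hsub2 : ∀ u v : M, (u - v) ^ q ^ 2 = u ^ q ^ 2 - v ^ q ^ 2 := by
    intro u v; rw [hq, ← pow_mul]; exact sub_pow_char_pow ..
  constructor
  · intro hb x hx
    apply hb.injective (a₁ := x) (a₂ := 0)
    show c0 * x + c1 * x ^ q + c2 * x ^ q ^ 2 = c0 * 0 + c1 * 0 ^ q + c2 * 0 ^ q ^ 2
    rw [hx, zero_pow hqne, zero_pow (pow_ne_zero 2 hqne)]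
    ring
  · intro h
    have hinj : Function.Injective (fun x : M => c0 * x + c1 * x ^ q + c2 * x ^ q ^ 2) := by
      intro u v huv
      simp only at huv
      have hz : c0 * (u - v) + c1 * (u - v) ^ q + c2 * (u - v) ^ q ^ 2 = 0 := by
        rw [hsub, hsub2]
        linear_combination huv
      exact sub_eq_zero.mp (h _ hz)
    exact Finite.injective_iff_bijective.mp hinj

/-- Theorem (Özbudak-type criterion): if `N_{K/F}(a₀) + N_{K/F}(a₂) = 0`, then
`x ↦ a₀x + a₁x^q + a₂x^{q²}` permutes `K` iff it permutes the quadratic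
extension `L` of `K`. -/
theorem bijective_iff_bijective_of_norm_add_norm_eq_zero
    (q k : ℕ) (hk : 3 ≤ k) (F K L : Type*) [Field F] [Field K] [Field L]
    [Fintype F] [Fintype K] [Fintype L]
    [Algebra F K] [Algebra K L] [Algebra F L] [IsScalarTower F K L]
    (hF : Fintype.card F = q) (hK : Module.finrank F K = k)
    (hL : Module.finrank K L = 2)
    (a0 a1 a2 : K)
    (hnorm : a0 ^ ((q ^ k - 1) / (q - 1)) + a2 ^ ((q ^ k - 1) / (q - 1)) = 0) :
    Function.Bijective (fun x : K => a0 * x + a1 * x ^ q + a2 * x ^ q ^ 2) ↔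
    Function.Bijective (fun x : L =>
      algebraMap K L a0 * x + algebraMap K L a1 * x ^ q +
        algebraMap K L a2 * x ^ q ^ 2) := by
  classical
  have hq2 : 2 ≤ q := by rw [← hF]; exact Fintype.one_lt_card
  set p := ringChar F with hpdef
  haveI : CharP F p := ringChar.charP F
  have hpp : p.Prime := CharP.char_is_prime F p
  haveI := Fact.mk hpp
  obtain ⟨n, hpp2, hcardF⟩ := FiniteField.card F p
  have hq : q = p ^ (n : ℕ) := by rw [← hF, hcardF]
  haveI : CharP K p := charP_of_injective_algebraMap (algebraMap F K).injective p
  haveI : CharP L p := charP_of_injective_algebraMap (algebraMap F L).injective p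
  have hcardK : Fintype.card K = q ^ k := by
    rw [← hK, ← hF]; exact Module.card_eq_pow_finrank
  have hcardL : Fintype.card L = q ^ (k * 2) := by
    rw [Module.card_eq_pow_finrank (K := K) (V := L), hcardK, hL, ← pow_mul]
  set e := (q ^ k - 1) / (q - 1) with hedef
  have he : e = ∑ i ∈ Finset.range k, q ^ i := geom_div hq2 k
  have he0 : e ≠ 0 := by
    rw [he]
    have : 0 < ∑ i ∈ Finset.range k, q ^ i :=
      Finset.sum_pos (fun i _ => pow_pos (by omega) i) (by simp; omega)
    omega
  have hnorm' : a0 ^ e = -a2 ^ e := by linear_combination hnorm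
  set φ := algebraMap K L with hφdef
  have hφinj : Function.Injective φ := φ.injective
  have hqne : q ≠ 0 := by omega
  -- main transfer of nonzero roots
  have main : (∃ x : K, x ≠ 0 ∧ a0 * x + a1 * x ^ q + a2 * x ^ q ^ 2 = 0) ↔
      (∃ x : L, x ≠ 0 ∧ φ a0 * x + φ a1 * x ^ q + φ a2 * x ^ q ^ 2 = 0) := by
    constructor
    · rintro ⟨x, hx0, hx⟩
      refine ⟨φ x, by simpa using hx0, ?_⟩
      have h' := congrArg φ hx
      simpa [map_add, _root_.map_mul, map_pow] using h'
    · rintro ⟨x, hx0, hx⟩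
      by_cases ha2 : a2 = 0
      · have ha0 : a0 = 0 := by
          rw [ha2, zero_pow he0] at hnorm'
          have : a0 ^ e = 0 := by rw [hnorm']; ring
          exact pow_eq_zero_iff he0 |>.mp this
        have hx' : φ a1 * x ^ q = 0 := by
          have := hx
          rw [ha0, ha2, map_zero, zero_mul, zero_mul, zero_add, add_zero] at this
          exact this
        have ha1 : a1 = 0 := by
          rcases mul_eq_zero.mp hx' with h | h
          · exact hφinj (by rw [h, map_zero])
          · exact absurd (pow_eq_zero_iff hqne |>.mp h) hx0
        exact ⟨1, one_ne_zero, by rw [ha0, ha1, ha2]; ring⟩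
      · -- a2 ≠ 0, hence a0 ≠ 0
        have hcoef : ∀ a : K, φ a ^ q ^ k = φ a := by
          intro a
          rw [← map_pow]
          congr 1
          rw [← hcardK]
          exact FiniteField.pow_card a
        have hqkpow : q ^ k = p ^ (n * k : ℕ) := by rw [hq, ← pow_mul]
        set Fr := iterateFrobenius L p (n * k : ℕ) with hFrdef
        have Frdef : ∀ z : L, Fr z = z ^ q ^ k := fun z => by
          rw [hFrdef, iterateFrobenius_def, ← hqkpow]
        have hFcoef : ∀ a : K, Fr (φ a) = φ a := fun a => by rw [Frdef]; exact hcoef a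
        set x' := x ^ q ^ k with hx'def
        have hfx' : φ a0 * x' + φ a1 * x' ^ q + φ a2 * x' ^ q ^ 2 = 0 := by
          have h' := congrArg Fr hx
          rw [map_add, map_add, _root_.map_mul, _root_.map_mul, _root_.map_mul,
            map_pow, map_pow, map_zero, hFcoef, hFcoef, hFcoef] at h'
          rw [hx'def, ← Frdef x]
          exact h'
        have haddq : ∀ u v : L, (u + v) ^ q = u ^ q + v ^ q := by
          intro u v; rw [hq]; exact add_pow_char_pow ..
        have haddq2 : ∀ u v : L, (u + v) ^ q ^ 2 = u ^ q ^ 2 + v ^ q ^ 2 := by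
          intro u v; rw [hq, ← pow_mul]; exact add_pow_char_pow ..
        have hfs : φ a0 * (x + x') + φ a1 * (x + x') ^ q + φ a2 * (x + x') ^ q ^ 2 = 0 := by
          rw [haddq, haddq2]
          linear_combination hx + hfx'
        have hx2k : x' ^ q ^ k = x := by
          rw [hx'def, ← pow_mul, ← pow_add, ← two_mul, mul_comm 2 k, ← hcardL]
          exact FiniteField.pow_card x
        by_cases hs : x + x' = 0
        · -- x' = -x
          have hxineg : x ^ q ^ k = -x := by
            rw [← hx'def]
            linear_combination hs
          by_cases h2 : (2 : K) = 0
          · -- characteristic 2 : x is fixed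
            have h2L : (2 : L) = 0 := by
              have : φ (2 : K) = (2 : L) := map_ofNat φ 2
              rw [← this, h2, map_zero]
            have hxfix : x ^ Fintype.card K = x := by
              rw [hcardK, hxineg]
              linear_combination -x * h2L
            obtain ⟨z, hz⟩ := mem_range_algebraMap_of_pow_card hxfix
            refine ⟨z, ?_, ?_⟩
            · intro h; rw [h, map_zero] at hz; exact hx0 hz.symm
            · apply hφinj
              rw [map_add, map_add, _root_.map_mul, _root_.map_mul, _root_.map_mul,
                map_pow, map_pow, map_zero, hz]
              exact hx
          · -- odd characteristic
            have hp2 : p ≠ 2 := by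
              intro h
              apply h2
              have := CharP.cast_eq_zero K p
              rw [h] at this
              exact_mod_cast this
            have hqodd : Odd q := by
              rw [hq]
              exact (hpp.odd_of_ne_two hp2).pow
            set yL := x ^ (q - 1) with hyLdef
            have hyLfix : yL ^ Fintype.card K = yL := by
              rw [hcardK, hyLdef, ← pow_mul, mul_comm, pow_mul, hxineg]
              exact Even.neg_pow (Nat.Odd.sub_odd hqodd odd_one) x
            obtain ⟨y, hy⟩ := mem_range_algebraMap_of_pow_card hyLfix
            have hexp2 : (q - 1) * (q + 1) + 1 = q ^ 2 := by
              obtain ⟨q', rfl⟩ : ∃ q', q = q' + 1 := ⟨q - 1, by omega⟩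
              simp only [Nat.add_sub_cancel]
              ring
            have hxq : x ^ q = x * yL := by
              rw [hyLdef, ← pow_succ']
              congr 1
              omega
            have hxq2 : x ^ q ^ 2 = x * yL ^ (q + 1) := by
              rw [hyLdef, ← pow_mul, ← pow_succ', hexp2]
            have gL : φ a2 * yL ^ (q + 1) + φ a1 * yL + φ a0 = 0 := by
              have h' : x * (φ a2 * yL ^ (q + 1) + φ a1 * yL + φ a0) = 0 := by
                have hh := hx
                rw [hxq, hxq2] at hh
                linear_combination hh
              rcases mul_eq_zero.mp h' with h | h
              · exact absurd h hx0
              · exact h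
            have hyK : a2 * y ^ (q + 1) + a1 * y + a0 = 0 := by
              apply hφinj
              rw [map_add, map_add, _root_.map_mul, _root_.map_mul, map_pow, map_zero, hy]
              exact gL
            have hxk1 : x ^ (q ^ k - 1) = -1 := by
              have h1 : x ^ (q ^ k - 1) * x = -1 * x := by
                rw [← pow_succ]
                have : q ^ k - 1 + 1 = q ^ k := by
                  have : 1 ≤ q ^ k := Nat.one_le_pow _ _ (by omega)
                  omega
                rw [this, hxineg]
                ring
              exact mul_right_cancel₀ hx0 h1
            have hyLe : yL ^ e = -1 := by
              rw [hyLdef, ← pow_mul]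
              have : (q - 1) * e = q ^ k - 1 := by
                rw [he]
                exact geom_nat hq2 k
              rw [this, hxk1]
            have hye : y ^ e = -1 := by
              apply hφinj
              rw [map_pow, map_neg, _root_.map_one, hy]
              exact hyLe
            exact core p n k q hq hq2 hqodd (by omega) hcardK h2 a0 a1 a2 ha2 e he
              hnorm' y hyK hye
        · -- trace ≠ 0 : it gives a root in K
          have haddqk : ∀ u v : L, (u + v) ^ q ^ k = u ^ q ^ k + v ^ q ^ k := by
            intro u v
            rw [hqkpow]
            exact add_pow_char_pow ..
          have hsfix : (x + x') ^ Fintype.card K = x + x' := by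
            rw [hcardK, haddqk, ← hx'def, hx2k]
            ring
          obtain ⟨z, hz⟩ := mem_range_algebraMap_of_pow_card hsfix
          refine ⟨z, ?_, ?_⟩
          · intro h
            rw [h, map_zero] at hz
            exact hs hz.symm
          · apply hφinj
            rw [map_add, map_add, _root_.map_mul, _root_.map_mul, _root_.map_mul,
              map_pow, map_pow, map_zero, hz]
            exact hfs
  -- reduce bijectivity to absence of nonzero roots
  rw [bij_iff_ker p n q hq a0 a1 a2, bij_iff_ker p n q hq (φ a0) (φ a1) (φ a2)]
  constructor
  · intro hK x hx
    by_contra hx0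
    obtain ⟨z, hz0, hz⟩ := main.mpr ⟨x, hx0, hx⟩
    exact hz0 (hK z hz)
  · intro hL x hx
    by_contra hx0
    obtain ⟨z, hz0, hz⟩ := main.mp ⟨x, hx0, hx⟩
    exact hz0 (hL z hz)
end

section
/- Let q be a prime power, F a finite field with q elements, K an extension field of F with [K:F] = 2n+1 (n ≥ 1), and let ω ∈ K \ {0}. In the projectivization ℙ(K × K) of the F-vector space K × K, the set 𝒱_ω = { [ (x^2, ω·x^{q+1}) ] : x ∈ K \ {0} } of projective points represented by the vectors (x^2, ω x^{q+1}) has cardinality (q^{2n+1} - 1)/(q - 1). -/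
open scoped LinearAlgebra.Projectivization

/-- An element of `K` fixed by `x ↦ x ^ |F|` lies in the image of `F`. -/
lemma aux_mem_range_of_pow_card (F K : Type*) [Field F] [Field K] [Fintype F] [Algebra F K]
    (t : K) (ht : t ^ Fintype.card F = t) : ∃ c : F, algebraMap F K c = t := by
  classical
  set q := Fintype.card F with hq'
  have hq : 1 < q := Fintype.one_lt_card
  set f : Polynomial K := Polynomial.X ^ q - Polynomial.X with hf
  have hf0 : f ≠ 0 := FiniteField.X_pow_card_sub_X_ne_zero K hq
  have hdeg : f.natDegree = q := FiniteField.X_pow_card_sub_X_natDegree_eq K hq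
  have hsub : (Finset.univ.image (algebraMap F K)) ⊆ f.roots.toFinset := by
    intro y hy
    simp only [Finset.mem_image] at hy
    obtain ⟨c, -, rfl⟩ := hy
    rw [Multiset.mem_toFinset, Polynomial.mem_roots hf0]
    simp only [hf, Polynomial.IsRoot, Polynomial.eval_sub, Polynomial.eval_pow,
      Polynomial.eval_X, sub_eq_zero, ← map_pow]
    exact congrArg _ (FiniteField.pow_card c)
  have hcard1 : (Finset.univ.image (algebraMap F K)).card = q := by
    rw [Finset.card_image_of_injective _ (algebraMap F K).injective, Finset.card_univ]
  have hcard2 : f.roots.toFinset.card ≤ q :=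
    calc f.roots.toFinset.card ≤ Multiset.card f.roots := Multiset.toFinset_card_le _
    _ ≤ f.natDegree := Polynomial.card_roots' f
    _ = q := hdeg
  have heq : Finset.univ.image (algebraMap F K) = f.roots.toFinset :=
    Finset.eq_of_subset_of_card_le hsub (by omega)
  have htroot : t ∈ f.roots.toFinset := by
    rw [Multiset.mem_toFinset, Polynomial.mem_roots hf0]
    simp [hf, Polynomial.IsRoot, sub_eq_zero, ht]
  rw [← heq, Finset.mem_image] at htroot
  obtain ⟨c, -, hc⟩ := htroot
  exact ⟨c, hc⟩

/-- Lemma: `|𝒱_ω| = (q^{2n+1} - 1)/(q - 1)`. -/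
theorem ncard_veronese_pointset
    (q n : ℕ) (hn : 1 ≤ n) (F K : Type*) [Field F] [Field K]
    [Fintype F] [Fintype K] [Algebra F K]
    (hF : Fintype.card F = q) (hK : Module.finrank F K = 2 * n + 1)
    (ω : K) (hω : ω ≠ 0) :
    { P : ℙ F (K × K) | ∃ x : K, ∃ hx : x ≠ 0,
        P = Projectivization.mk F (x ^ 2, ω * x ^ (q + 1))
          (by
            intro h0
            exact hx (pow_eq_zero_iff (two_ne_zero)
              |>.mp (congrArg Prod.fst h0)) ) }.ncard
      = (q ^ (2 * n + 1) - 1) / (q - 1) := by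
  classical
  have hq2 : 2 ≤ q := hF ▸ Fintype.one_lt_card
  -- the subgroup `F* ≤ K*`
  set H : Subgroup Kˣ := (Units.map (algebraMap F K).toMonoidHom).range with hH
  have hUinj : Function.Injective (Units.map (algebraMap F K).toMonoidHom) :=
    Units.map_injective (algebraMap F K).injective
  -- the basic map on units
  have hvne : ∀ x : Kˣ, ((x : K) ^ 2, ω * (x : K) ^ (q + 1)) ≠ (0 : K × K) := by
    intro x h0
    exact x.ne_zero (pow_eq_zero_iff (two_ne_zero) |>.mp (congrArg Prod.fst h0))
  set f : Kˣ → ℙ F (K × K) :=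
    fun x => Projectivization.mk F ((x : K) ^ 2, ω * (x : K) ^ (q + 1)) (hvne x) with hfdef
  -- algebraMap commutes with powers and is fixed by `q`-th power
  have hac : ∀ a : F, (algebraMap F K a) ^ q = algebraMap F K a := by
    intro a
    rw [← map_pow]
    congr 1
    rw [← hF]
    exact FiniteField.pow_card a
  -- key: `f x = f y ↔ x⁻¹ * y ∈ H`
  have hkey : ∀ x y : Kˣ, f x = f y ↔ x⁻¹ * y ∈ H := by
    intro x y
    rw [hfdef]
    simp only
    rw [Projectivization.mk_eq_mk_iff]
    constructor
    · rintro ⟨a, ha⟩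
      have h1 : (algebraMap F K (a : F)) * ((y : K) ^ 2) = (x : K) ^ 2 := by
        have h := congrArg Prod.fst ha
        simp only [Prod.smul_def, Units.smul_def, Algebra.smul_def, Prod.fst] at h
        exact h
      have h2 : (algebraMap F K (a : F)) * ((y : K) ^ (q + 1)) = (x : K) ^ (q + 1) := by
        have h := congrArg Prod.snd ha
        simp only [Prod.smul_def, Units.smul_def, Algebra.smul_def, Prod.snd] at h
        apply mul_left_cancel₀ hω
        linear_combination h
      -- let t = y / x ; then t ^ 2 = t ^ (q+1) = c⁻¹ where c = algebraMap a... work with t = x / y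
      set t : K := (x : K) / (y : K) with htdef
      have hy0 : (y : K) ≠ 0 := y.ne_zero
      have ht2 : t ^ 2 = algebraMap F K (a : F) := by
        rw [htdef, div_pow, ← h1, mul_div_assoc, div_self (pow_ne_zero _ hy0), mul_one]
      have htq : t ^ (q + 1) = algebraMap F K (a : F) := by
        rw [htdef, div_pow, ← h2, mul_div_assoc, div_self (pow_ne_zero _ hy0), mul_one]
      have ht0 : t ≠ 0 := div_ne_zero x.ne_zero hy0
      have htfix : t ^ q = t := by
        have h3 : t ^ (q + 1) = t ^ 2 := by rw [htq, ht2]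
        have h4 : t ^ (q - 1) = 1 := by
          have : t ^ (q - 1) * t ^ 2 = 1 * t ^ 2 := by
            rw [← pow_add, one_mul]
            rw [show q - 1 + 2 = q + 1 by omega, h3]
          exact mul_right_cancel₀ (pow_ne_zero _ ht0) this
        calc t ^ q = t ^ (q - 1) * t := by rw [← pow_succ]; congr 1; omega
        _ = t := by rw [h4, one_mul]
      obtain ⟨c, hc⟩ := aux_mem_range_of_pow_card F K t (by rw [hF]; exact htfix)
      have hc0 : c ≠ 0 := by
        rintro rfl; rw [map_zero] at hc; exact ht0 hc.symm
      refine ⟨(Units.mk0 c hc0)⁻¹, ?_⟩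
      have hxy : (x : K) = t * (y : K) := by
        rw [htdef, div_mul_cancel₀ _ hy0]
      apply Units.ext
      simp only [Units.coe_map, MonoidHom.coe_coe, Units.val_inv_eq_inv_val,
        Units.val_mk0, Units.val_mul, map_inv₀, hc, hxy]
      field_simp
      simp only [RingHom.toMonoidHom_eq_coe, MonoidHom.coe_coe, map_div₀,
        map_one, hc]
      exact one_div_mul_cancel ht0
    · rintro ⟨a, ha⟩
      have ha0 : algebraMap F K (a : F) ≠ 0 := by
        simpa using (Units.map (algebraMap F K).toMonoidHom a).ne_zero
      have h1 : algebraMap F K (a : F) = (x : K)⁻¹ * (y : K) := by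
        have h := congrArg (Units.val) ha
        simpa [Units.coe_map] using h
      have hxy : (x : K) = (algebraMap F K (a : F))⁻¹ * (y : K) := by
        rw [h1]
        field_simp
      have hxq : (x : K) ^ (q + 1) = (algebraMap F K (a : F))⁻¹ ^ 2 * (y : K) ^ (q + 1) := by
        rw [hxy, mul_pow]
        congr 1
        rw [inv_pow, inv_pow]
        congr 1
        rw [pow_succ, hac, sq]
      have hx2 : (x : K) ^ 2 = (algebraMap F K (a : F))⁻¹ ^ 2 * (y : K) ^ 2 := by
        rw [hxy, mul_pow]
      have hsm : ∀ z : K, ((a ^ 2)⁻¹ : Fˣ) • z = (algebraMap F K (a : F))⁻¹ ^ 2 * z := by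
        intro z
        rw [Units.smul_def, Algebra.smul_def]
        congr 1
        rw [show (((a ^ 2)⁻¹ : Fˣ) : F) = (((a : F) ^ 2)⁻¹ : F) from by push_cast; ring]
        rw [map_inv₀, map_pow, ← inv_pow]
      refine ⟨(a ^ 2)⁻¹, ?_⟩
      ext
      · show ((a ^ 2)⁻¹ : Fˣ) • ((y : K) ^ 2) = _
        rw [hsm, ← hx2]
      · show ((a ^ 2)⁻¹ : Fˣ) • (ω * (y : K) ^ (q + 1)) = _
        rw [hsm, hxq]
        ring
  -- the induced injective map from the quotient
  set Φ : Kˣ ⧸ H → ℙ F (K × K) := Quotient.lift f (by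
    intro a b hab
    exact (hkey a b).mpr (QuotientGroup.leftRel_apply.mp hab)) with hΦ
  have hΦinj : Function.Injective Φ := by
    intro a b
    induction a using Quotient.ind
    induction b using Quotient.ind
    rename_i a b
    intro hab
    have : f a = f b := hab
    exact (QuotientGroup.eq).mpr ((hkey a b).mp this)
  have hrange : { P : ℙ F (K × K) | ∃ x : K, ∃ hx : x ≠ 0,
        P = Projectivization.mk F (x ^ 2, ω * x ^ (q + 1))
          (by
            intro h0
            exact hx (pow_eq_zero_iff (two_ne_zero)
              |>.mp (congrArg Prod.fst h0)) ) } = Set.range Φ := by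
    ext P
    constructor
    · rintro ⟨x, hx, rfl⟩
      exact ⟨Quotient.mk'' (Units.mk0 x hx), rfl⟩
    · rintro ⟨a, rfl⟩
      induction a using Quotient.ind
      rename_i a
      exact ⟨(a : K), a.ne_zero, rfl⟩
  rw [hrange]
  have h1 : (Set.range Φ).ncard = Nat.card (Kˣ ⧸ H) := by
    rw [Set.ncard_eq_toFinset_card', Set.toFinset_range, Finset.card_image_of_injective _ hΦinj,
      Finset.card_univ, Nat.card_eq_fintype_card]
  rw [h1]
  -- now count
  have hcardH : Nat.card H = q - 1 := by
    rw [← Nat.card_congr (MonoidHom.ofInjective hUinj).toEquiv]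
    rw [Nat.card_eq_fintype_card, Fintype.card_units, hF]
  have hcardK : Nat.card Kˣ = q ^ (2 * n + 1) - 1 := by
    rw [Nat.card_eq_fintype_card, Fintype.card_units]
    congr 1
    rw [Module.card_eq_pow_finrank (K := F) (V := K), hF, hK]
  have hmul : Nat.card Kˣ = Nat.card (Kˣ ⧸ H) * Nat.card H :=
    Subgroup.card_eq_card_quotient_mul_card_subgroup H
  rw [hcardH, hcardK] at hmul
  rw [hmul, Nat.mul_div_cancel _ (by omega)]
end

section
/- Let q be a prime power, F a finite field with q elements, and K an extension field of F with [K:F] = 2n+1 (n ≥ 1). For all a, b ∈ K \ {0} there exists a unique ω ∈ K \ {0} such that there exist c ∈ F \ {0} and x ∈ K \ {0} with a = c·x^2 and b = c·ω·x^{q+1} (c identified with its image in K). -/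
open Polynomial Finset

private lemma mem_range_iff_pow (q : ℕ) {F K : Type*} [Field F] [Field K] [Fintype F] [Fintype K]
    [Algebra F K] (hF : Fintype.card F = q) (t : K) :
    t ∈ Set.range (algebraMap F K) ↔ t ^ q = t := by
  have hq2 : 2 ≤ q := hF ▸ Fintype.one_lt_card
  classical
  constructor
  · rintro ⟨c, rfl⟩
    rw [← map_pow]
    congr 1
    rw [← hF]
    exact FiniteField.pow_card c
  · intro ht
    have hinj : Function.Injective (algebraMap F K) := (algebraMap F K).injective
    set T : Finset K := Finset.univ.filter (fun t : K => t ^ q = t) with hT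
    set p : K[X] := X ^ q - X with hp
    have hdeg : p.natDegree = q := by
      rw [hp, natDegree_sub_eq_left_of_natDegree_lt] <;> simp <;> omega
    have hp0 : p ≠ 0 := by
      intro h
      rw [h, natDegree_zero] at hdeg
      omega
    have hsub : T ⊆ p.roots.toFinset := by
      intro s hs
      simp only [hT, Finset.mem_filter] at hs
      rw [Multiset.mem_toFinset, mem_roots hp0]
      simp [hp, IsRoot, hs.2]
    have hcardT : T.card ≤ q := by
      calc T.card ≤ p.roots.toFinset.card := Finset.card_le_card hsub
        _ ≤ Multiset.card p.roots := p.roots.toFinset_card_le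
        _ ≤ p.natDegree := p.card_roots'
        _ = q := hdeg
    have himg : (Finset.univ.image (algebraMap F K)) ⊆ T := by
      intro s hs
      simp only [Finset.mem_image] at hs
      obtain ⟨c, -, rfl⟩ := hs
      simp only [hT, Finset.mem_filter, Finset.mem_univ, true_and]
      rw [← map_pow]
      congr 1
      rw [← hF]; exact FiniteField.pow_card c
    have hcardimg : (Finset.univ.image (algebraMap F K)).card = q := by
      rw [Finset.card_image_of_injective _ hinj, Finset.card_univ, hF]
    have heq : Finset.univ.image (algebraMap F K) = T :=
      Finset.eq_of_subset_of_card_le himg (by omega)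
    have : t ∈ T := by simp [hT, ht]
    rw [← heq, Finset.mem_image] at this
    obtain ⟨c, -, hc⟩ := this
    exact ⟨c, hc⟩

/-- Lemma: the sets `𝒱_ω`, `ω ∈ K \ {0}`, partition the points of `ℙ(K × K)`
with both coordinates nonzero: for every `(a, b)` with `a, b ≠ 0` there is a
unique `ω ≠ 0` with `(a, b)` an `F`-multiple of `(x², ω x^{q+1})` for some
`x ≠ 0`. -/
theorem existsUnique_omega_partition
    (q n : ℕ) (hn : 1 ≤ n) (F K : Type*) [Field F] [Field K]
    [Fintype F] [Fintype K] [Algebra F K]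
    (hF : Fintype.card F = q) (hK : Module.finrank F K = 2 * n + 1)
    (a b : K) (ha : a ≠ 0) (hb : b ≠ 0) :
    ∃! ω : K, ω ≠ 0 ∧ ∃ c : F, c ≠ 0 ∧ ∃ x : K, x ≠ 0 ∧
      a = algebraMap F K c * x ^ 2 ∧
      b = algebraMap F K c * ω * x ^ (q + 1) := by
  have hq2 : 2 ≤ q := hF ▸ Fintype.one_lt_card
  have hcardK : Fintype.card K = q ^ (2 * n + 1) := by
    rw [Module.card_eq_pow_finrank (K := F) (V := K), hF, hK]
  set S : ℕ := ∑ i ∈ Finset.range (2 * n + 1), q ^ i with hS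
  have hgeomgen : ∀ k : ℕ, (q - 1) * (∑ i ∈ Finset.range k, q ^ i) + 1 = q ^ k := by
    intro k
    induction k with
    | zero => simp
    | succ k ih =>
      rw [Finset.sum_range_succ, Nat.mul_add, pow_succ]
      have h2 : q ^ k * q = q ^ k * (q - 1) + q ^ k := by
        have h3 : q - 1 + 1 = q := by omega
        rw [← Nat.mul_succ, Nat.succ_eq_add_one, h3]
      rw [h2, Nat.mul_comm (q - 1) (q ^ k)]
      omega
  have hgeom : (q - 1) * S + 1 = q ^ (2 * n + 1) := hgeomgen (2 * n + 1)
  have hSodd : S % 2 = 1 := by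
    have hmod : S % 2 = (∑ i ∈ Finset.range (2 * n + 1), q ^ i % 2) % 2 :=
      Finset.sum_nat_mod _ _ _
    rcases Nat.even_or_odd q with hq | hq
    · have heach : ∀ i ∈ Finset.range (2 * n + 1), q ^ i % 2 = if i = 0 then 1 else 0 := by
        intro i _
        rw [Nat.pow_mod, Nat.even_iff.mp hq]
        cases i <;> simp
      rw [Finset.sum_congr rfl heach, Finset.sum_ite_eq' (Finset.range (2 * n + 1)) 0
        (fun _ => 1)] at hmod
      simpa using hmod
    · have heach : ∀ i ∈ Finset.range (2 * n + 1), q ^ i % 2 = 1 := fun i _ =>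
        Nat.odd_iff.mp hq.pow
      rw [Finset.sum_congr rfl heach] at hmod
      simp only [Finset.sum_const, Finset.card_range, smul_eq_mul, mul_one] at hmod
      omega
  obtain ⟨m, hm⟩ : ∃ m, S = 2 * m + 1 := ⟨S / 2, by omega⟩
  have hcardm1 : (q - 1) * S = Fintype.card K - 1 := by rw [hcardK]; omega
  -- key uniqueness lemma
  have key : ∀ ω : K, (ω ≠ 0 ∧ ∃ c : F, c ≠ 0 ∧ ∃ x : K, x ≠ 0 ∧
      a = algebraMap F K c * x ^ 2 ∧ b = algebraMap F K c * ω * x ^ (q + 1)) →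
      ∀ ω' : K, (ω' ≠ 0 ∧ ∃ c : F, c ≠ 0 ∧ ∃ x : K, x ≠ 0 ∧
      a = algebraMap F K c * x ^ 2 ∧ b = algebraMap F K c * ω' * x ^ (q + 1)) → ω = ω' := by
    rintro ω ⟨hω, c, hc, x, hx, hax, hbx⟩ ω' ⟨hω', c', hc', y, hy, hay, hby⟩
    have hcK : algebraMap F K c ≠ 0 := fun h => hc ((algebraMap F K).injective (by simp [h]))
    have hcK' : algebraMap F K c' ≠ 0 := fun h => hc' ((algebraMap F K).injective (by simp [h]))
    set z : K := x * y⁻¹ with hz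
    have hz0 : z ≠ 0 := mul_ne_zero hx (inv_ne_zero hy)
    have hz2 : z ^ 2 = algebraMap F K (c' / c) := by
      rw [map_div₀]
      field_simp [hz]
      rw [hax] at hay
      have hyy : y ^ 2 * y⁻¹ ^ 2 = 1 := by rw [← mul_pow, mul_inv_cancel₀ hy, one_pow]
      linear_combination y⁻¹ ^ 2 * hay + (algebraMap F K c') * hyy
    have hz2q : (z ^ 2) ^ q = z ^ 2 := by
      rw [hz2]
      exact (mem_range_iff_pow q hF _).mp ⟨c' / c, rfl⟩
    have hzq1 : z ^ (q - 1) = 1 := by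
      have hz2q1 : z ^ (2 * (q - 1)) = 1 := by
        have h1 : z ^ (2 * q) = z ^ 2 := by rw [pow_mul]; exact hz2q
        have hsplit : z ^ (2 * q) = z ^ (2 * (q - 1)) * z ^ 2 := by
          rw [← pow_add]; congr 1; omega
        rw [hsplit] at h1
        exact mul_right_cancel₀ (pow_ne_zero 2 hz0) (h1.trans (one_mul _).symm)
      have h2q : z ^ (q - 1) * z ^ (q - 1) = 1 := by
        rw [← pow_add, ← two_mul]; exact hz2q1
      rcases mul_self_eq_one_iff.mp h2q with h | h
      · exact h
      · have hodd : Odd S := ⟨m, by omega⟩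
        have h1 : (z ^ (q - 1)) ^ S = 1 := by
          rw [← pow_mul, hcardm1]
          exact FiniteField.pow_card_sub_one_eq_one z hz0
        have hone : (-1 : K) = 1 := by rw [← hodd.neg_one_pow, ← h]; exact h1
        exact h.trans hone
    have hzq : z ^ (q + 1) = z ^ 2 := by
      have h5 : z ^ (q + 1) = z ^ (q - 1) * z ^ 2 := by rw [← pow_add]; congr 1; omega
      rw [h5, hzq1, one_mul]
    have hxy : x = z * y := by rw [hz, mul_assoc, inv_mul_cancel₀ hy, mul_one]
    have hbb : algebraMap F K c * ω * ((z * y) ^ (q + 1))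
        = algebraMap F K c' * ω' * y ^ (q + 1) := by rw [← hxy, ← hbx]; exact hby
    rw [mul_pow, hzq, hz2, map_div₀] at hbb
    have hyq : y ^ (q + 1) ≠ 0 := pow_ne_zero _ hy
    field_simp at hbb
    have hfin : algebraMap F K c * (ω * (algebraMap F K c' * y ^ (q + 1)))
        = algebraMap F K c * (ω' * (algebraMap F K c' * y ^ (q + 1))) := by
      rw [hbb]
    exact mul_right_cancel₀ (mul_ne_zero hcK' hyq)
      (by simpa [mul_assoc] using mul_left_cancel₀ hcK hfin)
  -- existence
  have haS : (a ^ S) ^ q = a ^ S := by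
    rw [← pow_mul]
    have h4 : S * q = (Fintype.card K - 1) + S := by
      rw [← hcardm1, mul_comm S q]
      have h5 := Nat.sub_mul q 1 S
      have h6 : S ≤ q * S := Nat.le_mul_of_pos_left S (by omega)
      omega
    rw [h4, pow_add, FiniteField.pow_card_sub_one_eq_one a ha, one_mul]
  obtain ⟨c, hcdef⟩ := (mem_range_iff_pow q hF (a ^ S)).mpr haS
  have hc0 : c ≠ 0 := by
    intro h
    rw [h, map_zero] at hcdef
    exact pow_ne_zero S ha hcdef.symm
  have hcK : algebraMap F K c ≠ 0 := fun h => hc0 ((algebraMap F K).injective (by simp [h]))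
  set x : K := (a ^ m)⁻¹ with hxdef
  have hx0 : x ≠ 0 := inv_ne_zero (pow_ne_zero m ha)
  have hcx : algebraMap F K c = a * (a ^ m) ^ 2 := by
    rw [hcdef, hm, pow_succ, ← pow_mul, mul_comm 2 m, mul_comm]
  have hax : a = algebraMap F K c * x ^ 2 := by
    rw [hcx, hxdef]
    field_simp
  set ω : K := b / (algebraMap F K c * x ^ (q + 1)) with hωdef
  have hxq : x ^ (q + 1) ≠ 0 := pow_ne_zero _ hx0
  have hω0 : ω ≠ 0 := div_ne_zero hb (mul_ne_zero hcK hxq)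
  have hP : ω ≠ 0 ∧ ∃ c : F, c ≠ 0 ∧ ∃ x : K, x ≠ 0 ∧
      a = algebraMap F K c * x ^ 2 ∧ b = algebraMap F K c * ω * x ^ (q + 1) :=
    ⟨hω0, c, hc0, x, hx0, hax, by rw [hωdef]; field_simp⟩
  exact ⟨ω, hP, fun ω' h' => key ω' h' ω hP⟩
end

section
/- Let q be a prime power, F a finite field with q elements, K an extension field of F with [K:F] = 2n+1 (n ≥ 1), and ω ∈ K \ {0}. Let x, y, z ∈ K \ {0} be such that none of the ratios x/y, y/z, x/z lies in the image of F in K. Then the three vectors (x^2, ω·x^{q+1}), (y^2, ω·y^{q+1}), (z^2, ω·z^{q+1}) of the F-vector space K × K are linearly independent over F. -/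
open Polynomial

/-- If `u^(q-1) = 1` in `K` where `q = |F|`, then `u` lies in the image of `F`. -/
lemma mem_range_of_pow_card_sub_one_eq_one
    {F K : Type*} [Field F] [Field K] [Fintype F] [Algebra F K]
    (u : K) (hu : u ^ (Fintype.card F - 1) = 1) :
    u ∈ Set.range (algebraMap F K) := by
  classical
  set q := Fintype.card F with hq
  have hq1 : 1 < q := Fintype.one_lt_card
  have huq : u ^ q = u := by
    have h : q - 1 + 1 = q := by omega
    calc u ^ q = u ^ (q - 1) * u := by rw [← pow_succ, h]
    _ = u := by rw [hu, one_mul]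
  by_contra hcon
  set S : Finset K := (Finset.univ : Finset F).image (algebraMap F K) with hS
  have hcardS : S.card = q := by
    rw [hS, Finset.card_image_of_injective _ (algebraMap F K).injective,
      Finset.card_univ]
  have huS : u ∉ S := by
    intro h
    obtain ⟨a, -, ha⟩ := Finset.mem_image.mp h
    exact hcon ⟨a, ha⟩
  set P : K[X] := X ^ q - X with hP
  have hpne : P ≠ 0 := FiniteField.X_pow_card_sub_X_ne_zero K hq1
  have hdeg : P.natDegree = q := FiniteField.X_pow_card_sub_X_natDegree_eq K hq1
  have hsub : insert u S ⊆ P.roots.toFinset := by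
    intro t ht
    rw [Multiset.mem_toFinset, mem_roots hpne]
    rcases Finset.mem_insert.mp ht with rfl | htS
    · simp [hP, IsRoot, huq]
    · obtain ⟨a, -, rfl⟩ := Finset.mem_image.mp htS
      have h : (algebraMap F K) a ^ q = algebraMap F K a := by
        rw [← map_pow, FiniteField.pow_card]
      simp [hP, IsRoot, h]
  have : q + 1 ≤ q := by
    calc q + 1 = (insert u S).card := by rw [Finset.card_insert_of_notMem huS, hcardS]
    _ ≤ P.roots.toFinset.card := Finset.card_le_card hsub
    _ ≤ Multiset.card P.roots := P.roots.toFinset_card_le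
    _ ≤ P.natDegree := P.card_roots'
    _ = q := hdeg
  omega

/-- Key algebraic lemma: the Vandermonde argument. -/
lemma key_lemma
    {F K : Type*} [Field F] [Field K] [Fintype F] [Algebra F K]
    (x y z : K) (hx : x ≠ 0) (hy : y ≠ 0) (hz : z ≠ 0)
    (hxy : x / y ∉ Set.range (algebraMap F K))
    (hyz : y / z ∉ Set.range (algebraMap F K))
    (hxz : x / z ∉ Set.range (algebraMap F K))
    (a b c : F)
    (eq1 : algebraMap F K a * x ^ 2 + algebraMap F K b * y ^ 2
        + algebraMap F K c * z ^ 2 = 0)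
    (eq2 : algebraMap F K a * x ^ (Fintype.card F + 1)
        + algebraMap F K b * y ^ (Fintype.card F + 1)
        + algebraMap F K c * z ^ (Fintype.card F + 1) = 0) :
    a = 0 ∧ b = 0 ∧ c = 0 := by
  set q := Fintype.card F with hq
  have hq1 : 1 < q := Fintype.one_lt_card
  set A := algebraMap F K a with hA
  set B := algebraMap F K b with hB
  set C := algebraMap F K c with hC
  -- Frobenius: get the third equation
  obtain ⟨p, hc⟩ := CharP.exists F
  haveI := hc
  obtain ⟨m, hp, hcard⟩ := FiniteField.card F p
  haveI : Fact p.Prime := ⟨hp⟩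
  haveI : CharP K p := charP_of_injective_algebraMap (algebraMap F K).injective p
  have frobA : A ^ q = A := by rw [hA, ← map_pow, FiniteField.pow_card]
  have frobB : B ^ q = B := by rw [hB, ← map_pow, FiniteField.pow_card]
  have frobC : C ^ q = C := by rw [hC, ← map_pow, FiniteField.pow_card]
  have eq3 : A * x ^ (2 * q) + B * y ^ (2 * q) + C * z ^ (2 * q) = 0 := by
    have h := congrArg (· ^ q) eq1
    rw [hq, hcard] at h
    rw [add_pow_char_pow, add_pow_char_pow] at h
    rw [← hcard, ← hq] at h
    rw [mul_pow, mul_pow, mul_pow, frobA, frobB, frobC, zero_pow (by omega : q ≠ 0),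
      ← pow_mul, ← pow_mul, ← pow_mul] at h
    calc A * x ^ (2 * q) + B * y ^ (2 * q) + C * z ^ (2 * q)
        = A * x ^ (2 * q) + B * y ^ (2 * q) + C * z ^ (2 * q) := rfl
    _ = 0 := by rw [mul_comm 2 q] at h ⊢; exact h
  -- Set up the Vandermonde structure
  set α := x ^ (q - 1) with hα
  set β := y ^ (q - 1) with hβ
  set γ := z ^ (q - 1) with hγ
  have hxe : x ^ (q + 1) = x ^ 2 * α := by rw [hα, ← pow_add]; congr 1; omega
  have hye : y ^ (q + 1) = y ^ 2 * β := by rw [hβ, ← pow_add]; congr 1; omega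
  have hze : z ^ (q + 1) = z ^ 2 * γ := by rw [hγ, ← pow_add]; congr 1; omega
  have hx2 : x ^ (2 * q) = x ^ 2 * α ^ 2 := by
    rw [hα, ← pow_mul, ← pow_add]; congr 1; omega
  have hy2 : y ^ (2 * q) = y ^ 2 * β ^ 2 := by
    rw [hβ, ← pow_mul, ← pow_add]; congr 1; omega
  have hz2 : z ^ (2 * q) = z ^ 2 * γ ^ 2 := by
    rw [hγ, ← pow_mul, ← pow_add]; congr 1; omega
  rw [hxe, hye, hze] at eq2
  rw [hx2, hy2, hz2] at eq3
  -- pairwise distinctness of α, β, γ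
  have dist : ∀ s t : K, s ≠ 0 → t ≠ 0 → s / t ∉ Set.range (algebraMap F K) →
      s ^ (q - 1) ≠ t ^ (q - 1) := by
    intro s t hs ht hst heq
    apply hst
    apply mem_range_of_pow_card_sub_one_eq_one
    rw [← hq, div_pow, heq, div_self (pow_ne_zero _ ht)]
  have hαβ : α ≠ β := dist x y hx hy hxy
  have hβγ : β ≠ γ := dist y z hy hz hyz
  have hαγ : α ≠ γ := dist x z hx hz hxz
  -- Vandermonde elimination
  have hPz : A * x ^ 2 * ((α - β) * (α - γ)) = 0 := by
    linear_combination (β * γ) * eq1 - (β + γ) * eq2 + eq3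
  have hQz : B * y ^ 2 * ((β - α) * (β - γ)) = 0 := by
    linear_combination (α * γ) * eq1 - (α + γ) * eq2 + eq3
  have hRz : C * z ^ 2 * ((γ - α) * (γ - β)) = 0 := by
    linear_combination (α * β) * eq1 - (α + β) * eq2 + eq3
  have hA0 : A = 0 := by
    rcases mul_eq_zero.mp hPz with h | h
    · rcases mul_eq_zero.mp h with h' | h'
      · exact h'
      · exact absurd h' (pow_ne_zero _ hx)
    · rcases mul_eq_zero.mp h with h' | h'
      · exact absurd (sub_eq_zero.mp h') hαβ
      · exact absurd (sub_eq_zero.mp h') hαγ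
  have hB0 : B = 0 := by
    rcases mul_eq_zero.mp hQz with h | h
    · rcases mul_eq_zero.mp h with h' | h'
      · exact h'
      · exact absurd h' (pow_ne_zero _ hy)
    · rcases mul_eq_zero.mp h with h' | h'
      · exact absurd (sub_eq_zero.mp h') (Ne.symm hαβ)
      · exact absurd (sub_eq_zero.mp h') hβγ
  have hC0 : C = 0 := by
    rcases mul_eq_zero.mp hRz with h | h
    · rcases mul_eq_zero.mp h with h' | h'
      · exact h'
      · exact absurd h' (pow_ne_zero _ hz)
    · rcases mul_eq_zero.mp h with h' | h'
      · exact absurd (sub_eq_zero.mp h') (Ne.symm hαγ)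
      · exact absurd (sub_eq_zero.mp h') (Ne.symm hβγ)
  have inj := (algebraMap F K).injective
  refine ⟨?_, ?_, ?_⟩
  · exact inj (by rw [← hA, hA0, map_zero])
  · exact inj (by rw [← hB, hB0, map_zero])
  · exact inj (by rw [← hC, hC0, map_zero])

/-- Proposition: `𝒱_ω` is a cap. If `x, y, z ∈ K \ {0}` give pairwise distinct
projective points (i.e. no ratio lies in `F`), then the three vectors
`(x², ω x^{q+1})`, `(y², ω y^{q+1})`, `(z², ω z^{q+1})` are `F`-linearly
independent. -/
theorem veronese_pointset_is_cap
    (q n : ℕ) (hn : 1 ≤ n) (F K : Type*) [Field F] [Field K]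
    [Fintype F] [Fintype K] [Algebra F K]
    (hF : Fintype.card F = q) (hK : Module.finrank F K = 2 * n + 1)
    (ω : K) (hω : ω ≠ 0)
    (x y z : K) (hx : x ≠ 0) (hy : y ≠ 0) (hz : z ≠ 0)
    (hxy : x / y ∉ Set.range (algebraMap F K))
    (hyz : y / z ∉ Set.range (algebraMap F K))
    (hxz : x / z ∉ Set.range (algebraMap F K)) :
    LinearIndependent F
      ![((x ^ 2, ω * x ^ (q + 1)) : K × K),
        (y ^ 2, ω * y ^ (q + 1)),
        (z ^ 2, ω * z ^ (q + 1))] := by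
  subst hF
  rw [Fintype.linearIndependent_iff]
  intro g hg i
  rw [Fin.sum_univ_three] at hg
  simp only [Matrix.cons_val_zero, Matrix.cons_val_one, Matrix.head_cons,
    Matrix.cons_val_two, Matrix.tail_cons, Prod.smul_mk, Prod.mk_add_mk,
    Prod.mk_eq_zero] at hg
  simp only [Algebra.smul_def] at hg
  obtain ⟨h1, h2⟩ := hg
  have eq2 : algebraMap F K (g 0) * x ^ (Fintype.card F + 1)
      + algebraMap F K (g 1) * y ^ (Fintype.card F + 1)
      + algebraMap F K (g 2) * z ^ (Fintype.card F + 1) = 0 := by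
    have h : ω * (algebraMap F K (g 0) * x ^ (Fintype.card F + 1)
        + algebraMap F K (g 1) * y ^ (Fintype.card F + 1)
        + algebraMap F K (g 2) * z ^ (Fintype.card F + 1)) = 0 := by
      linear_combination h2
    exact (mul_eq_zero.mp h).resolve_left hω
  obtain ⟨h0, h1', h2'⟩ := key_lemma x y z hx hy hz hxy hyz hxz (g 0) (g 1) (g 2) h1 eq2
  fin_cases i <;> assumption
end

section
/- Let q be an odd prime power, F a finite field with q elements, and K an extension field of F with [K:F] = 2n+1 (n ≥ 1). Let S ⊆ K × K be the set S = { (x^2, x^{q+1}) : x ∈ K \ {0} } ∪ { (x^2, -x^{q+1}) : x ∈ K \ {0} }. If u, v, w ∈ S are such that no two of u, v, w are F-proportional (i.e. none is a nonzero F-scalar multiple of another), then u, v, w are linearly independent over F. -/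
open Polynomial in
lemma frob_fix_aux {F K : Type*} [Field F] [Field K] [Fintype F] [Algebra F K]
    {q : ℕ} (hF : Fintype.card F = q) {t : K} (ht : t ^ q = t) :
    ∃ c : F, algebraMap F K c = t := by
  classical
  by_contra hcon
  push_neg at hcon
  have hq1 : 1 < q := hF ▸ Fintype.one_lt_card
  set p : K[X] := X ^ q - X with hp
  have hpne : p ≠ 0 := FiniteField.X_pow_card_sub_X_ne_zero K hq1
  have hroot : ∀ s : K, s ^ q = s → s ∈ p.roots.toFinset := by
    intro s hs
    simp only [Multiset.mem_toFinset, mem_roots hpne, IsRoot.def, hp]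
    simp [hs]
    rw [← hp]; exact hpne
  set S : Finset K := insert t (Finset.univ.image (algebraMap F K)) with hS
  have hsub : S ⊆ p.roots.toFinset := by
    intro s hs
    rw [hS, Finset.mem_insert] at hs
    rcases hs with rfl | hs
    · exact hroot _ ht
    · obtain ⟨c, -, rfl⟩ := Finset.mem_image.mp hs
      apply hroot
      rw [← map_pow, ← hF, FiniteField.pow_card]
  have hcardS : S.card = q + 1 := by
    rw [hS, Finset.card_insert_of_notMem, Finset.card_image_of_injective _
      (algebraMap F K).injective, Finset.card_univ, hF]
    intro hmem
    obtain ⟨c, -, hc⟩ := Finset.mem_image.mp hmem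
    exact hcon c hc
  have h1 := Finset.card_le_card hsub
  have h2 : (p.roots.toFinset.card : ℕ) ≤ p.natDegree :=
    le_trans (Multiset.toFinset_card_le _) (p.card_roots')
  have h3 : p.natDegree = q := FiniteField.X_pow_card_sub_X_natDegree_eq K hq1
  omega

lemma veronese_aux {F K : Type*} [Field F] [Field K] [Fintype F] [Algebra F K]
    {q : ℕ} (hF : Fintype.card F = q) (hodd : Odd q)
    (a b c : F) (hb : b ≠ 0) (hc : c ≠ 0)
    (x y z e1 e2 e3 : K) (hy : y ≠ 0) (hz : z ≠ 0)
    (he1 : e1 ^ 2 = 1) (he2 : e2 ^ 2 = 1) (he3 : e3 ^ 2 = 1)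
    (E1 : algebraMap F K a * x ^ 2 + algebraMap F K b * y ^ 2
        + algebraMap F K c * z ^ 2 = 0)
    (E2 : algebraMap F K a * (e1 * x ^ (q + 1)) + algebraMap F K b * (e2 * y ^ (q + 1))
        + algebraMap F K c * (e3 * z ^ (q + 1)) = 0) :
    ∃ s : F, s ≠ 0 ∧ ((y ^ 2, e2 * y ^ (q + 1)) : K × K)
      = s • ((z ^ 2, e3 * z ^ (q + 1)) : K × K) := by
  classical
  set a' := algebraMap F K a with ha'
  set b' := algebraMap F K b with hb'
  set c' := algebraMap F K c with hc'
  have hb0 : b' ≠ 0 := by simpa [hb'] using hb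
  have hc0 : c' ≠ 0 := by simpa [hc'] using hc
  -- characteristic facts
  set p := ringChar F with hpdef
  haveI : CharP F p := ringChar.charP F
  obtain ⟨m, hp, hcard⟩ := FiniteField.card F p
  haveI : CharP K p := charP_of_injective_algebraMap (algebraMap F K).injective p
  haveI : Fact p.Prime := ⟨hp⟩
  have hq : q = p ^ (m : ℕ) := by rw [← hF, hcard]
  have two_ne : (2 : K) ≠ 0 := by
    intro h
    have hdvd : p ∣ 2 := (CharP.cast_eq_zero_iff K p 2).mp (by exact_mod_cast h)
    have hp2 : p = 2 := (Nat.prime_dvd_prime_iff_eq hp Nat.prime_two).mp hdvd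
    have heven : 2 ∣ q := by
      rw [hq, hp2]
      exact dvd_pow_self 2 m.2.ne'
    rw [Nat.odd_iff] at hodd
    omega
  have frobK : ∀ s t : K, (s + t) ^ q = s ^ q + t ^ q := by
    intro s t
    rw [hq]
    exact add_pow_char_pow s t p ↑m
  -- Frobenius fixes scalars
  have haq : a' ^ q = a' := by rw [ha', ← map_pow, ← hF, FiniteField.pow_card]
  have hbq : b' ^ q = b' := by rw [hb', ← map_pow, ← hF, FiniteField.pow_card]
  have hcq : c' ^ q = c' := by rw [hc', ← map_pow, ← hF, FiniteField.pow_card]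
  -- power bookkeeping
  have hxq : (x ^ 2) ^ q = x ^ (2 * q) := by rw [← pow_mul, Nat.mul_comm]
  have hyq : (y ^ 2) ^ q = y ^ (2 * q) := by rw [← pow_mul, Nat.mul_comm]
  have hzq : (z ^ 2) ^ q = z ^ (2 * q) := by rw [← pow_mul, Nat.mul_comm]
  have hxp : (x ^ (q + 1)) ^ 2 = x ^ 2 * x ^ (2 * q) := by
    rw [← pow_mul, ← pow_add]; congr 1; ring
  have hyp : (y ^ (q + 1)) ^ 2 = y ^ 2 * y ^ (2 * q) := by
    rw [← pow_mul, ← pow_add]; congr 1; ring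
  have hzp : (z ^ (q + 1)) ^ 2 = z ^ 2 * z ^ (2 * q) := by
    rw [← pow_mul, ← pow_add]; congr 1; ring
  -- abbreviations
  set P := a' * x ^ 2 with hP
  set Q := b' * y ^ 2 with hQ
  set R := c' * z ^ 2 with hR
  set A := a' * (e1 * x ^ (q + 1)) with hA
  set B := b' * (e2 * y ^ (q + 1)) with hB
  set C := c' * (e3 * z ^ (q + 1)) with hC
  have h1 : P + Q + R = 0 := E1
  have h3 : A + B + C = 0 := E2
  have hPq : P ^ q = a' * x ^ (2 * q) := by rw [hP, mul_pow, haq, hxq]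
  have hQq : Q ^ q = b' * y ^ (2 * q) := by rw [hQ, mul_pow, hbq, hyq]
  have hRq : R ^ q = c' * z ^ (2 * q) := by rw [hR, mul_pow, hcq, hzq]
  have hq0 : q ≠ 0 := by rw [← hF]; exact Fintype.card_ne_zero
  have h2 : P ^ q + Q ^ q + R ^ q = 0 := by
    have := congrArg (· ^ q) h1
    simpa [frobK, zero_pow hq0] using this
  have hA2 : A ^ 2 = P * P ^ q := by
    rw [hA, hP, hPq, mul_pow, mul_pow, he1, hxp]; ring
  have hB2 : B ^ 2 = Q * Q ^ q := by
    rw [hB, hQ, hQq, mul_pow, mul_pow, he2, hyp]; ring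
  have hC2 : C ^ 2 = R * R ^ q := by
    rw [hC, hR, hRq, mul_pow, mul_pow, he3, hzp]; ring
  -- core algebraic derivation
  have h5 : 2 * (B * C) = Q * R ^ q + R * Q ^ q := by
    linear_combination hA2 - hB2 - hC2 - (A - B - C) * h3 + P * h2 - (Q ^ q + R ^ q) * h1
  have key : (Q * R ^ q - R * Q ^ q) ^ 2 = 0 := by
    linear_combination (-(2 * (B * C)) - (Q * R ^ q + R * Q ^ q)) * h5
      + 4 * C ^ 2 * hB2 + 4 * (Q * Q ^ q) * hC2
  have hQR : Q * R ^ q = R * Q ^ q :=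
    sub_eq_zero.mp (pow_eq_zero_iff (by norm_num : (2:ℕ) ≠ 0) |>.mp key)
  have hBC : B * C = Q * R ^ q := by
    apply mul_left_cancel₀ two_ne
    linear_combination h5 - hQR
  have hQ0 : Q ≠ 0 := mul_ne_zero hb0 (pow_ne_zero _ hy)
  have hR0 : R ≠ 0 := mul_ne_zero hc0 (pow_ne_zero _ hz)
  have hRq0 : R ^ q ≠ 0 := pow_ne_zero _ hR0
  have hfix : (Q / R) ^ q = Q / R := by
    rw [div_pow, div_eq_div_iff hRq0 hR0]
    linear_combination -hQR
  obtain ⟨t, ht⟩ := frob_fix_aux hF hfix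
  have ht0 : t ≠ 0 := by
    intro h
    rw [h, map_zero] at ht
    rcases div_eq_zero_iff.mp ht.symm with h' | h'
    · exact hQ0 h'
    · exact hR0 h'
  have hQRt : algebraMap F K t * R = Q := (eq_div_iff hR0).mp ht
  have he30 : e3 ≠ 0 := by intro h; rw [h] at he3; norm_num at he3
  have hC0 : C ≠ 0 :=
    mul_ne_zero hc0 (mul_ne_zero he30 (pow_ne_zero _ hz))
  have hBCt : B = algebraMap F K t * C := by
    apply mul_right_cancel₀ hC0
    rw [hBC]
    linear_combination -(algebraMap F K t) * hC2 - R ^ q * hQRt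
  have hs' : algebraMap F K (t * c / b) = algebraMap F K t * c' / b' := by
    rw [map_div₀, map_mul]
  refine ⟨t * c / b, div_ne_zero (mul_ne_zero ht0 hc) hb, ?_⟩
  have hcomp1 : y ^ 2 = (t * c / b) • (z ^ 2) := by
    rw [Algebra.smul_def, hs', div_mul_eq_mul_div, eq_comm, div_eq_iff hb0]
    linear_combination hQRt + hQ - algebraMap F K t * hR
  have hcomp2 : e2 * y ^ (q + 1) = (t * c / b) • (e3 * z ^ (q + 1)) := by
    rw [Algebra.smul_def, hs', div_mul_eq_mul_div, eq_comm, div_eq_iff hb0]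
    linear_combination -hBCt + hB - algebraMap F K t * hC
  rw [Prod.smul_mk, Prod.mk.injEq]
  exact ⟨hcomp1, hcomp2⟩

/-- Proposition: for `q` odd, `𝒱₁ ∪ 𝒱₋₁` is a cap: if `u, v, w` are vectors of
the form `(x², ±x^{q+1})`, `x ≠ 0`, no two of which are `F`-proportional, then
they are `F`-linearly independent. -/
theorem union_veronese_is_cap_odd
    (q n : ℕ) (hn : 1 ≤ n) (F K : Type*) [Field F] [Field K]
    [Fintype F] [Fintype K] [Algebra F K]
    (hF : Fintype.card F = q) (hodd : Odd q)
    (hK : Module.finrank F K = 2 * n + 1)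
    (u v w : K × K)
    (hu : ∃ x : K, x ≠ 0 ∧ (u = (x ^ 2, x ^ (q + 1)) ∨ u = (x ^ 2, -x ^ (q + 1))))
    (hv : ∃ x : K, x ≠ 0 ∧ (v = (x ^ 2, x ^ (q + 1)) ∨ v = (x ^ 2, -x ^ (q + 1))))
    (hw : ∃ x : K, x ≠ 0 ∧ (w = (x ^ 2, x ^ (q + 1)) ∨ w = (x ^ 2, -x ^ (q + 1))))
    (hprop : ∀ c : F, c ≠ 0 → u ≠ c • v ∧ u ≠ c • w ∧ v ≠ c • w) :
    LinearIndependent F ![u, v, w] := by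
  obtain ⟨x, hx, hux⟩ := hu
  obtain ⟨y, hy, hvy⟩ := hv
  obtain ⟨z, hz, hwz⟩ := hw
  obtain ⟨e1, he1, hu'⟩ : ∃ e : K, e ^ 2 = 1 ∧ u = (x ^ 2, e * x ^ (q + 1)) := by
    rcases hux with h | h
    · exact ⟨1, by norm_num, by simpa using h⟩
    · exact ⟨-1, by norm_num, by rw [h]; norm_num⟩
  obtain ⟨e2, he2, hv'⟩ : ∃ e : K, e ^ 2 = 1 ∧ v = (y ^ 2, e * y ^ (q + 1)) := by
    rcases hvy with h | h
    · exact ⟨1, by norm_num, by simpa using h⟩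
    · exact ⟨-1, by norm_num, by rw [h]; norm_num⟩
  obtain ⟨e3, he3, hw'⟩ : ∃ e : K, e ^ 2 = 1 ∧ w = (z ^ 2, e * z ^ (q + 1)) := by
    rcases hwz with h | h
    · exact ⟨1, by norm_num, by simpa using h⟩
    · exact ⟨-1, by norm_num, by rw [h]; norm_num⟩
  rw [Fintype.linearIndependent_iff]
  intro g hg
  rw [Fin.sum_univ_three] at hg
  simp only [Matrix.cons_val_zero, Matrix.cons_val_one, Matrix.head_cons,
    Matrix.cons_val_two, Matrix.tail_cons] at hg
  rw [hu', hv', hw'] at hg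
  have hg1 := congrArg Prod.fst hg
  have hg2 := congrArg Prod.snd hg
  simp only [Prod.smul_mk, Prod.fst_add, Prod.snd_add, Prod.fst_zero, Prod.snd_zero] at hg1 hg2
  simp only [Algebra.smul_def] at hg1 hg2
  have h0 : g 0 = 0 ∧ g 1 = 0 ∧ g 2 = 0 := by
    by_cases hb : g 1 = 0
    · by_cases hc : g 2 = 0
      · by_cases ha : g 0 = 0
        · exact ⟨ha, hb, hc⟩
        · exfalso
          have h : algebraMap F K (g 0) * x ^ 2 = 0 := by simpa [hb, hc] using hg1
          rcases mul_eq_zero.mp h with h' | h'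
          · exact ha ((map_eq_zero _).mp h')
          · exact hx (pow_eq_zero_iff (by norm_num : (2:ℕ) ≠ 0) |>.mp h')
      · by_cases ha : g 0 = 0
        · exfalso
          have h : algebraMap F K (g 2) * z ^ 2 = 0 := by simpa [ha, hb] using hg1
          rcases mul_eq_zero.mp h with h' | h'
          · exact hc ((map_eq_zero _).mp h')
          · exact hz (pow_eq_zero_iff (by norm_num : (2:ℕ) ≠ 0) |>.mp h')
        · exfalso
          obtain ⟨s, hs0, hs⟩ := veronese_aux hF hodd (g 1) (g 0) (g 2) ha hc
            y x z e2 e1 e3 hx hz he2 he1 he3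
            (by linear_combination hg1) (by linear_combination hg2)
          exact (hprop s hs0).2.1 (by rw [hu', hw']; exact hs)
    · by_cases hc : g 2 = 0
      · by_cases ha : g 0 = 0
        · exfalso
          have h : algebraMap F K (g 1) * y ^ 2 = 0 := by simpa [ha, hc] using hg1
          rcases mul_eq_zero.mp h with h' | h'
          · exact hb ((map_eq_zero _).mp h')
          · exact hy (pow_eq_zero_iff (by norm_num : (2:ℕ) ≠ 0) |>.mp h')
        · exfalso
          obtain ⟨s, hs0, hs⟩ := veronese_aux hF hodd (g 2) (g 0) (g 1) ha hb
            z x y e3 e1 e2 hx hy he3 he1 he2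
            (by linear_combination hg1) (by linear_combination hg2)
          exact (hprop s hs0).1 (by rw [hu', hv']; exact hs)
      · exfalso
        obtain ⟨s, hs0, hs⟩ := veronese_aux hF hodd (g 0) (g 1) (g 2) hb hc
          x y z e1 e2 e3 hy hz he1 he2 he3 hg1 hg2
        exact (hprop s hs0).2.2 (by rw [hv', hw']; exact hs)
  intro i
  fin_cases i <;> simp [h0.1, h0.2.1, h0.2.2]
end

section
/- Let q > 2 be an even prime power, F a finite field with q elements, K an extension field of F with [K:F] = 2n+1 (n ≥ 1), and let α ∈ F with α ≠ 0 and α ≠ 1. Let (a,b) ∈ K × K with (a,b) ≠ (0,0), and suppose that for all x ∈ K \ {0} and c ∈ F \ {0} one has (a,b) ≠ (c·x^2, c·x^{q+1}) and (a,b) ≠ (c·x^2, c·α·x^{q+1}). Then there exist x, y ∈ K \ {0} and c, d ∈ F \ {0} such that a = c·x^2 + d·y^2 and b = c·x^{q+1} + d·α·y^{q+1}. -/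
private lemma secant_sq_inj {K : Type*} [Field K] (h2 : (2:K) = 0) {x y : K}
    (h : x ^ 2 = y ^ 2) : x = y := by
  have h3 : (x - y) ^ 2 = 0 := by linear_combination h + (y ^ 2 - x * y) * h2
  exact sub_eq_zero.mp (pow_eq_zero_iff two_ne_zero |>.mp h3)

/-- fixed points of `z ↦ z^q` lie in the image of `F`. -/
private lemma secant_fixed {F K : Type*} [Field F] [Field K] [Fintype F] [Algebra F K]
    (q : ℕ) (hq : 1 < q) (hF : Fintype.card F = q) (z : K) (hz : z ^ q = z) :
    ∃ c : F, algebraMap F K c = z := by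
  classical
  set p : Polynomial K := Polynomial.X ^ q - Polynomial.X with hp
  have hp0 : p ≠ 0 := by
    intro h0
    have := congrArg (fun r => Polynomial.coeff r q) h0
    simp only [hp, Polynomial.coeff_sub, Polynomial.coeff_X_pow, Polynomial.coeff_X,
      Polynomial.coeff_zero, if_pos rfl, if_neg (by omega : ¬ (1 = q))] at this
    simp at this
  have hdeg : p.natDegree ≤ q := by
    refine le_trans (Polynomial.natDegree_sub_le _ _) ?_
    simp [Polynomial.natDegree_X_pow, Polynomial.natDegree_X]
    omega
  set T : Finset K := Finset.univ.image (algebraMap F K) with hT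
  have hTcard : T.card = q := by
    rw [hT, Finset.card_image_of_injective _ (algebraMap F K).injective,
      Finset.card_univ, hF]
  have hsub : T ⊆ p.roots.toFinset := by
    intro t ht
    rw [hT, Finset.mem_image] at ht
    obtain ⟨c, -, rfl⟩ := ht
    rw [Multiset.mem_toFinset, Polynomial.mem_roots hp0]
    have hcq : c ^ q = c := by rw [← hF]; exact FiniteField.pow_card c
    simp [hp, Polynomial.IsRoot, ← map_pow, hcq]
  have hcards : p.roots.toFinset.card ≤ T.card := by
    rw [hTcard]
    exact le_trans (Multiset.toFinset_card_le _) (le_trans (Polynomial.card_roots' p) hdeg)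
  have hTeq : T = p.roots.toFinset := Finset.eq_of_subset_of_card_le hsub hcards
  have hzr : z ∈ p.roots.toFinset := by
    rw [Multiset.mem_toFinset, Polynomial.mem_roots hp0]
    simp [hp, Polynomial.IsRoot, hz]
  rw [← hTeq, hT, Finset.mem_image] at hzr
  obtain ⟨c, -, hc⟩ := hzr
  exact ⟨c, hc⟩

/-- cone membership lemma -/
private lemma secant_cone {F K : Type*} [Field F] [Field K] [Fintype F] [Fintype K]
    [Algebra F K]
    (q m : ℕ) (hq : 2 < q) (hF : Fintype.card F = q)
    (hm : (q - 1) * m = Fintype.card K - 1) (hm0 : 0 < m)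
    (h2 : (2:K) = 0)
    (θ : F) (hθ : θ ≠ 0) (a b : K) (ha : a ≠ 0)
    (hb : b ^ 2 = (algebraMap F K θ) ^ 2 * a ^ (q + 1)) :
    ∃ x : K, x ≠ 0 ∧ ∃ c : F, c ≠ 0 ∧ a = algebraMap F K c * x ^ 2 ∧
      b = algebraMap F K c * algebraMap F K θ * x ^ (q + 1):= by
  classical
  have hΘ : algebraMap F K θ ≠ 0 := by
    simpa using (map_ne_zero (algebraMap F K)).mpr hθ
  have hbne : b ≠ 0 := by
    intro h0
    rw [h0] at hb
    have hz0 : (algebraMap F K θ) ^ 2 * a ^ (q + 1) = 0 := by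
      rw [← hb, zero_pow two_ne_zero]
    rcases mul_eq_zero.mp hz0 with h | h
    · exact hΘ (pow_eq_zero_iff two_ne_zero |>.mp h)
    · exact ha (pow_eq_zero_iff (by omega) |>.mp h)
  set t : K := b / (algebraMap F K θ * a) with htdef
  have htne : t ≠ 0 := div_ne_zero hbne (mul_ne_zero hΘ ha)
  have hqsplit : q + 1 = (q - 1) + 2 := by omega
  have ht2 : t ^ 2 = a ^ (q - 1) := by
    rw [htdef, div_pow, hb, mul_pow, hqsplit, pow_add]
    field_simp
  have htm : t ^ m = 1 := by
    apply secant_sq_inj h2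
    rw [one_pow, ← pow_mul, mul_comm m 2, pow_mul, ht2, ← pow_mul, hm]
    exact FiniteField.pow_card_sub_one_eq_one a ha
  -- cyclic group argument
  obtain ⟨g, hg⟩ := IsCyclic.exists_generator (α := Kˣ)
  have horder : orderOf g = Fintype.card K - 1 := by
    rw [orderOf_eq_card_of_forall_mem_zpowers hg, ← Nat.card_eq_fintype_card,
      Nat.card_units, Nat.card_eq_fintype_card]
  set tu : Kˣ := Units.mk0 t htne with htu
  obtain ⟨i, hi⟩ := mem_powers_iff_mem_zpowers.mpr (hg tu)
  have hi' : g ^ i = tu := hi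
  have htum : tu ^ m = 1 := by
    ext
    simpa [htu] using htm
  have h1 : g ^ (i * m) = 1 := by rw [pow_mul, hi', htum]
  have hdvd : (q - 1) * m ∣ i * m := by
    rw [hm, ← horder]; exact orderOf_dvd_of_pow_eq_one h1
  obtain ⟨j, hj⟩ := (Nat.mul_dvd_mul_iff_right hm0).mp hdvd
  set x : K := ((g ^ j : Kˣ) : K) with hxdef
  have hxne : x ≠ 0 := Units.ne_zero _
  have hx : x ^ (q - 1) = t := by
    have hu : (g ^ j) ^ (q - 1) = tu := by rw [← pow_mul, mul_comm, ← hj, hi']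
    rw [hxdef, ← Units.val_pow_eq_pow_val, hu, htu, Units.val_mk0]
  have hx2 : x ^ 2 ≠ 0 := pow_ne_zero _ hxne
  set c' : K := a / x ^ 2 with hc'def
  have haq1 : a ^ (q - 1) ≠ 0 := pow_ne_zero _ ha
  have hc'q : c' ^ q = c' := by
    have h1 : c' ^ (q - 1) = 1 := by
      rw [hc'def, div_pow, ← pow_mul, mul_comm 2 (q-1), pow_mul, hx, ht2]
      exact div_self haq1
    have h2' : c' ^ q = c' ^ (q - 1) * c' := by
      rw [← pow_succ]; congr 1; omega
    rw [h2', h1, one_mul]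
  obtain ⟨c, hc⟩ := secant_fixed q (by omega) hF c' hc'q
  have hc'ne : c' ≠ 0 := div_ne_zero ha hx2
  have hcne : c ≠ 0 := by
    rintro rfl; rw [map_zero] at hc; exact hc'ne hc.symm
  have hax : a = algebraMap F K c * x ^ 2 := by
    rw [hc, hc'def, div_mul_cancel₀ _ hx2]
  refine ⟨x, hxne, c, hcne, hax, ?_⟩
  have hbt : b = algebraMap F K θ * a * t := by
    rw [htdef, mul_div_cancel₀ _ (mul_ne_zero hΘ ha)]
  rw [hbt, hax, ← hx, show (q:ℕ) + 1 = 2 + (q - 1) by omega, pow_add]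
  ring

private lemma secant_key {K : Type*} [Field K] (a b w W Aq A G : K)
    (h2 : (2:K) = 0)
    (hR1 : G * (1 + A ^ 2) = A ^ 2)
    (hR2 : W * w * (1 + A ^ 2) ^ 2 = A ^ 2 * a * Aq + (1 + A ^ 2) * b ^ 2) :
    (1 + A ^ 2) ^ 3 * (b ^ 2 + (W + G * Aq) * (w + G * a)) =
      (1 + A ^ 2) ^ 3 * (A ^ 2 * ((Aq + (W + G * Aq)) * (a + (w + G * a)))) := by
  linear_combination
    (w * Aq * (1 + A ^ 2 - A ^ 4 - A ^ 6)
      + a * Aq * (G - A ^ 2 + A ^ 2 * G - 4 * A ^ 4 - A ^ 4 * G - 3 * A ^ 6 - A ^ 6 * G)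
      + a * W * (1 + A ^ 2 - A ^ 4 - A ^ 6)) * hR1
    + (1 - A ^ 4) * hR2
    + (-(w * Aq * A ^ 4) - 2 * w * Aq * A ^ 6 - w * Aq * A ^ 8 + b ^ 2 + 2 * b ^ 2 * A ^ 2
      + b ^ 2 * A ^ 4 - 2 * a * Aq * A ^ 4 - 4 * a * Aq * A ^ 6 - 2 * a * Aq * A ^ 8
      - a * W * A ^ 4 - 2 * a * W * A ^ 6 - a * W * A ^ 8) * h2

/-- Theorem (completeness, even case): for `q > 2` even and `α ∈ F \ {0, 1}`,
every point of `ℙ(K × K)` outside `𝒱₁ ∪ 𝒱_α` lies on a line joining a point of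
`𝒱₁` and a point of `𝒱_α`. -/
theorem point_on_secant_even
    (q n : ℕ) (hn : 1 ≤ n) (F K : Type*) [Field F] [Field K]
    [Fintype F] [Fintype K] [Algebra F K]
    (hF : Fintype.card F = q) (heven : Even q) (hq2 : 2 < q)
    (hK : Module.finrank F K = 2 * n + 1)
    (α : F) (hα0 : α ≠ 0) (hα1 : α ≠ 1)
    (a b : K) (hab : (a, b) ≠ (0, 0))
    (h : ∀ x : K, x ≠ 0 → ∀ c : F, c ≠ 0 →
      (a, b) ≠ (algebraMap F K c * x ^ 2, algebraMap F K c * x ^ (q + 1)) ∧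
      (a, b) ≠ (algebraMap F K c * x ^ 2,
        algebraMap F K c * algebraMap F K α * x ^ (q + 1))) :
    ∃ x y : K, x ≠ 0 ∧ y ≠ 0 ∧ ∃ c d : F, c ≠ 0 ∧ d ≠ 0 ∧
      a = algebraMap F K c * x ^ 2 + algebraMap F K d * y ^ 2 ∧
      b = algebraMap F K c * x ^ (q + 1) +
        algebraMap F K d * algebraMap F K α * y ^ (q + 1) := by
  classical
  -- characteristic 2
  obtain ⟨k, hpk, hcard⟩ := FiniteField.card F (ringChar F)
  have hp2 : ringChar F = 2 := by
    have hdvd : (2:ℕ) ∣ ringChar F ^ (k:ℕ) := by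
      rw [← hcard, hF]; exact heven.two_dvd
    exact ((Nat.prime_dvd_prime_iff_eq Nat.prime_two hpk).mp
      (Nat.Prime.dvd_of_dvd_pow Nat.prime_two hdvd)).symm
  haveI hF2 : CharP F 2 := hp2 ▸ ringChar.charP F
  haveI hK2 : CharP K 2 := charP_of_injective_algebraMap (algebraMap F K).injective 2
  haveI : Fact (Nat.Prime 2) := ⟨Nat.prime_two⟩
  have h2K : (2:K) = 0 := by exact_mod_cast CharP.cast_eq_zero K 2
  have h2F : (2:F) = 0 := by exact_mod_cast CharP.cast_eq_zero F 2
  have hqk : q = 2 ^ (k:ℕ) := by rw [← hF, hcard, hp2]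
  -- Frobenius-type facts
  have frobq : ∀ x y : K, (x + y) ^ q = x ^ q + y ^ q := by
    intro x y; rw [hqk]; exact add_pow_char_pow x y 2 (k:ℕ)
  have Fq : ∀ c : F, c ^ q = c := fun c => by rw [← hF]; exact FiniteField.pow_card c
  have FqK : ∀ c : F, (algebraMap F K c) ^ q = algebraMap F K c := fun c => by
    rw [← map_pow, Fq]
  -- cardinalities
  have hQcard : Fintype.card K = q ^ (2 * n + 1) := by
    rw [← hF, ← hK]; exact Module.card_eq_pow_finrank
  set Q : ℕ := q ^ (2 * n + 1) with hQdef
  have hqQ : q ≤ Q := Nat.le_self_pow (by omega) q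
  have hQgt : 2 < Q := lt_of_lt_of_le hq2 hqQ
  have hdvdq1 : q - 1 ∣ Q - 1 := by
    simpa using Nat.sub_dvd_pow_sub_pow q 1 (2 * n + 1)
  set m : ℕ := (Q - 1) / (q - 1) with hmdef
  have hm : (q - 1) * m = Q - 1 := Nat.mul_div_cancel' hdvdq1
  have hm0 : 0 < m := Nat.div_pos (by omega) (by omega)
  -- the cone lemma, instantiated
  have cone : ∀ θ : F, θ ≠ 0 → ∀ a' b' : K, a' ≠ 0 →
      b' ^ 2 = (algebraMap F K θ) ^ 2 * a' ^ (q + 1) →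
      ∃ x : K, x ≠ 0 ∧ ∃ c : F, c ≠ 0 ∧ a' = algebraMap F K c * x ^ 2 ∧
        b' = algebraMap F K c * algebraMap F K θ * x ^ (q + 1) := by
    intro θ hθ a' b' ha' hb'
    exact secant_cone q m hq2 hF (by rw [hQcard]; exact hm) hm0 h2K θ hθ a' b' ha' hb'
  have notCone1 : ¬ (a ≠ 0 ∧ b ^ 2 = a ^ (q + 1)) := by
    rintro ⟨ha, hb⟩
    obtain ⟨x, hx, c, hc, h1, h2'⟩ := cone 1 one_ne_zero a b ha (by simpa using hb)
    exact (h x hx c hc).1 (by rw [Prod.mk.injEq]; exact ⟨h1, by simpa using h2'⟩)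
  have notConeA : ¬ (a ≠ 0 ∧ b ^ 2 = (algebraMap F K α) ^ 2 * a ^ (q + 1)) := by
    rintro ⟨ha, hb⟩
    obtain ⟨x, hx, c, hc, h1, h2'⟩ := cone α hα0 a b ha hb
    exact (h x hx c hc).2 (by rw [Prod.mk.injEq]; exact ⟨h1, h2'⟩)
  -- basic elements
  set A : K := algebraMap F K α with hAdef
  have hSF : (1:F) + α ^ 2 ≠ 0 := by
    intro h0
    have hsq : (α - 1) ^ 2 = 0 := by linear_combination h0 + (-α) * h2F
    exact hα1 (sub_eq_zero.mp (pow_eq_zero_iff two_ne_zero |>.mp hsq))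
  have hS : (1:K) + A ^ 2 ≠ 0 := by
    have : (1:K) + A ^ 2 = algebraMap F K (1 + α ^ 2) := by
      rw [map_add, map_one, map_pow, hAdef]
    rw [this]
    exact (map_ne_zero (algebraMap F K)).mpr hSF
  set γ : F := α ^ 2 / (1 + α ^ 2) with hγdef
  set Γ : K := algebraMap F K γ with hΓdef
  have hR1 : Γ * (1 + A ^ 2) = A ^ 2 := by
    have hf : γ * (1 + α ^ 2) = α ^ 2 := div_mul_cancel₀ _ hSF
    have := congrArg (algebraMap F K) hf
    rw [map_mul, map_add, map_one, map_pow] at this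
    rw [hΓdef, hAdef]
    exact this
  -- coprimality and surjectivity of (q+1)-st power
  have hoddn : Odd (2 * n + 1) := ⟨n, by ring⟩
  have hdvdQ1 : q + 1 ∣ Q + 1 := by
    simpa using hoddn.nat_add_dvd_pow_add_pow q 1
  have hcop : Nat.Coprime (q + 1) (Q - 1) := by
    have hd2 : Nat.gcd (q + 1) (Q - 1) ∣ 2 := by
      have d1 : Nat.gcd (q + 1) (Q - 1) ∣ Q - 1 := Nat.gcd_dvd_right _ _
      have d2 : Nat.gcd (q + 1) (Q - 1) ∣ Q + 1 := dvd_trans (Nat.gcd_dvd_left _ _) hdvdQ1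
      have := Nat.dvd_sub d2 d1
      simpa [show Q + 1 - (Q - 1) = 2 by omega] using this
    have hodd' : ¬ (2 ∣ (q + 1)) := by
      obtain ⟨r, hr⟩ := heven; omega
    rcases (Nat.dvd_prime Nat.prime_two).mp hd2 with h' | h'
    · exact h'
    · exact absurd (h' ▸ Nat.gcd_dvd_left (q+1) (Q-1)) hodd'
  have hsurj : ∀ ε : K, ∃ w : K, w ^ (q + 1) = ε := by
    intro ε
    rcases eq_or_ne ε 0 with rfl | hε
    · exact ⟨0, by rw [zero_pow]; omega⟩
    · have hcop' : (Nat.card Kˣ).Coprime (q + 1) := by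
        rw [Nat.card_units, Nat.card_eq_fintype_card, hQcard]
        exact hcop.symm
      obtain ⟨wu, hwu⟩ := (powCoprime hcop').surjective (Units.mk0 ε hε)
      refine ⟨(wu : K), ?_⟩
      have := congrArg Units.val hwu
      simpa [powCoprime] using this
  -- choose w
  obtain ⟨w, hw⟩ := hsurj ((A ^ 2 * a * a ^ q + (1 + A ^ 2) * b ^ 2) / (1 + A ^ 2) ^ 2)
  have hw' : w ^ q * w * (1 + A ^ 2) ^ 2 = A ^ 2 * a * a ^ q + (1 + A ^ 2) * b ^ 2 := by
    have h' : w ^ (q + 1) * (1 + A ^ 2) ^ 2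
        = A ^ 2 * a * a ^ q + (1 + A ^ 2) * b ^ 2 := by
      rw [hw, div_mul_cancel₀]
      exact pow_ne_zero 2 hS
    rw [← h', pow_succ w q]
  have hE0 : b ^ 2 + (w ^ q + Γ * a ^ q) * (w + Γ * a)
      = A ^ 2 * ((a ^ q + (w ^ q + Γ * a ^ q)) * (a + (w + Γ * a))) :=
    mul_left_cancel₀ (pow_ne_zero 3 hS) (secant_key a b w (w ^ q) (a ^ q) A Γ h2K hR1 hw')
  set u : K := w + Γ * a with hudef
  have huq : u ^ q = w ^ q + Γ * a ^ q := by
    rw [hudef, frobq w (Γ * a), mul_pow, hΓdef, ← map_pow, Fq]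
  have hE : b ^ 2 + u ^ (q + 1) = A ^ 2 * (a + u) ^ (q + 1) := by
    rw [pow_succ u q, pow_succ (a + u) q, frobq a u, huq]
    exact hE0
  -- u ≠ 0
  have hu0 : u ≠ 0 := by
    intro h0
    rw [hudef] at h0
    have hwz : w = -(Γ * a) := eq_neg_of_add_eq_zero_left h0
    have hWz : w ^ q = Γ * a ^ q := by
      rw [hwz, Even.neg_pow heven, mul_pow, hΓdef, ← map_pow, Fq]
    have hw2 := hw'
    rw [hWz, hwz] at hw2
    have hb2 : b ^ 2 = A ^ 2 * (a * a ^ q) := by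
      apply mul_left_cancel₀ hS
      linear_combination (-1) * hw2 + (-(a * a ^ q * (A ^ 2 + Γ * (1 + A ^ 2)))) * hR1
        + (-(a * a ^ q * (A ^ 4 + A ^ 2))) * h2K
    rcases eq_or_ne a 0 with rfl | ha
    · have hb0 : b = 0 := by
        have : b ^ 2 = 0 := by simpa using hb2
        exact pow_eq_zero_iff two_ne_zero |>.mp this
      exact hab (by simp [hb0])
    · exact notConeA ⟨ha, by rw [hb2, pow_succ]; ring⟩
  -- a + u ≠ 0
  have hua : a + u ≠ 0 := by
    intro h0
    rw [hudef] at h0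
    have hwz : w = -((1 + Γ) * a) := by linear_combination h0
    have hWz : w ^ q = (1 + Γ) * a ^ q := by
      rw [hwz, Even.neg_pow heven, mul_pow]
      congr 1
      rw [show (1:K) + Γ = algebraMap F K (1 + γ) by rw [map_add, map_one, hΓdef]]
      exact FqK _
    have hw2 := hw'
    rw [hWz, hwz] at hw2
    have hb2 : b ^ 2 = a * a ^ q := by
      apply mul_left_cancel₀ hS
      linear_combination (-1) * hw2 + (-(a * a ^ q * (2 + 3 * A ^ 2 + Γ * (1 + A ^ 2)))) * hR1
        + (-(a * a ^ q * (1 + 3 * A ^ 2 + 2 * A ^ 4))) * h2K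
    rcases eq_or_ne a 0 with rfl | ha
    · exact hu0 (by simpa [hudef] using h0)
    · exact notCone1 ⟨ha, by rw [hb2, pow_succ]; ring⟩
  -- square root v of u^(q+1)
  have hsqinj : Function.Injective (fun z : K => z ^ 2) := fun x y hxy =>
    secant_sq_inj h2K hxy
  obtain ⟨v, hv⟩ := (Finite.injective_iff_surjective.mp hsqinj) (u ^ (q + 1))
  have hv' : v ^ 2 = u ^ (q + 1) := hv
  -- decompose the two points
  obtain ⟨x, hx, c, hc, hux, hvx⟩ := cone 1 one_ne_zero u v hu0 (by
    rw [map_one, one_pow, one_mul]; exact hv')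
  have hvx' : v = algebraMap F K c * x ^ (q + 1) := by simpa using hvx
  have hb2sq : (b + v) ^ 2 = (algebraMap F K α) ^ 2 * (a + u) ^ (q + 1) := by
    rw [add_pow_char, hv', ← hAdef]
    exact hE
  obtain ⟨y, hy, d, hd, hay, hby⟩ := cone α hα0 (a + u) (b + v) hua hb2sq
  refine ⟨x, y, hx, hy, c, d, hc, hd, ?_, ?_⟩
  · linear_combination hux + hay + (-u) * h2K
  · linear_combination hvx' + hby + (-v) * h2K
end

section
/- Let q be an odd prime power, F a finite field with q elements, and K an extension field of F with [K:F] = 3. For a_0, a_1 ∈ K let M(a_0, a_1) be the 3×3 symmetric matrix over K given by M(a_0,a_1) = [[a_0, a_1, a_1^{q^2}], [a_1, a_0^q, a_1^q], [a_1^{q^2}, a_1^q, a_0^{q^2}]]. If the matrix M(a_0, a_1) has rank at most 2 and the matrix M(a_0, -a_1) has rank at most 2, then a_0 = 0 and a_1 = 0. -/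
/-- Theorem: for `q` odd, the chordal varieties `𝒮₁` and `𝒮₋₁` are disjoint:
if both `M(a₀, a₁)` and `M(a₀, -a₁)` have rank at most `2`, then
`a₀ = a₁ = 0`. -/
theorem chordal_varieties_disjoint_odd
    (q : ℕ) (F K : Type*) [Field F] [Field K]
    [Fintype F] [Fintype K] [Algebra F K]
    (hF : Fintype.card F = q) (hodd : Odd q)
    (hK : Module.finrank F K = 3)
    (a0 a1 : K)
    (h1 : (!![a0, a1, a1 ^ q ^ 2;
              a1, a0 ^ q, a1 ^ q;
              a1 ^ q ^ 2, a1 ^ q, a0 ^ q ^ 2] : Matrix (Fin 3) (Fin 3) K).rank ≤ 2)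
    (h2 : (!![a0, -a1, (-a1) ^ q ^ 2;
              -a1, a0 ^ q, (-a1) ^ q;
              (-a1) ^ q ^ 2, (-a1) ^ q, a0 ^ q ^ 2] : Matrix (Fin 3) (Fin 3) K).rank ≤ 2) :
    a0 = 0 ∧ a1 = 0 := by
  -- determinants vanish
  have det1 : (!![a0, a1, a1 ^ q ^ 2;
              a1, a0 ^ q, a1 ^ q;
              a1 ^ q ^ 2, a1 ^ q, a0 ^ q ^ 2] : Matrix (Fin 3) (Fin 3) K).det = 0 := by
    by_contra hd
    have := Matrix.rank_of_isUnit _ ((Matrix.isUnit_iff_isUnit_det _).2 (isUnit_iff_ne_zero.2 hd))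
    rw [this] at h1
    simp at h1
  have det2 : (!![a0, -a1, (-a1) ^ q ^ 2;
              -a1, a0 ^ q, (-a1) ^ q;
              (-a1) ^ q ^ 2, (-a1) ^ q, a0 ^ q ^ 2] : Matrix (Fin 3) (Fin 3) K).det = 0 := by
    by_contra hd
    have := Matrix.rank_of_isUnit _ ((Matrix.isUnit_iff_isUnit_det _).2 (isUnit_iff_ne_zero.2 hd))
    rw [this] at h2
    simp at h2
  have hq0 : q ≠ 0 := by rcases hodd with ⟨k, hk⟩; omega
  have hq20 : q ^ 2 ≠ 0 := pow_ne_zero _ hq0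
  simp [Matrix.det_fin_three] at det1 det2
  rw [hodd.neg_pow, (hodd.pow (n := 2)).neg_pow] at det2
  -- char ≠ 2
  have h2F : (2 : F) ≠ 0 := by
    intro h
    have hd : ringChar F ∣ 2 := (ringChar.spec F 2).1 (by push_cast; exact h)
    haveI : CharP F (ringChar F) := ringChar.charP F
    have hp : (ringChar F).Prime := CharP.char_is_prime F (ringChar F)
    have h2 : ringChar F = 2 := (Nat.prime_dvd_prime_iff_eq hp Nat.prime_two).1 hd
    obtain ⟨n, -, hc⟩ := FiniteField.card F (ringChar F)
    rw [h2] at hc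
    have : Even q := by
      rw [← hF, hc]
      exact (Nat.even_pow).2 ⟨even_two, n.2.ne'⟩
    exact (Nat.not_even_iff_odd.2 hodd) this
  have h2K : (2 : K) ≠ 0 := by
    intro h
    apply h2F
    have := RingHom.injective (algebraMap F K)
    apply this
    rw [map_ofNat, map_zero, h]
  have h4K : (4 : K) ≠ 0 := by
    intro h
    apply h2K
    have : (2 : K) * 2 = 0 := by rw [← h]; norm_num
    rcases mul_eq_zero.1 this with h | h <;> exact h
  have key : (4 : K) * (a1 * a1 ^ q * a1 ^ q ^ 2) = 0 := by
    linear_combination det1 - det2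
  have ha1 : a1 = 0 := by
    rcases mul_eq_zero.1 key with h | h
    · exact absurd h h4K
    rcases mul_eq_zero.1 h with h | h
    · rcases mul_eq_zero.1 h with h | h
      · exact h
      · exact pow_eq_zero_iff hq0 |>.1 h
    · exact pow_eq_zero_iff hq20 |>.1 h
  subst ha1
  refine ⟨?_, rfl⟩
  simp only [zero_pow hq0, zero_pow hq20] at det1
  have : a0 * (a0 ^ q * a0 ^ q ^ 2) = 0 := by linear_combination det1
  rcases mul_eq_zero.1 this with h | h
  · exact h
  rcases mul_eq_zero.1 h with h | h
  · exact pow_eq_zero_iff hq0 |>.1 h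
  · exact pow_eq_zero_iff hq20 |>.1 h
end

section
/- Let q > 2 be an even prime power, F a finite field with q elements, K an extension field of F with [K:F] = 3, and let α ∈ F with α ≠ 0 and α ≠ 1 (identified with its image in K). For a_0, a_1 ∈ K let M(a_0, a_1) be the 3×3 symmetric matrix over K given by M(a_0,a_1) = [[a_0, a_1, a_1^{q^2}], [a_1, a_0^q, a_1^q], [a_1^{q^2}, a_1^q, a_0^{q^2}]]. If the matrix M(a_0, a_1) has rank at most 2 and the matrix M(a_0, α^{-1}·a_1) has rank at most 2, then a_0 = 0. -/
/-- Theorem: for `q > 2` even and `α ∈ F \ {0, 1}`, the chordal varieties `𝒮₁`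
and `𝒮_α` meet only in the nuclear plane: if both `M(a₀, a₁)` and
`M(a₀, α⁻¹ a₁)` have rank at most `2`, then `a₀ = 0`. -/
theorem chordal_varieties_meet_in_nuclear_plane_even
    (q : ℕ) (F K : Type*) [Field F] [Field K]
    [Fintype F] [Fintype K] [Algebra F K]
    (hF : Fintype.card F = q) (heven : Even q) (hq2 : 2 < q)
    (hK : Module.finrank F K = 3)
    (α : F) (hα0 : α ≠ 0) (hα1 : α ≠ 1)
    (a0 a1 : K)
    (h1 : (!![a0, a1, a1 ^ q ^ 2;
              a1, a0 ^ q, a1 ^ q;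
              a1 ^ q ^ 2, a1 ^ q, a0 ^ q ^ 2] : Matrix (Fin 3) (Fin 3) K).rank ≤ 2)
    (h2 : (!![a0, (algebraMap F K α)⁻¹ * a1, ((algebraMap F K α)⁻¹ * a1) ^ q ^ 2;
              (algebraMap F K α)⁻¹ * a1, a0 ^ q, ((algebraMap F K α)⁻¹ * a1) ^ q;
              ((algebraMap F K α)⁻¹ * a1) ^ q ^ 2, ((algebraMap F K α)⁻¹ * a1) ^ q,
                a0 ^ q ^ 2] : Matrix (Fin 3) (Fin 3) K).rank ≤ 2) :
    a0 = 0 := by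
  -- characteristic 2
  haveI : CharP F (ringChar F) := ringChar.charP F
  obtain ⟨n, hp, hcard⟩ := FiniteField.card F (ringChar F)
  have hchar : ringChar F = 2 := by
    rcases heven with ⟨k, hk⟩
    have h2dvd : 2 ∣ ringChar F ^ (n : ℕ) := by
      rw [← hcard, hF, hk]; exact ⟨k, by ring⟩
    have := (Nat.Prime.dvd_of_dvd_pow Nat.prime_two h2dvd)
    exact ((Nat.prime_dvd_prime_iff_eq Nat.prime_two hp).mp this).symm
  haveI : CharP F 2 := hchar ▸ ringChar.charP F
  haveI : CharP K 2 := charP_of_injective_algebraMap (algebraMap F K).injective 2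
  have h2K : (2 : K) = 0 := CharP.cast_eq_zero K 2
  -- determinants vanish
  have hdet : ∀ M : Matrix (Fin 3) (Fin 3) K, M.rank ≤ 2 → M.det = 0 := by
    intro M hM
    by_contra h
    have : M.rank = 3 := by
      rw [M.rank_of_isUnit ((Matrix.isUnit_iff_isUnit_det M).mpr (isUnit_iff_ne_zero.mpr h))]
      simp
    omega
  have hd1 := hdet _ h1
  have hd2 := hdet _ h2
  simp [Matrix.det_fin_three] at hd1 hd2
  set β : K := (algebraMap F K α)⁻¹ with hβdef
  have hmapq : (algebraMap F K α) ^ q = algebraMap F K α := by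
    rw [← map_pow, ← hF, FiniteField.pow_card]
  have hβq : β ^ q = β := by rw [hβdef, inv_pow, hmapq]
  have hβq2 : β ^ q ^ 2 = β := by
    rw [pow_two, pow_mul, hβq, hβq]
  rw [mul_pow, mul_pow, hβq, hβq2] at hd2
  have hβ1 : β ≠ 1 := by
    intro h
    apply hα1
    have h' : algebraMap F K α = 1 := inv_eq_one.mp h
    exact (algebraMap F K).injective (by rw [h', map_one])
  have hβsq : β ^ 2 - 1 ≠ 0 := by
    intro h
    have hsq : (β - 1) ^ 2 = 0 := by linear_combination h - (β - 1) * h2K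
    exact hβ1 (sub_eq_zero.mp (sq_eq_zero_iff.mp hsq))
  have hN : (β ^ 2 - 1) * (a0 * a0 ^ q * a0 ^ q ^ 2) = 0 := by
    linear_combination (β ^ 2) * hd1 - hd2 -
      (β ^ 2 * (1 - β) * (a1 * a1 ^ q * a1 ^ q ^ 2)) * h2K
  have hprod : a0 * a0 ^ q * a0 ^ q ^ 2 = 0 :=
    (mul_eq_zero.mp hN).resolve_left hβsq
  by_contra ha0
  exact mul_ne_zero (mul_ne_zero ha0 (pow_ne_zero _ ha0)) (pow_ne_zero _ ha0) hprod
end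

section
/- Let q be an odd prime power, F a finite field with q elements, and K an extension field of F with [K:F] = 2n+1 (n ≥ 1). Let ω ∈ K be such that ω^2 - 1 is not a square in K. Then the map y ↦ y^{q^2} + (ω^q + ω·(ω^2-1)^{(q-1)/2})·y^q + (ω^2-1)^{(q-1)/2}·y has a root y ∈ K with y ≠ 0; equivalently, this F-linear map on K is not injective. -/
open Polynomial

/-- In a field extension of a finite field `K`, any element fixed by `x ↦ x ^ |K|`
lies in the image of `K`. -/
lemma mem_range_of_pow_card_eq {K L : Type*} [Field K] [Fintype K] [Field L]
    [Algebra K L] [DecidableEq L] (x : L) (hx : x ^ Fintype.card K = x) :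
    ∃ s : K, algebraMap K L s = x := by
  by_contra hcon
  push_neg at hcon
  set Q := Fintype.card K with hQ
  have hQ2 : 2 ≤ Q := Fintype.one_lt_card
  set f : L[X] := X ^ Q - X with hf
  have hdeg : f.natDegree = Q := by
    have h1 : (X : L[X]).degree < (X ^ Q : L[X]).degree := by
      rw [degree_X_pow, degree_X]
      exact_mod_cast hQ2.trans_lt' one_lt_two
    have := degree_sub_eq_left_of_degree_lt h1
    rw [degree_X_pow] at this
    have : f.degree = (Q : WithBot ℕ) := this
    exact natDegree_eq_of_degree_eq_some this
  have hfne : f ≠ 0 := by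
    intro h
    rw [h, natDegree_zero] at hdeg
    omega
  set S : Finset L := Finset.univ.image (algebraMap K L) with hS
  have hcardS : S.card = Q := by
    rw [hS, Finset.card_image_of_injective _ (algebraMap K L).injective,
      Finset.card_univ]
  have hxS : x ∉ S := by
    intro hmem
    rw [hS, Finset.mem_image] at hmem
    obtain ⟨s, _, hs⟩ := hmem
    exact hcon s hs
  have hsub : insert x S ⊆ f.roots.toFinset := by
    intro z hz
    rw [Multiset.mem_toFinset, mem_roots hfne]
    rcases Finset.mem_insert.mp hz with h | h
    · subst h
      simp [hf, IsRoot, hx]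
    · rw [hS, Finset.mem_image] at h
      obtain ⟨s, _, rfl⟩ := h
      simp only [hf, IsRoot, eval_sub, eval_pow, eval_X]
      rw [← map_pow, FiniteField.pow_card, sub_self]
  have hle : (insert x S).card ≤ f.roots.toFinset.card := Finset.card_le_card hsub
  rw [Finset.card_insert_of_notMem hxS, hcardS] at hle
  have := (Multiset.toFinset_card_le f.roots).trans (f.card_roots')
  omega

private lemma geom_helper (q k : ℕ) (hq : 1 ≤ q) :
    q ^ k = (q - 1) * (∑ i ∈ Finset.range k, q ^ i) + 1 := by
  have := geom_sum_mul (q : ℤ) k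
  have hcast : ((q - 1 : ℕ) : ℤ) = (q : ℤ) - 1 := by
    push_cast [hq]; ring
  have : ((q - 1 : ℕ) : ℤ) * (∑ i ∈ Finset.range k, (q : ℤ) ^ i) + 1 = (q : ℤ) ^ k := by
    rw [hcast, mul_comm]; linarith [this]
  exact_mod_cast this.symm

private lemma sum_range_two_mul (q k : ℕ) :
    (∑ i ∈ Finset.range (2 * k), q ^ i)
      = (q ^ k + 1) * (∑ i ∈ Finset.range k, q ^ i) := by
  rw [two_mul, Finset.sum_range_add, add_mul, one_mul, Finset.mul_sum, add_comm]
  congr 1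
  apply Finset.sum_congr rfl
  intro i _
  rw [pow_add]

/-- For `q` odd and `ω² - 1` a non-square in `K`, the linearized polynomial
`F₁(y) = y^{q²} + (ω^q + ω(ω²-1)^{(q-1)/2}) y^q + (ω²-1)^{(q-1)/2} y`
has a nonzero root in `K`. -/
theorem F1_has_nonzero_root
    (q n : ℕ) (hn : 1 ≤ n) (F K : Type*) [Field F] [Field K]
    [Fintype F] [Fintype K] [Algebra F K]
    (hF : Fintype.card F = q) (hodd : Odd q)
    (hK : Module.finrank F K = 2 * n + 1)
    (ω : K) (hω : ¬ ∃ s : K, s ^ 2 = ω ^ 2 - 1) :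
    ∃ y : K, y ≠ 0 ∧
      y ^ q ^ 2 + (ω ^ q + ω * (ω ^ 2 - 1) ^ ((q - 1) / 2)) * y ^ q +
        (ω ^ 2 - 1) ^ ((q - 1) / 2) * y = 0 := by
  classical
  obtain ⟨t, ht⟩ := hodd
  have hq1 : 1 < q := hF ▸ Fintype.one_lt_card
  have ht1 : 1 ≤ t := by omega
  have hqdiv : (q - 1) / 2 = t := by omega
  set p := ringChar F with hp
  haveI : CharP F p := ringChar.charP F
  obtain ⟨m, hpprime, hcardF⟩ := FiniteField.card F p
  haveI : Fact p.Prime := ⟨hpprime⟩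
  haveI : CharP K p := charP_of_injective_algebraMap (algebraMap F K).injective p
  set L := AlgebraicClosure K
  haveI : CharP L p := charP_of_injective_algebraMap (algebraMap K L).injective p
  have hqm : q = p ^ (m : ℕ) := by rw [← hF, hcardF]
  have hQ : Fintype.card K = q ^ (2 * n + 1) := by
    rw [Module.card_eq_pow_finrank (K := F) (V := K), hF, hK]
  set Q := q ^ (2 * n + 1) with hQdef
  have hQodd : Odd Q := Odd.pow (⟨t, ht⟩ : Odd q)
  have hp2 : p ≠ 2 := by
    intro h
    have hdvd : (2 : ℕ) ∣ q := by
      rw [hqm, h]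
      exact dvd_pow_self 2 (by exact_mod_cast m.ne_zero)
    omega
  set ι := algebraMap K L with hι
  have hinj : Function.Injective ι := ι.injective
  set w := ι ω with hw
  obtain ⟨δ, hδ⟩ := IsAlgClosed.exists_pow_nat_eq (k := L) (w ^ 2 - 1) two_pos
  have hwsq : w ^ 2 - 1 = ι (ω ^ 2 - 1) := by rw [map_sub, map_pow, map_one]
  have hne : ω ^ 2 - 1 ≠ 0 := by
    intro h
    exact hω ⟨0, by rw [h]; ring⟩
  have hδne : δ ≠ 0 := by
    intro h
    apply hne
    apply hinj
    rw [← hwsq, ← hδ, h, map_zero]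
    ring
  set u := w + δ with hu
  have huinv : u * (w - δ) = 1 := by rw [hu]; linear_combination -hδ
  have hune : u ≠ 0 := left_ne_zero_of_mul_eq_one huinv
  obtain ⟨y₁, hy₁⟩ := IsAlgClosed.exists_pow_nat_eq (k := L) (-u) (n := 2 * t) (by omega)
  have hy₁ne : y₁ ≠ 0 := by
    intro h
    rw [h, zero_pow (by omega)] at hy₁
    exact hune (by rw [← neg_neg u, ← hy₁, neg_zero])
  have hδnotK : ∀ s : K, ι s ≠ δ := by
    intro s hs
    apply hω
    refine ⟨s, hinj ?_⟩
    rw [map_pow, hs, hδ, hwsq]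
  have hfix : ∀ z : K, (ι z) ^ Q = ι z := by
    intro z
    rw [← map_pow, ← hQ, FiniteField.pow_card]
  have hwQ : w ^ Q = w := hfix ω
  have hδ2Q : (δ ^ 2) ^ Q = δ ^ 2 := by
    rw [hδ, hwsq, hfix]
  have hδQ : δ ^ Q = -δ := by
    have hfac : (δ ^ Q - δ) * (δ ^ Q + δ) = 0 := by
      have h2 : (δ ^ Q) ^ 2 = δ ^ 2 := by
        rw [← pow_mul, mul_comm, pow_mul, hδ2Q]
      linear_combination h2
    rcases mul_eq_zero.mp hfac with h | h
    · exfalso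
      have hfx : δ ^ Fintype.card K = δ := by rw [hQ]; linear_combination h
      obtain ⟨s, hs⟩ := mem_range_of_pow_card_eq (K := K) δ hfx
      exact hδnotK s hs
    · linear_combination h
  have haddQ : ∀ x z : L, (x + z) ^ Q = x ^ Q + z ^ Q := by
    intro x z
    have hQexp : Q = p ^ (m * (2 * n + 1)) := by
      rw [hQdef, hqm, ← pow_mul]
    rw [hQexp, add_pow_char_pow]
  have huQ : u ^ Q = w - δ := by
    rw [hu, haddQ, hwQ, hδQ]
    ring
  have huQ1 : u ^ (Q + 1) = 1 := by
    rw [pow_succ, huQ, hu]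
    linear_combination -hδ
  have hnegu : (-u) ^ (Q + 1) = 1 := by
    rw [Even.neg_pow hQodd.add_one, huQ1]
  have hy1q : y₁ ^ q = -u * y₁ := by
    rw [ht, pow_succ, hy₁]
  set T := (w ^ 2 - 1) ^ t with hT
  have hδq : δ ^ q = T * δ := by
    rw [ht, pow_succ, pow_mul, hδ, hT]
  have huq : u ^ q = w ^ q + T * δ := by
    have h1 : (w + δ) ^ q = w ^ q + δ ^ q := by rw [hqm, add_pow_char_pow]
    rw [hu, h1, hδq]
  have key : ∀ z : L, z ^ q = -u * z →
      z ^ q ^ 2 + (w ^ q + w * T) * z ^ q + T * z = 0 := by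
    intro z hz
    have hz2 : z ^ q ^ 2 = u ^ q * u * z := by
      rw [pow_two, pow_mul, hz, mul_pow, Odd.neg_pow ⟨t, by omega⟩, hz]
      ring
    rw [hz2, hz, huq]
    have huu : u = w + δ := hu
    rw [huu]
    have hTT : T = (w ^ 2 - 1) ^ t := hT
    linear_combination (T * z) * hδ
  have hFy₁ := key y₁ hy1q
  set z := y₁ ^ Q with hzdef
  have hFz : z ^ q ^ 2 + (w ^ q + w * T) * z ^ q + T * z = 0 := by
    set φ := iterateFrobenius L p (m * (2 * n + 1)) with hφdef
    have hφ : ∀ x : L, φ x = x ^ Q := by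
      intro x
      rw [hφdef, iterateFrobenius_def, hQdef, hqm, ← pow_mul]
    have hφw : φ w = w := by rw [hφ, hwQ]
    have hφT : φ T = T := by
      rw [hT, map_pow, map_sub, map_pow, hφw, map_one]
    have hφw2 : φ (w ^ 2 - 1) = w ^ 2 - 1 := by rw [map_sub, map_pow, hφw, map_one]
    have := congrArg φ hFy₁
    have hφT : φ T = T := by rw [hT, map_pow, hφw2]
    simp only [map_add, map_mul, map_pow, map_zero, hφw, hφw2, hφT, hφ y₁] at this
    exact this
  set y := y₁ + z with hy
  have hy1Q2 : z ^ Q = y₁ := by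
    rw [hzdef, ← pow_mul]
    have hq1' : q - 1 = 2 * t := by omega
    have hexp : Q * Q = 2 * t * ((Q + 1) * (∑ i ∈ Finset.range (2 * n + 1), q ^ i)) + 1 := by
      calc Q * Q = q ^ (2 * (2 * n + 1)) := by
            rw [hQdef, ← pow_add]
            exact congrArg (fun e => q ^ e) (by ring)
        _ = (q - 1) * (∑ i ∈ Finset.range (2 * (2 * n + 1)), q ^ i) + 1 :=
            geom_helper q (2 * (2 * n + 1)) (by omega)
        _ = 2 * t * ((Q + 1) * (∑ i ∈ Finset.range (2 * n + 1), q ^ i)) + 1 := by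
            rw [sum_range_two_mul q (2 * n + 1), hq1', ← hQdef]
    rw [hexp, pow_succ, pow_mul, hy₁, pow_mul, hnegu, one_pow, one_mul]
  have hyQ : y ^ Q = y := by
    rw [hy, haddQ, ← hzdef, hy1Q2, add_comm]
  have hyne : y ≠ 0 := by
    intro h0
    have hz0 : z = -y₁ := by
      rw [eq_neg_iff_add_eq_zero, add_comm]
      exact h0
    have h1 : z ^ (2 * t) = (-u) ^ Q := by
      rw [hzdef, ← pow_mul, mul_comm, pow_mul, hy₁]
    have h2 : z ^ (2 * t) = -u := by
      rw [hz0, Even.neg_pow ⟨t, by omega⟩, hy₁]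
    rw [h1] at h2
    rw [Odd.neg_pow hQodd, huQ] at h2
    have h3 : (2 : L) * δ = 0 := by
      rw [hu] at h2
      linear_combination h2
    rcases mul_eq_zero.mp h3 with h | h
    · have hdvd : (p : ℕ) ∣ 2 := by
        exact (CharP.cast_eq_zero_iff L p 2).mp (by exact_mod_cast h)
      have h2le := hpprime.two_le
      have := Nat.le_of_dvd two_pos hdvd
      omega
    · exact hδne h
  obtain ⟨y₀, hy₀⟩ := mem_range_of_pow_card_eq (K := K) y (by rw [hQ]; exact hyQ)
  refine ⟨y₀, ?_, ?_⟩
  · intro h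
    apply hyne
    rw [← hy₀, h, map_zero]
  · apply hinj
    rw [map_add, map_add, map_mul, map_mul, map_pow, map_pow, map_pow, map_add,
      map_mul, map_pow, map_sub, map_pow, map_one, map_sub, map_pow, map_one,
      map_zero, hy₀, ← hw, hqdiv, ← hT]
    have haddq : (y₁ + z) ^ q = y₁ ^ q + z ^ q := by
      rw [hqm, add_pow_char_pow]
    have haddq2 : (y₁ + z) ^ q ^ 2 = y₁ ^ q ^ 2 + z ^ q ^ 2 := by
      have : q ^ 2 = p ^ ((m : ℕ) * 2) := by rw [hqm, ← pow_mul]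
      rw [this, add_pow_char_pow]
    rw [hy, haddq, haddq2]
    linear_combination hFy₁ + hFz
end

section
/- Let q be an odd prime power, F a finite field with q elements, and K an extension field of F with [K:F] = 2n+1 (n ≥ 1). Let ω ∈ K \ {0, 1, -1} be such that ω^2 - 1 is a nonzero square in K. Then there exists y ∈ K \ {0} such that y^{q^2} + (ω^q - ω·(ω^2-1)^{(q-1)/2})·y^q - (ω^2-1)^{(q-1)/2}·y = 0 and y^2 + y^{2q} + 2·ω·y^{q+1} ≠ 0. -/
open Matrix Finset

section Aux

variable {R : Type*} [CommRing R]

/-- Left-to-right product `A 0 * A 1 * ⋯ * A (k-1)`. -/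
def prodLMat (A : ℕ → Matrix (Fin 2) (Fin 2) R) : ℕ → Matrix (Fin 2) (Fin 2) R
  | 0 => 1
  | k + 1 => prodLMat A k * A k

/-- Right-to-left product `A (k-1) * ⋯ * A 0`. -/
def prodRMat (A : ℕ → Matrix (Fin 2) (Fin 2) R) : ℕ → Matrix (Fin 2) (Fin 2) R
  | 0 => 1
  | k + 1 => A k * prodRMat A k

lemma prodLMat_det (A : ℕ → Matrix (Fin 2) (Fin 2) R) (h : ∀ k, (A k).det = -1) (k : ℕ) :
    (prodLMat A k).det = (-1 : R) ^ k := by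
  induction k with
  | zero => simp [prodLMat]
  | succ k ih => rw [prodLMat, det_mul, ih, h, pow_succ]

lemma prodLMat_adjugate (A : ℕ → Matrix (Fin 2) (Fin 2) R)
    (h : ∀ k, adjugate (A k) = -(A k)) (k : ℕ) :
    adjugate (prodLMat A k) = (-1 : R) ^ k • prodRMat A k := by
  induction k with
  | zero => simp [prodLMat, prodRMat]
  | succ k ih =>
    rw [prodLMat, adjugate_mul_distrib, h, ih, prodRMat, Matrix.neg_mul,
      _root_.Matrix.mul_smul, pow_succ, mul_comm ((-1 : R) ^ k) (-1), neg_one_mul, neg_smul]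

lemma prodLMat_transpose (A : ℕ → Matrix (Fin 2) (Fin 2) R) (D : Matrix (Fin 2) (Fin 2) R)
    (hD : D * D = 1) (h : ∀ k, (A k)ᵀ = D * A k * D) (k : ℕ) :
    (prodLMat A k)ᵀ = D * prodRMat A k * D := by
  induction k with
  | zero => simp [prodLMat, prodRMat, Matrix.mul_one, hD]
  | succ k ih =>
    rw [prodLMat, transpose_mul, h, ih, prodRMat]
    simp only [Matrix.mul_assoc]
    rw [← Matrix.mul_assoc D D, hD, Matrix.one_mul]

lemma prodLMat_shift (A : ℕ → Matrix (Fin 2) (Fin 2) R) (f : R →+* R)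
    (h : ∀ k, (A k).map f = A (k + 1)) (k : ℕ) :
    A 0 * (prodLMat A k).map f = prodLMat A k * A k := by
  induction k with
  | zero => simp [prodLMat]
  | succ k ih =>
    have hstep : prodLMat A (k + 1) = prodLMat A k * A k := rfl
    rw [hstep, Matrix.map_mul, ← Matrix.mul_assoc, ih, Matrix.mul_assoc, h, Matrix.mul_assoc]

/-- a `q`-power ring hom from the additive property. -/
def powRingHom (K : Type*) [CommSemiring K] (m : ℕ) (hm : m ≠ 0)
    (h : ∀ x y : K, (x + y) ^ m = x ^ m + y ^ m) : K →+* K where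
  toFun x := x ^ m
  map_one' := one_pow m
  map_mul' x y := mul_pow x y m
  map_zero' := zero_pow hm
  map_add' := h

@[simp] lemma powRingHom_apply {K : Type*} [CommSemiring K] (m : ℕ) (hm : m ≠ 0)
    (h : ∀ x y : K, (x + y) ^ m = x ^ m + y ^ m) (x : K) :
    powRingHom K m hm h x = x ^ m := rfl

end Aux

set_option maxHeartbeats 1600000 in
/-- For `q` odd, `ω ∉ {0, 1, -1}` with `ω² - 1` a nonzero square in `K`, the
linearized polynomial
`F₂(y) = y^{q²} + (ω^q - ω(ω²-1)^{(q-1)/2}) y^q - (ω²-1)^{(q-1)/2} y`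
has a nonzero root `y ∈ K` with moreover `y² + y^{2q} + 2ω y^{q+1} ≠ 0`. -/
theorem F2_has_good_nonzero_root
    (q n : ℕ) (hn : 1 ≤ n) (F K : Type*) [Field F] [Field K]
    [Fintype F] [Fintype K] [Algebra F K]
    (hF : Fintype.card F = q) (hodd : Odd q)
    (hK : Module.finrank F K = 2 * n + 1)
    (ω : K) (hω0 : ω ≠ 0) (hω1 : ω ≠ 1) (hω1' : ω ≠ -1)
    (hsq : ∃ s : K, s ≠ 0 ∧ s ^ 2 = ω ^ 2 - 1) :
    ∃ y : K, y ≠ 0 ∧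
      y ^ q ^ 2 + (ω ^ q - ω * (ω ^ 2 - 1) ^ ((q - 1) / 2)) * y ^ q -
        (ω ^ 2 - 1) ^ ((q - 1) / 2) * y = 0 ∧
      y ^ 2 + y ^ (2 * q) + 2 * ω * y ^ (q + 1) ≠ 0 := by
  classical
  obtain ⟨s, hs0, hs2⟩ := hsq
  -- characteristic basics
  obtain ⟨e, hp, hcard⟩ := FiniteField.card F (ringChar F)
  haveI : Fact (ringChar F).Prime := ⟨hp⟩
  have hq : q = (ringChar F) ^ (e : ℕ) := by rw [← hF, hcard]
  haveI hKp : CharP K (ringChar F) :=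
    charP_of_injective_algebraMap (algebraMap F K).injective (ringChar F)
  have hq1 : 1 < q := by rw [← hF]; exact Fintype.one_lt_card
  have hq0 : q ≠ 0 := by omega
  have hp2 : ringChar F ≠ 2 := by
    intro h
    rw [h] at hq
    rcases hodd with ⟨t, ht⟩
    have : (2 : ℕ) ∣ q := hq ▸ dvd_pow_self 2 (by exact_mod_cast e.ne_zero)
    omega
  have h2K : (2 : K) ≠ 0 := by
    intro h
    have h2 := (CharP.cast_eq_zero_iff K (ringChar F) 2).mp h
    exact hp2 ((Nat.prime_dvd_prime_iff_eq hp Nat.prime_two).mp h2)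
  have hm1K : (-1 : K) ≠ 1 := by
    intro h
    apply h2K
    linear_combination -h
  -- cardinality of K
  have hKcard : Fintype.card K = q ^ (2 * n + 1) := by
    rw [Module.card_eq_pow_finrank (K := F) (V := K), hF, hK]
  have hpow_card : ∀ x : K, x ^ q ^ (2 * n + 1) = x := by
    intro x
    rw [← hKcard]; exact FiniteField.pow_card x
  -- Frobenius family
  have haddpow : ∀ (k : ℕ) (x y : K), (x + y) ^ q ^ k = x ^ q ^ k + y ^ q ^ k := by
    intro k x y
    rw [hq, ← pow_mul]
    apply add_pow_char_pow
  set σ : ℕ → (K →+* K) := fun k =>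
    powRingHom K (q ^ k) (pow_ne_zero k hq0) (haddpow k) with hσdef
  have hσ : ∀ (k : ℕ) (x : K), σ k x = x ^ q ^ k := fun k x => rfl
  have hoddq : ∀ j : ℕ, Odd (q ^ j) := fun j => hodd.pow
  have hnegpow : ∀ (x : K) (j : ℕ), (-x) ^ q ^ j = -(x ^ q ^ j) := fun x j => (hoddq j).neg_pow x
  have hpp : ∀ (x : K) (k : ℕ), (x ^ q ^ k) ^ q ^ 1 = x ^ q ^ (k + 1) := by
    intro x k
    rw [← pow_mul, pow_one, ← pow_succ]
  have hppq : ∀ (x : K) (k : ℕ), (x ^ q ^ k) ^ q = x ^ q ^ (k + 1) := by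
    intro x k
    rw [← pow_mul, ← pow_succ]
  have hnegq : ∀ x : K, (-x) ^ q = -(x ^ q) := fun x => hodd.neg_pow x
  -- the matrices
  set A : ℕ → Matrix (Fin 2) (Fin 2) K :=
    fun k => !![-(ω ^ q ^ k), s ^ q ^ k; -(s ^ q ^ k), ω ^ q ^ k] with hA
  set D : Matrix (Fin 2) (Fin 2) K := !![1, 0; 0, -1] with hD
  have hAk : ∀ k, A k = !![-(ω ^ q ^ k), s ^ q ^ k; -(s ^ q ^ k), ω ^ q ^ k] := fun k => rfl
  have hDD : D * D = 1 := by
    rw [hD]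
    ext i j
    fin_cases i <;> fin_cases j <;>
      simp [Matrix.mul_apply, Fin.sum_univ_two, Matrix.one_apply]
  have hdetA : ∀ k, (A k).det = -1 := by
    intro k
    rw [hAk, det_fin_two_of]
    have : (s ^ q ^ k) ^ 2 - (ω ^ q ^ k) ^ 2 = σ k (s ^ 2 - ω ^ 2) := by
      rw [map_sub, hσ, hσ, ← pow_mul, ← pow_mul, ← pow_mul, ← pow_mul]
      simp only [mul_comm (q ^ k) 2]
    have h1 : s ^ 2 - ω ^ 2 = -1 := by linear_combination hs2
    have h2 := this
    rw [h1, _root_.map_neg, _root_.map_one] at h2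
    linear_combination h2
  have hadjA : ∀ k, adjugate (A k) = -(A k) := by
    intro k
    rw [hAk, adjugate_fin_two_of]
    ext i j
    fin_cases i <;> fin_cases j <;> simp
  have htransA : ∀ k, (A k)ᵀ = D * A k * D := by
    intro k
    rw [hAk, hD]
    ext i j
    fin_cases i <;> fin_cases j <;>
      simp [Matrix.mul_apply, Fin.sum_univ_two, Matrix.transpose_apply]
  have hmapA1 : ∀ k, (A k).map (σ 1) = A (k + 1) := by
    intro k
    rw [hAk, hAk]
    ext i j
    fin_cases i <;> fin_cases j <;>
      simp [Matrix.map_apply, hσ, hnegpow, hpp, hppq, hnegq]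
  have hmapA : ∀ k, (A 0).map (σ k) = A k := by
    intro k
    rw [hAk, hAk]
    ext i j
    fin_cases i <;> fin_cases j <;>
      simp [Matrix.map_apply, hσ, hnegpow, pow_zero, pow_one]
  have hA_top : A (2 * n + 1) = A 0 := by
    rw [hAk, hAk]
    ext i j
    fin_cases i <;> fin_cases j <;> simp [hpow_card, pow_zero, pow_one]
  have hA00 : A 0 * A 0 = 1 := by
    have h := mul_adjugate (A 0)
    rw [hadjA 0, hdetA 0, Matrix.mul_neg, neg_smul, one_smul] at h
    exact neg_injective h
  -- the period matrix N
  set N : Matrix (Fin 2) (Fin 2) K := prodLMat A (2 * n + 1) with hN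
  set Q2 : Matrix (Fin 2) (Fin 2) K := prodRMat A (2 * n + 1) with hQ2
  have hoddm : Odd (2 * n + 1) := ⟨n, by ring⟩
  have hdetN : N.det = -1 := by
    rw [hN, prodLMat_det A hdetA, hoddm.neg_one_pow]
  have hadjN : adjugate N = -Q2 := by
    rw [hN, prodLMat_adjugate A hadjA, hoddm.neg_one_pow, neg_one_smul, hQ2]
  have htransN : Nᵀ = D * Q2 * D := prodLMat_transpose A D hDD htransA (2 * n + 1)
  have htrN : N.trace = 0 := by
    have e1 : N.trace = Q2.trace := by
      calc N.trace = Nᵀ.trace := (trace_transpose N).symm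
        _ = (D * Q2 * D).trace := by rw [htransN]
        _ = (D * (D * Q2)).trace := trace_mul_comm _ _
        _ = Q2.trace := by rw [← Matrix.mul_assoc, hDD, Matrix.one_mul]
    have e2 : (adjugate N).trace = N.trace := by
      simp [adjugate_fin_two, Matrix.trace_fin_two, add_comm]
    have e3 : N.trace = -N.trace := by
      calc N.trace = (adjugate N).trace := e2.symm
        _ = (-Q2).trace := by rw [hadjN]
        _ = -Q2.trace := Matrix.trace_neg _
        _ = -N.trace := by rw [e1]
    have e4 : (2 : K) * N.trace = 0 := by linear_combination e3
    exact (mul_eq_zero.mp e4).resolve_left h2K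
  have hadjN2 : adjugate N = -N := by
    have h00 : N 1 1 = -(N 0 0) := by
      have := htrN
      rw [Matrix.trace_fin_two] at this
      linear_combination this
    rw [adjugate_fin_two]
    ext i j
    fin_cases i <;> fin_cases j <;> simp [h00]
  have hN2 : N * N = 1 := by
    have h := mul_adjugate N
    rw [hadjN2, hdetN, Matrix.mul_neg, neg_smul, one_smul] at h
    exact neg_injective h
  have hNne1 : N ≠ 1 := by
    intro h
    rw [h, det_one] at hdetN
    exact hm1K hdetN.symm
  have hNne1' : N + 1 ≠ 0 := by
    intro h
    have hNeg : N = -1 := eq_neg_of_add_eq_zero_left h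
    rw [hNeg, Matrix.det_neg, det_one, Fintype.card_fin] at hdetN
    norm_num at hdetN
    exact hm1K hdetN.symm
  -- a fixed vector of N
  have hex : ∃ i j, (N + 1) i j ≠ 0 := by
    by_contra hc
    push_neg at hc
    exact hNne1' (by ext i j; simpa using hc i j)
  obtain ⟨i0, j0, hw0'⟩ := hex
  set w : Fin 2 → K := fun i => (N + 1) i j0 with hwdef
  have hwi0 : w i0 ≠ 0 := hw0'
  have hNw : N.mulVec w = w := by
    have hz1 : (N - 1) * (N + 1) = N * N - 1 := by noncomm_ring
    rw [hN2, sub_self] at hz1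
    have hz2 : (N - 1).mulVec w = 0 := by
      funext i
      have h := congrFun (congrFun hz1 i) j0
      simpa [Matrix.mul_apply, Matrix.mulVec, dotProduct, hwdef] using h
    rw [Matrix.sub_mulVec, Matrix.one_mulVec, sub_eq_zero] at hz2
    exact hz2
  -- the twisted image of w
  set u : Fin 2 → K := (A 0).mulVec (fun j => σ 1 (w j)) with hu
  have hNu : N.mulVec u = u := by
    have hshift := prodLMat_shift A (σ 1) hmapA1 (2 * n + 1)
    rw [hA_top, ← hN] at hshift
    calc N.mulVec u = (N * A 0).mulVec (fun j => σ 1 (w j)) := by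
          rw [hu, mulVec_mulVec]
      _ = (A 0 * N.map (σ 1)).mulVec (fun j => σ 1 (w j)) := by rw [hshift]
      _ = (A 0).mulVec ((N.map (σ 1)).mulVec (fun j => σ 1 (w j))) := by
          rw [mulVec_mulVec]
      _ = u := by
          have hv : (N.map (σ 1)).mulVec (fun j => σ 1 (w j)) = (fun j => σ 1 (w j)) := by
            funext i
            have hmv := RingHom.map_mulVec (σ 1) N w i
            rw [hNw] at hmv
            simpa [Function.comp] using hmv.symm
          rw [hv, hu]
  -- u is collinear with w
  have hdep : w 0 * u 1 - w 1 * u 0 = 0 := by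
    by_contra hdet0
    set B : Matrix (Fin 2) (Fin 2) K := !![w 0, u 0; w 1, u 1] with hB
    have hdetB : B.det ≠ 0 := by
      rw [hB, det_fin_two_of]
      intro h
      apply hdet0
      linear_combination h
    have hBunit : IsUnit B.det := isUnit_iff_ne_zero.mpr hdetB
    have hNB : N * B = B := by
      have hhw0 := congrFun hNw 0
      have hhw1 := congrFun hNw 1
      have hhu0 := congrFun hNu 0
      have hhu1 := congrFun hNu 1
      simp only [Matrix.mulVec, dotProduct, Fin.sum_univ_two] at hhw0 hhw1 hhu0 hhu1
      ext i j
      fin_cases i <;> fin_cases j <;>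
        simp [hB, Matrix.mul_apply, Fin.sum_univ_two] <;>
        first
          | linear_combination hhw0
          | linear_combination hhw1
          | linear_combination hhu0
          | linear_combination hhu1
    have hNis1 : N = 1 := by
      calc N = N * (B * B⁻¹) := by rw [Matrix.mul_nonsing_inv B hBunit, Matrix.mul_one]
        _ = N * B * B⁻¹ := by rw [Matrix.mul_assoc]
        _ = B * B⁻¹ := by rw [hNB]
        _ = 1 := Matrix.mul_nonsing_inv B hBunit
    exact hNne1 hNis1
  have hwcases : w 0 ≠ 0 ∨ (w 0 = 0 ∧ w 1 ≠ 0) := by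
    rcases eq_or_ne (w 0) 0 with h0 | h0
    · right
      refine ⟨h0, ?_⟩
      fin_cases i0 <;> simp_all
    · left; exact h0
  obtain ⟨μ, hμ⟩ : ∃ μ : K, u = μ • w := by
    rcases hwcases with h0 | ⟨h0, h1⟩
    · refine ⟨u 0 / w 0, ?_⟩
      funext i
      fin_cases i
      · simp only [Pi.smul_apply, smul_eq_mul, Fin.zero_eta, Fin.mk_one]
        field_simp
      · simp only [Pi.smul_apply, smul_eq_mul, Fin.zero_eta, Fin.mk_one]
        field_simp
        linear_combination hdep
    · refine ⟨u 1 / w 1, ?_⟩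
      funext i
      fin_cases i
      · simp only [Pi.smul_apply, smul_eq_mul, Fin.zero_eta, Fin.mk_one]
        field_simp
        linear_combination -hdep
      · simp only [Pi.smul_apply, smul_eq_mul, Fin.zero_eta, Fin.mk_one]
        field_simp
  have hμ0 : μ ≠ 0 := by
    intro h
    rw [h, zero_smul] at hμ
    have h2 : (fun j => σ 1 (w j)) = (A 0).mulVec u := by
      rw [hu, mulVec_mulVec, hA00, Matrix.one_mulVec]
    rw [hμ, Matrix.mulVec_zero] at h2
    have h3 := congrFun h2 i0
    have h4 : w i0 ^ q ^ 1 = 0 := by rw [← hσ 1 (w i0)]; exact h3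
    exact hwi0 ((pow_eq_zero_iff (pow_ne_zero 1 hq0)).mp h4)
  have hcomp : ∀ (x : K) (k : ℕ), σ k (σ 1 x) = σ (k + 1) x := by
    intro x k
    rw [hσ, hσ, hσ, ← pow_mul, pow_one]
    congr 1
    exact (pow_succ' q k).symm
  -- the norm computation
  have hind : ∀ k, (prodLMat A k).mulVec (fun j => σ k (w j)) =
      (∏ i ∈ Finset.range k, σ i μ) • w := by
    intro k
    induction k with
    | zero =>
      have h1 : (fun j => σ 0 (w j)) = w := by
        funext j
        rw [hσ]
        simp
      rw [show prodLMat A 0 = (1 : Matrix (Fin 2) (Fin 2) K) from rfl, h1, Matrix.one_mulVec]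
      simp
    | succ k ih =>
      have hstep : prodLMat A (k + 1) = prodLMat A k * A k := rfl
      have hinner : (A k).mulVec (fun j => σ (k + 1) (w j)) =
          (σ k μ) • (fun j => σ k (w j)) := by
        funext i
        have hmv := RingHom.map_mulVec (σ k) (A 0) (fun j => σ 1 (w j)) i
        rw [hmapA k] at hmv
        have hfun : (⇑(σ k) ∘ fun j => σ 1 (w j)) = fun j => σ (k + 1) (w j) := by
          funext j
          simp only [Function.comp_apply]
          exact hcomp (w j) k
        rw [hfun, ← hu] at hmv
        rw [← hmv, hμ]
        simp only [Pi.smul_apply, smul_eq_mul]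
        exact map_mul _ _ _
      rw [hstep, ← mulVec_mulVec, hinner, _root_.Matrix.mulVec_smul, ih, Finset.prod_range_succ,
        smul_smul, mul_comm]
  have hwfix : (fun j => σ (2 * n + 1) (w j)) = w := by
    funext j
    rw [hσ]
    exact hpow_card (w j)
  have hTT := hind (2 * n + 1)
  rw [hwfix, ← hN, hNw] at hTT
  set T : ℕ := ∑ i ∈ Finset.range (2 * n + 1), q ^ i with hT
  have hprodpow : (∏ i ∈ Finset.range (2 * n + 1), σ i μ) = μ ^ T := by
    rw [hT]
    rw [show (∏ i ∈ Finset.range (2 * n + 1), σ i μ)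
        = ∏ i ∈ Finset.range (2 * n + 1), μ ^ q ^ i from
      Finset.prod_congr rfl fun i _ => hσ i μ]
    exact Finset.prod_pow_eq_pow_sum _ _ _
  have hμT : μ ^ T = 1 := by
    rw [hprodpow] at hTT
    have h := congrFun hTT i0
    simp only [Pi.smul_apply, smul_eq_mul] at h
    have h2 : (μ ^ T - 1) * w i0 = 0 := by linear_combination -h
    rcases mul_eq_zero.mp h2 with h3 | h3
    · exact sub_eq_zero.mp h3
    · exact absurd h3 hwi0
  -- cyclic group argument: find c with c^(q-1) * μ = 1
  obtain ⟨g, hg⟩ := IsCyclic.exists_generator (α := Kˣ)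
  have horder : orderOf g = q ^ (2 * n + 1) - 1 := by
    rw [orderOf_eq_card_of_forall_mem_zpowers hg, Nat.card_eq_fintype_card,
      Fintype.card_units, hKcard]
  set μu : Kˣ := Units.mk0 μ hμ0 with hμu
  obtain ⟨mz, hmz⟩ := Subgroup.mem_zpowers_iff.mp (hg μu)
  have hμuT : μu ^ (T : ℤ) = 1 := by
    rw [zpow_natCast]
    ext
    push_cast [hμu]
    exact hμT
  have hdvdZ : (orderOf g : ℤ) ∣ mz * (T : ℤ) := by
    rw [orderOf_dvd_iff_zpow_eq_one]
    calc g ^ (mz * (T : ℤ)) = (g ^ mz) ^ (T : ℤ) := zpow_mul g mz (T : ℤ)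
      _ = μu ^ (T : ℤ) := by rw [hmz]
      _ = 1 := hμuT
  have hq1N : 1 ≤ q := by omega
  have hgeom : (T : ℤ) * ((q : ℤ) - 1) = (q : ℤ) ^ (2 * n + 1) - 1 := by
    rw [hT]
    push_cast
    exact geom_sum_mul (q : ℤ) (2 * n + 1)
  have horderZ : (orderOf g : ℤ) = (T : ℤ) * ((q : ℤ) - 1) := by
    rw [horder, hgeom, Nat.cast_sub (Nat.one_le_pow _ _ (by omega))]
    push_cast
    ring
  have hTpos : 0 < T := by
    rw [hT]
    exact Finset.sum_pos (fun i _ => pow_pos (by omega) i)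
      ⟨0, Finset.mem_range.mpr (by omega)⟩
  have hdvd2 : ((q : ℤ) - 1) ∣ mz := by
    have h1 : (T : ℤ) * ((q : ℤ) - 1) ∣ (T : ℤ) * mz := by
      rw [← horderZ]
      exact dvd_trans hdvdZ ⟨1, by ring⟩
    exact (mul_dvd_mul_iff_left (show (T : ℤ) ≠ 0 by exact_mod_cast hTpos.ne')).mp h1
  obtain ⟨m2, hm2⟩ := hdvd2
  set cu : Kˣ := g ^ (-m2) with hcu
  have hckeyU : cu ^ ((q : ℤ) - 1) * μu = 1 := by
    rw [hcu, ← _root_.zpow_mul, ← hmz, ← _root_.zpow_add]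
    rw [show -m2 * ((q : ℤ) - 1) + mz = 0 by rw [hm2]; ring]
    exact _root_.zpow_zero g
  set c : K := (cu : K) with hcdef
  have hc0 : c ≠ 0 := Units.ne_zero cu
  have hckey : c ^ (q - 1) * μ = 1 := by
    have h2 : cu ^ (q - 1 : ℕ) * μu = 1 := by
      rw [← _root_.zpow_natCast cu (q - 1), Nat.cast_sub hq1N, Nat.cast_one]
      exact hckeyU
    have h3 := congrArg (Units.val) h2
    push_cast [hμu] at h3
    exact h3
  -- the fixed vector v = c • w and its components
  have hvfix : (A 0).mulVec (fun j => σ 1 (c * w j)) = (fun j => c * w j) := by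
    have h1 : (fun j => σ 1 (c * w j)) = (σ 1 c) • (fun j => σ 1 (w j)) := by
      funext j
      simp only [Pi.smul_apply, smul_eq_mul]
      exact map_mul _ _ _
    rw [h1, _root_.Matrix.mulVec_smul, ← hu, hμ, smul_smul]
    have h2 : σ 1 c * μ = c := by
      have h3 : σ 1 c = c ^ (q - 1) * c := by
        rw [hσ, pow_one, ← pow_succ]
        congr 1
        omega
      rw [h3]
      linear_combination c * hckey
    rw [h2]
    funext j
    simp
  have hvfix2 : (fun j => σ 1 (c * w j)) = (A 0).mulVec (fun j => c * w j) := by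
    have h := congrArg ((A 0).mulVec) hvfix
    rw [mulVec_mulVec, hA00, Matrix.one_mulVec] at h
    exact h
  -- components
  have haddq : ∀ a b : K, (a + b) ^ q = a ^ q + b ^ q := by
    intro a b
    have := haddpow 1 a b
    simpa [pow_one] using this
  set y : K := c * w 0 with hydef
  set z : K := c * w 1 with hzdef
  have hyq : y ^ q = -ω * y + s * z := by
    have h := congrFun hvfix2 0
    have h1 : σ 1 (c * w 0) = y ^ q := by rw [hσ, pow_one, hydef]
    have h2 : ((A 0).mulVec fun j => c * w j) 0 = -ω * y + s * z := by
      simp [hAk, Matrix.mulVec, dotProduct, Fin.sum_univ_two, pow_zero, pow_one,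
        hydef, hzdef]
    rw [h1, h2] at h
    exact h
  have hzq : z ^ q = -s * y + ω * z := by
    have h := congrFun hvfix2 1
    have h1 : σ 1 (c * w 1) = z ^ q := by rw [hσ, pow_one, hzdef]
    have h2 : ((A 0).mulVec fun j => c * w j) 1 = -s * y + ω * z := by
      simp [hAk, Matrix.mulVec, dotProduct, Fin.sum_univ_two, pow_zero, pow_one,
        hydef, hzdef]
    rw [h1, h2] at h
    exact h
  have hyne : y ≠ 0 := by
    intro h
    have hz0 : z = 0 := by
      have h1 : (0 : K) ^ q = -ω * 0 + s * z := by rw [← h, hyq, h]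
      rw [zero_pow hq0] at h1
      have h2 : s * z = 0 := by linear_combination -h1
      rcases mul_eq_zero.mp h2 with h3 | h3
      · exact absurd h3 hs0
      · exact h3
    have hw00 : w 0 = 0 := by
      rcases mul_eq_zero.mp (hydef ▸ h) with h3 | h3
      · exact absurd h3 hc0
      · exact h3
    have hw10 : w 1 = 0 := by
      rcases mul_eq_zero.mp (hzdef ▸ hz0) with h3 | h3
      · exact absurd h3 hc0
      · exact h3
    apply hwi0
    fin_cases i0
    · exact hw00
    · exact hw10
  refine ⟨y, hyne, ?_, ?_⟩
  · -- the linearized equation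
    have hεs : (ω ^ 2 - 1) ^ ((q - 1) / 2) = s ^ (q - 1) := by
      rw [← hs2, ← pow_mul]
      congr 1
      obtain ⟨t, ht⟩ := hodd
      omega
    have hsq' : s ^ q = s * s ^ (q - 1) := by
      rw [← pow_succ']
      congr 1
      omega
    have hq2 : y ^ q ^ 2 = (y ^ q) ^ q := by rw [pow_two, pow_mul]
    have hyq2 : (y ^ q) ^ q = -(ω ^ q) * y ^ q + s ^ q * z ^ q := by
      calc (y ^ q) ^ q = (-ω * y + s * z) ^ q := by rw [hyq]
        _ = (-ω * y) ^ q + (s * z) ^ q := haddq _ _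
        _ = -(ω ^ q) * y ^ q + s ^ q * z ^ q := by
            rw [mul_pow (-ω) y, mul_pow s z, hnegq]
    rw [hεs, hq2, hyq2, hyq, hzq, hsq']
    linear_combination (-(s ^ (q - 1) * y)) * hs2
  · -- the nondegeneracy condition
    intro hcon
    have h2q : y ^ (2 * q) = (y ^ q) ^ 2 := by rw [← pow_mul, mul_comm]
    have hq1' : y ^ (q + 1) = y ^ q * y := pow_succ y q
    rw [h2q, hq1', hyq] at hcon
    have hfac : s ^ 2 * (z ^ 2 - y ^ 2) = 0 := by
      linear_combination hcon - y ^ 2 * hs2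
    have hz2 : z ^ 2 - y ^ 2 = 0 := by
      rcases mul_eq_zero.mp hfac with h3 | h3
      · exact absurd ((pow_eq_zero_iff (by norm_num : (2 : ℕ) ≠ 0)).mp h3) hs0
      · exact h3
    have hfac2 : (z - y) * (z + y) = 0 := by linear_combination hz2
    rcases mul_eq_zero.mp hfac2 with h3 | h3
    · -- z = y
      have hzy : z = y := sub_eq_zero.mp h3
      rw [hzy] at hzq
      -- y^q = -ω y + s y and y^q = -s y + ω y
      have he : (2 : K) * (s - ω) * y = 0 := by
        rw [hzy] at hyq
        linear_combination hzq - hyq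
      rcases mul_eq_zero.mp he with h4 | h4
      · rcases mul_eq_zero.mp h4 with h5 | h5
        · exact h2K h5
        · have hsw : s = ω := sub_eq_zero.mp h5
          have : (1 : K) = 0 := by
            rw [hsw] at hs2
            linear_combination hs2
          exact one_ne_zero this
      · exact hyne h4
    · -- z = -y
      have hzy : z = -y := eq_neg_of_add_eq_zero_left h3
      rw [hzy] at hzq
      rw [hnegq] at hzq
      -- -y^q = -s y - ω y ; y^q = -ω y - s y
      have he : (2 : K) * (s + ω) * y = 0 := by
        rw [hzy] at hyq
        linear_combination hyq + hzq
      rcases mul_eq_zero.mp he with h4 | h4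
      · rcases mul_eq_zero.mp h4 with h5 | h5
        · exact h2K h5
        · have hsw : s = -ω := eq_neg_of_add_eq_zero_left h5
          have : (1 : K) = 0 := by
            rw [hsw] at hs2
            linear_combination hs2
          exact one_ne_zero this
      · exact hyne h4
end

section
/- Let q > 2 be an even prime power, F a finite field with q elements, K an extension field of F with [K:F] = 2n+1 (n ≥ 1), and let α ∈ F with α ≠ 0 and α ≠ 1 (identified with its image in K). Let ω ∈ K with ω ∉ {0, 1, α}, and let t ∈ K satisfy t^{q+1} = (ω·(α+1) + α)/(α^2 + 1). Set x = t + α/(α+1) and y = t + 1/(α+1). Then x ≠ 0, y ≠ 0, x^2 + y^2 = 1, and x^{q+1} + α·y^{q+1} = ω. -/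
/-- Key identity for the even case: if `t^{q+1} = (ω(α+1) + α)/(α² + 1)`,
`x = t + α/(α+1)` and `y = t + 1/(α+1)`, then `x, y ≠ 0`, `x² + y² = 1` and
`x^{q+1} + α y^{q+1} = ω`. -/
theorem even_case_secant_identity
    (q n : ℕ) (hn : 1 ≤ n) (F K : Type*) [Field F] [Field K]
    [Fintype F] [Fintype K] [Algebra F K]
    (hF : Fintype.card F = q) (heven : Even q) (hq2 : 2 < q)
    (hK : Module.finrank F K = 2 * n + 1)
    (α : F) (hα0 : α ≠ 0) (hα1 : α ≠ 1)
    (ω : K) (hω0 : ω ≠ 0) (hω1 : ω ≠ 1) (hωα : ω ≠ algebraMap F K α)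
    (t : K)
    (ht : t ^ (q + 1) =
      (ω * (algebraMap F K α + 1) + algebraMap F K α) /
        ((algebraMap F K α) ^ 2 + 1)) :
    t + algebraMap F K α / (algebraMap F K α + 1) ≠ 0 ∧
    t + 1 / (algebraMap F K α + 1) ≠ 0 ∧
    (t + algebraMap F K α / (algebraMap F K α + 1)) ^ 2 +
      (t + 1 / (algebraMap F K α + 1)) ^ 2 = 1 ∧
    (t + algebraMap F K α / (algebraMap F K α + 1)) ^ (q + 1) +
      algebraMap F K α * (t + 1 / (algebraMap F K α + 1)) ^ (q + 1) = ω := by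
  have hcharF : CharP F 2 := by
    have h : ringChar F = 2 := by
      rw [FiniteField.even_card_iff_char_two, hF, Nat.even_iff.mp heven]
    exact h ▸ ringChar.charP F
  have hinj : Function.Injective (algebraMap F K) := (algebraMap F K).injective
  have hcharK : CharP K 2 := charP_of_injective_algebraMap hinj 2
  have h2K : (2 : K) = 0 := by
    haveI := hcharK
    exact_mod_cast CharP.cast_eq_zero K 2
  -- q is a power of 2
  obtain ⟨m, hm2, hqm⟩ := FiniteField.card F 2
  rw [hF] at hqm
  haveI : ExpChar K 2 := ExpChar.prime Nat.prime_two
  have haq : ∀ r : F, (algebraMap F K r) ^ q = algebraMap F K r := by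
    intro r
    rw [← map_pow, ← hF, FiniteField.pow_card]
  set a : K := algebraMap F K α with ha
  have hA : a + 1 ≠ 0 := by
    have : a + 1 = algebraMap F K (α + 1) := by rw [map_add, map_one]
    rw [this]
    simp only [ne_eq, map_eq_zero]
    intro h
    apply hα1
    have : (2 : F) = 0 := by exact_mod_cast CharP.cast_eq_zero F 2
    linear_combination h - this
  have hsq : a ^ 2 + 1 = (a + 1) ^ 2 := by linear_combination (-a) * h2K
  have hA2 : a ^ 2 + 1 ≠ 0 := by rw [hsq]; exact pow_ne_zero _ hA
  have htm : t ^ q * t * ((a + 1) ^ 2) = ω * (a + 1) + a := by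
    rw [← hsq, ← pow_succ, ht, div_mul_cancel₀ _ hA2]
  have hmapc : a / (a + 1) = algebraMap F K (α / (α + 1)) := by
    rw [map_div₀, map_add, map_one]
  have hmapd : 1 / (a + 1) = algebraMap F K (1 / (α + 1)) := by
    rw [map_div₀, map_add, map_one]
  have hxq : (t + a / (a + 1)) ^ q = t ^ q + a / (a + 1) := by
    rw [hqm, add_pow_char_pow, ← hqm, hmapc, haq]
  have hyq : (t + 1 / (a + 1)) ^ q = t ^ q + 1 / (a + 1) := by
    rw [hqm, add_pow_char_pow, ← hqm, hmapd, haq]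
  refine ⟨?_, ?_, ?_, ?_⟩
  · intro h
    have hteq : t = a / (a + 1) := by linear_combination h - (a / (a + 1)) * h2K
    have htq : t ^ q = t := by rw [hteq, hmapc, haq]
    apply hωα
    rw [htq, hteq] at htm
    have h5 : a ^ 2 = ω * (a + 1) + a := by
      rw [← htm]; field_simp
    have h6 : ω * (a + 1) = a * (a + 1) := by linear_combination -h5 - a * h2K
    exact mul_right_cancel₀ hA h6
  · intro h
    have hteq : t = 1 / (a + 1) := by linear_combination h - (1 / (a + 1)) * h2K
    have htq : t ^ q = t := by rw [hteq, hmapd, haq]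
    apply hω1
    rw [htq, hteq] at htm
    have h5 : (1 : K) = ω * (a + 1) + a := by
      rw [← htm]; field_simp
    have h6 : ω * (a + 1) = 1 * (a + 1) := by linear_combination -h5 - a * h2K
    exact mul_right_cancel₀ hA h6
  · haveI := hcharK
    rw [← CharTwo.add_sq]
    have hxy : t + a / (a + 1) + (t + 1 / (a + 1)) = 1 := by
      field_simp
      linear_combination (t * (a + 1)) * h2K
    rw [hxy, one_pow]
  · rw [pow_succ, pow_succ, hxq, hyq]
    field_simp
    linear_combination (1 + a) * htm + (a + a ^ 2 + a * (a + 1) * (t ^ q + t)) * h2K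
end

section
/- Let q be a prime power, F a finite field with q elements, K an extension field of F with [K:F] = 2n+1 (n ≥ 1), η a generator of the multiplicative group K^×, and ω ∈ K \ {0}. Then for all x, y ∈ K \ {0} there exists a unique natural number i with 0 ≤ i < (q^{2n+1}-1)/(q-1) such that for some c ∈ F \ {0} (identified with its image in K): η^{2i}·x^2 = c·y^2 and η^{(q+1)·i}·ω·x^{q+1} = c·ω·y^{q+1}. -/
open Polynomial in
lemma aux_mem_range_algebraMap {F K : Type*} [Field F] [Field K] [Fintype F] [Fintype K]
    [Algebra F K] {z : K} (hz : z ^ Fintype.card F = z) :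
    ∃ c : F, algebraMap F K c = z := by
  classical
  set q := Fintype.card F with hq
  have hq1 : 1 < q := Fintype.one_lt_card
  set S : Finset K := Finset.univ.filter (fun w => w ^ q = w) with hS
  set R : Finset K := Finset.univ.image (algebraMap F K) with hR
  have hRS : R ⊆ S := by
    intro w hw
    simp only [hR, Finset.mem_image] at hw
    obtain ⟨c, -, rfl⟩ := hw
    simp only [hS, Finset.mem_filter, Finset.mem_univ, true_and]
    rw [← map_pow, FiniteField.pow_card]
  have hcardR : R.card = q := by
    rw [hR, Finset.card_image_of_injective _ (algebraMap F K).injective, Finset.card_univ]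
  have hSsub : S ⊆ (X ^ q - X : K[X]).roots.toFinset := by
    intro w hw
    simp only [hS, Finset.mem_filter, Finset.mem_univ, true_and] at hw
    rw [Multiset.mem_toFinset, mem_roots (FiniteField.X_pow_card_sub_X_ne_zero K hq1)]
    simp [sub_eq_zero, hw]
  have hcardS : S.card ≤ q := by
    calc S.card ≤ (X ^ q - X : K[X]).roots.toFinset.card := Finset.card_le_card hSsub
      _ ≤ Multiset.card (X ^ q - X : K[X]).roots := Multiset.toFinset_card_le _
      _ ≤ (X ^ q - X : K[X]).natDegree := card_roots' _
      _ = q := FiniteField.X_pow_card_sub_X_natDegree_eq K hq1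
  have hSR : R = S := Finset.eq_of_subset_of_card_le hRS (by rw [hcardR]; exact hcardS)
  have hzS : z ∈ S := by simp [hS, hz]
  rw [← hSR] at hzS
  simp only [hR, Finset.mem_image] at hzS
  obtain ⟨c, -, h⟩ := hzS
  exact ⟨c, h⟩

/-- Lemma: the projectivity `φ : (a, b) ↦ (η² a, η^{q+1} b)` generates a cyclic
group of order `(q^{2n+1}-1)/(q-1)` acting regularly on `𝒱_ω`: for all nonzero
`x, y ∈ K` there is a unique `i < (q^{2n+1}-1)/(q-1)` with
`φ^i ([(x², ω x^{q+1})]) = [(y², ω y^{q+1})]`. -/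
theorem projectivity_acts_regularly
    (q n : ℕ) (hn : 1 ≤ n) (F K : Type*) [Field F] [Field K]
    [Fintype F] [Fintype K] [Algebra F K]
    (hF : Fintype.card F = q) (hK : Module.finrank F K = 2 * n + 1)
    (η : K) (hη0 : η ≠ 0) (hη : ∀ z : K, z ≠ 0 → ∃ m : ℕ, η ^ m = z)
    (ω : K) (hω : ω ≠ 0) :
    ∀ x y : K, x ≠ 0 → y ≠ 0 →
      ∃! i : ℕ, i < (q ^ (2 * n + 1) - 1) / (q - 1) ∧
        ∃ c : F, c ≠ 0 ∧
          η ^ (2 * i) * x ^ 2 = algebraMap F K c * y ^ 2 ∧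
          η ^ ((q + 1) * i) * (ω * x ^ (q + 1)) =
            algebraMap F K c * (ω * y ^ (q + 1)) := by
  intro x y hx hy
  classical
  have hq2 : 2 ≤ q := by rw [← hF]; exact Fintype.one_lt_card
  have hcardK : Fintype.card K = q ^ (2 * n + 1) := by
    rw [Module.card_eq_pow_finrank (K := F) (V := K), hF, hK]
  set Q := q ^ (2 * n + 1) with hQdef
  have hQ2 : 2 ≤ Q := le_trans hq2 (Nat.le_self_pow (by omega) q)
  set N := (Q - 1) / (q - 1) with hNdef
  have hdvd : (q - 1) ∣ (Q - 1) := by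
    simpa using Nat.sub_dvd_pow_sub_pow q 1 (2 * n + 1)
  have hNmul : (q - 1) * N = Q - 1 := Nat.mul_div_cancel' hdvd
  have hNpos : 0 < N := by
    rcases Nat.eq_zero_or_pos N with h | h
    · rw [h, mul_zero] at hNmul; omega
    · exact h
  set u : Kˣ := Units.mk0 η hη0 with hu
  have horder : orderOf u = Q - 1 := by
    have h1 : ∀ z : Kˣ, z ∈ Subgroup.zpowers u := by
      intro z
      obtain ⟨m, hm⟩ := hη (z : K) z.ne_zero
      exact ⟨(m : ℤ), by ext; simpa [hu] using hm⟩
    rw [orderOf_eq_card_of_forall_mem_zpowers h1, Nat.card_eq_fintype_card, Fintype.card_units, hcardK]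
  -- characterize the condition by a power equation
  have key : ∀ i : ℕ,
      (∃ c : F, c ≠ 0 ∧
          η ^ (2 * i) * x ^ 2 = algebraMap F K c * y ^ 2 ∧
          η ^ ((q + 1) * i) * (ω * x ^ (q + 1)) =
            algebraMap F K c * (ω * y ^ (q + 1))) ↔
        η ^ ((q - 1) * i) * x ^ (q - 1) = y ^ (q - 1) := by
    intro i
    have hgen : ∀ k : ℕ, (η ^ i * x / y) ^ k * y ^ k = η ^ (k * i) * x ^ k := by
      intro k
      rw [div_pow, div_mul_cancel₀ _ (pow_ne_zero _ hy), mul_pow, ← pow_mul, mul_comm i k]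
    constructor
    · rintro ⟨c, hc0, e1, e2⟩
      have e2' : η ^ ((q + 1) * i) * x ^ (q + 1) = algebraMap F K c * y ^ (q + 1) := by
        have h := e2
        rw [mul_left_comm (η ^ ((q + 1) * i)) ω, mul_left_comm (algebraMap F K c) ω] at h
        exact mul_left_cancel₀ hω h
      have hq1 : q + 1 = (q - 1) + 2 := by omega
      rw [hq1, add_mul, pow_add, pow_add, pow_add] at e2'
      have hA : η ^ (2 * i) * x ^ 2 ≠ 0 :=
        mul_ne_zero (pow_ne_zero _ hη0) (pow_ne_zero _ hx)
      apply mul_right_cancel₀ hA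
      calc η ^ ((q - 1) * i) * x ^ (q - 1) * (η ^ (2 * i) * x ^ 2)
          = η ^ ((q - 1) * i) * η ^ (2 * i) * (x ^ (q - 1) * x ^ 2) := by ring
        _ = algebraMap F K c * (y ^ (q - 1) * y ^ 2) := e2'
        _ = y ^ (q - 1) * (algebraMap F K c * y ^ 2) := by ring
        _ = y ^ (q - 1) * (η ^ (2 * i) * x ^ 2) := by rw [← e1]
    · intro h
      set w : K := η ^ i * x / y with hwdef
      have hw0 : w ≠ 0 :=
        div_ne_zero (mul_ne_zero (pow_ne_zero _ hη0) hx) hy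
      have hw1 : w ^ (q - 1) = 1 := by
        rw [hwdef, div_pow, mul_pow, ← pow_mul, mul_comm i (q - 1), h,
          div_self (pow_ne_zero _ hy)]
      have hzq : (w ^ 2) ^ q = w ^ 2 := by
        have h2 : (w ^ 2) ^ q = (w ^ (q - 1)) ^ 2 * w ^ 2 := by
          rw [← pow_mul, ← pow_mul, ← pow_add]
          congr 1
          omega
        rw [h2, hw1, one_pow, one_mul]
      obtain ⟨c, hc⟩ := aux_mem_range_algebraMap (F := F) (by rw [hF]; exact hzq)
      have hc0 : c ≠ 0 := by
        rintro rfl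
        rw [map_zero] at hc
        exact pow_ne_zero 2 hw0 hc.symm
      refine ⟨c, hc0, ?_, ?_⟩
      · rw [hc, hgen 2]
      · have hcw : algebraMap F K c = w ^ (q + 1) := by
          have h2 : w ^ (q + 1) = w ^ (q - 1) * w ^ 2 := by
            rw [← pow_add]; congr 1; omega
          rw [hc, h2, hw1, one_mul]
        rw [hcw]
        calc η ^ ((q + 1) * i) * (ω * x ^ (q + 1))
            = ω * (w ^ (q + 1) * y ^ (q + 1)) := by rw [hgen (q + 1)]; ring
          _ = w ^ (q + 1) * (ω * y ^ (q + 1)) := by ring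
  -- translate to modular arithmetic
  obtain ⟨m, hm⟩ := hη (y / x) (div_ne_zero hy hx)
  have hyx : η ^ ((q - 1) * m) * x ^ (q - 1) = y ^ (q - 1) := by
    rw [mul_comm (q - 1) m, pow_mul, hm, div_pow, div_mul_cancel₀ _ (pow_ne_zero _ hx)]
  have hmod : ∀ i : ℕ,
      (η ^ ((q - 1) * i) * x ^ (q - 1) = y ^ (q - 1)) ↔ i ≡ m [MOD N] := by
    intro i
    have hx' : x ^ (q - 1) ≠ 0 := pow_ne_zero _ hx
    have step1 : (η ^ ((q - 1) * i) * x ^ (q - 1) = y ^ (q - 1)) ↔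
        η ^ ((q - 1) * i) = η ^ ((q - 1) * m) := by
      rw [← hyx]
      exact ⟨fun h => mul_right_cancel₀ hx' h, fun h => by rw [h]⟩
    have step2 : (η ^ ((q - 1) * i) = η ^ ((q - 1) * m)) ↔
        u ^ ((q - 1) * i) = u ^ ((q - 1) * m) := by
      rw [Units.ext_iff]
      simp [hu]
    have step3 : (u ^ ((q - 1) * i) = u ^ ((q - 1) * m)) ↔
        (q - 1) * i ≡ (q - 1) * m [MOD (q - 1) * N] := by
      rw [pow_eq_pow_iff_modEq, horder, hNmul]
    have step4 : ((q - 1) * i ≡ (q - 1) * m [MOD (q - 1) * N]) ↔ i ≡ m [MOD N] := by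
      simp only [Nat.ModEq, Nat.mul_mod_mul_left]
      constructor
      · exact fun h => Nat.eq_of_mul_eq_mul_left (by omega) h
      · intro h; rw [h]
    rw [step1, step2, step3, step4]
  refine ⟨m % N, ⟨Nat.mod_lt _ hNpos, ?_⟩, ?_⟩
  · rw [key, hmod]
    exact Nat.mod_modEq m N
  · rintro j ⟨hjlt, hj⟩
    rw [key, hmod] at hj
    exact (hj.trans (Nat.mod_modEq m N).symm).eq_of_lt_of_lt hjlt (Nat.mod_lt _ hNpos)
end
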